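/- arXiv:1610.01401 — 6 statements merged into one kernel-verified Lean document; each statement's English description precedes it below -/
import Mathlib

section
/- Let d ≥ 1 be an integer and let g(z) = Σ_{n≥0} g_n z^n belong to the class S_d with radius of convergence ρ. Then for each ε > 0 there exist a constant c(ε) > 0 and an integer n₀ > 0 such that for all integers n ≥ n₀ with d | n and every integer k ≥ 0, one has [z^n] g(z)^k ≤ c(ε)·(g(ρ) + ε)^k·[z^n] g(z). -/
open Filter Finset PowerSeries

lemma coeff_pow_nonneg' (g : ℕ → ℝ) (hg : ∀ n, 0 ≤ g n) (k n : ℕ) :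
    0 ≤ PowerSeries.coeff (R := ℝ) n ((PowerSeries.mk g) ^ k) := by
  induction k generalizing n with
  | zero =>
    rw [pow_zero, PowerSeries.coeff_one]
    split <;> norm_num
  | succ k ih =>
    rw [pow_succ, PowerSeries.coeff_mul]
    exact Finset.sum_nonneg fun p _ =>
      mul_nonneg (ih p.1) (by rw [PowerSeries.coeff_mk]; exact hg p.2)

lemma coeff_pow_vanish' (d : ℕ) (g : ℕ → ℝ) (hvan : ∀ n, ¬ d ∣ n → g n = 0)
    (k n : ℕ) (hn : ¬ d ∣ n) : PowerSeries.coeff (R := ℝ) n ((PowerSeries.mk g) ^ k) = 0 := by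
  induction k generalizing n with
  | zero =>
    have hn0 : n ≠ 0 := fun h => hn (h ▸ dvd_zero d)
    rw [pow_zero, PowerSeries.coeff_one, if_neg hn0]
  | succ k ih =>
    rw [pow_succ, PowerSeries.coeff_mul]
    refine Finset.sum_eq_zero fun p hp => ?_
    rw [Finset.HasAntidiagonal.mem_antidiagonal] at hp
    by_cases h1 : d ∣ p.1
    · have h2 : ¬ d ∣ p.2 := fun h2 => hn (hp ▸ dvd_add h1 h2)
      rw [PowerSeries.coeff_mk, hvan p.2 h2, mul_zero]
    · rw [ih p.1 h1, zero_mul]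

lemma coeff_pow_le' (g : ℕ → ℝ) (ρ : ℝ) (hρ : 0 < ρ) (hg : ∀ n, 0 ≤ g n)
    (hsum : Summable fun n => g n * ρ ^ n) (k n : ℕ) :
    PowerSeries.coeff (R := ℝ) n ((PowerSeries.mk g) ^ k) * ρ ^ n ≤ (∑' n, g n * ρ ^ n) ^ k := by
  have hG0 : (0:ℝ) ≤ ∑' n, g n * ρ ^ n :=
    tsum_nonneg fun n => mul_nonneg (hg n) (pow_nonneg hρ.le n)
  induction k generalizing n with
  | zero =>
    rw [pow_zero, pow_zero, PowerSeries.coeff_one]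
    split_ifs with h
    · subst h; simp
    · rw [zero_mul]; norm_num
  | succ k ih =>
    rw [pow_succ', PowerSeries.coeff_mul, Finset.sum_mul]
    calc ∑ p ∈ antidiagonal n,
          PowerSeries.coeff (R := ℝ) p.1 (PowerSeries.mk g) * PowerSeries.coeff (R := ℝ) p.2 ((PowerSeries.mk g) ^ k) * ρ ^ n
        ≤ ∑ p ∈ antidiagonal n, (g p.1 * ρ ^ p.1) * (∑' n, g n * ρ ^ n) ^ k := by
          refine Finset.sum_le_sum fun p hp => ?_
          rw [Finset.HasAntidiagonal.mem_antidiagonal] at hp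
          rw [PowerSeries.coeff_mk, ← hp, pow_add]
          have e : g p.1 * PowerSeries.coeff (R := ℝ) p.2 ((PowerSeries.mk g) ^ k) * (ρ ^ p.1 * ρ ^ p.2)
              = (g p.1 * ρ ^ p.1) * (PowerSeries.coeff (R := ℝ) p.2 ((PowerSeries.mk g) ^ k) * ρ ^ p.2) := by ring
          rw [e]
          exact mul_le_mul_of_nonneg_left (ih p.2) (mul_nonneg (hg p.1) (pow_nonneg hρ.le p.1))
      _ = (∑ p ∈ antidiagonal n, g p.1 * ρ ^ p.1) * (∑' n, g n * ρ ^ n) ^ k := by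
          rw [Finset.sum_mul]
      _ ≤ (∑' n, g n * ρ ^ n) * (∑' n, g n * ρ ^ n) ^ k := by
          refine mul_le_mul_of_nonneg_right ?_ (pow_nonneg hG0 k)
          rw [Finset.Nat.sum_antidiagonal_eq_sum_range_succ_mk (fun p => g p.1 * ρ ^ p.1) n]
          exact Summable.sum_le_tsum _ (fun i _ => mul_nonneg (hg i) (pow_nonneg hρ.le i)) hsum
      _ = (∑' n, g n * ρ ^ n) ^ (k+1) := (pow_succ' _ _).symm

lemma chain_bound' (g : ℕ → ℝ) (d M : ℕ) (lo hi : ℝ) (hlo : 0 ≤ lo) (hhi : 0 ≤ hi)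
    (h : ∀ m, M ≤ m → lo * g (d*m + d) ≤ g (d*m) ∧ g (d*m) ≤ hi * g (d*m + d)) :
    ∀ i m, M ≤ m → lo ^ i * g (d*m + d*i) ≤ g (d*m) ∧ g (d*m) ≤ hi ^ i * g (d*m + d*i) := by
  intro i
  induction i with
  | zero => intro m hm; simp
  | succ i ih =>
    intro m hm
    have h1 := h m hm
    have h2 := ih (m+1) (by omega)
    have e1 : d*(m+1) = d*m + d := by ring
    rw [e1] at h2
    have e2 : d*m + d + d*i = d*m + d*(i+1) := by ring
    rw [e2] at h2
    constructor
    · calc lo^(i+1) * g (d*m + d*(i+1)) = lo * (lo^i * g (d*m + d*(i+1))) := by ring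
        _ ≤ lo * g (d*m + d) := mul_le_mul_of_nonneg_left h2.1 hlo
        _ ≤ g (d*m) := h1.1
    · calc g (d*m) ≤ hi * g (d*m+d) := h1.2
        _ ≤ hi * (hi^i * g (d*m + d*(i+1))) := mul_le_mul_of_nonneg_left h2.2 hhi
        _ = hi^(i+1) * g (d*m + d*(i+1)) := by ring

lemma sum_range_le_sum_multiples' (g : ℕ → ℝ) (ρ : ℝ) (d I : ℕ)
    (hg : ∀ n, 0 ≤ g n) (hρ : 0 ≤ ρ) (hvan : ∀ n, ¬ d ∣ n → g n = 0) :
    ∑ j ∈ Finset.range I, g j * ρ ^ j ≤ ∑ i ∈ Finset.range I, g (d*i) * ρ ^ (d*i) := by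
  classical
  have h1 : ∑ j ∈ (Finset.range I).filter (fun j => d ∣ j), g j * ρ^j
      = ∑ j ∈ Finset.range I, g j * ρ^j := by
    refine Finset.sum_filter_of_ne fun j _ hne => ?_
    by_contra hdj
    exact hne (by rw [hvan j hdj, zero_mul])
  rw [← h1]
  have h2 : ∑ j ∈ (Finset.range I).filter (fun j => d ∣ j), g j * ρ^j
      = ∑ i ∈ ((Finset.range I).filter (fun j => d ∣ j)).image (· / d), g (d*i) * ρ^(d*i) := by
    rw [Finset.sum_image]
    · refine Finset.sum_congr rfl fun j hj => ?_
      obtain ⟨-, hdj⟩ := Finset.mem_filter.mp hj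
      rw [Nat.mul_div_cancel' hdj]
    · intro a ha b hb hab
      have hda := (Finset.mem_filter.mp ha).2
      have hdb := (Finset.mem_filter.mp hb).2
      have : d * (a / d) = d * (b / d) := by simp only at hab; rw [hab]
      rwa [Nat.mul_div_cancel' hda, Nat.mul_div_cancel' hdb] at this
  rw [h2]
  refine Finset.sum_le_sum_of_subset_of_nonneg ?_ fun i _ _ => mul_nonneg (hg _) (pow_nonneg hρ _)
  intro i hi
  obtain ⟨j, hj, rfl⟩ := Finset.mem_image.mp hi
  obtain ⟨hjI, -⟩ := Finset.mem_filter.mp hj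
  rw [Finset.mem_range] at hjI ⊢
  exact lt_of_le_of_lt (Nat.div_le_self j d) hjI




/-- A power series with coefficient sequence `g`, non-negative coefficients and radius of
convergence `ρ ∈ (0,∞)`, belongs to the class `𝒮_d`: coefficients vanish off the lattice `dℕ`,
are eventually positive along `dℕ`, `g(ρ) < ∞`, the radius of convergence is exactly `ρ`, and
along multiples of `d` one has `g_n / g_{n+d} → ρ^d` and
`(1/g_n) · ∑_{i+j=n} g_i g_j → 2 g(ρ)`. -/
def SubexpClass (d : ℕ) (g : ℕ → ℝ) (ρ : ℝ) : Prop :=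
  1 ≤ d ∧ 0 < ρ ∧ (∀ n, 0 ≤ g n) ∧
  (∀ n, ¬ d ∣ n → g n = 0) ∧
  (∃ N, ∀ n, N ≤ n → d ∣ n → 0 < g n) ∧
  Summable (fun n => g n * ρ ^ n) ∧
  (∀ r : ℝ, ρ < r → ¬ Summable (fun n => g n * r ^ n)) ∧
  Filter.Tendsto (fun m => g (d * m) / g (d * m + d)) Filter.atTop (nhds (ρ ^ d)) ∧
  Filter.Tendsto
    (fun m => (∑ i ∈ Finset.range (d * m + 1), g i * g (d * m - i)) / g (d * m))
    Filter.atTop (nhds (2 * ∑' n, g n * ρ ^ n))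

/-- If `g ∈ 𝒮_d` with radius of convergence `ρ`, then for every `ε > 0` there are a constant
`c(ε) > 0` and an integer `n₀ > 0` such that for all `n ≥ n₀` divisible by `d` and all `k ≥ 0`,
`[z^n] g(z)^k ≤ c(ε) (g(ρ) + ε)^k [z^n] g(z)`. -/
theorem subexp_pow_coeff_bound (d : ℕ) (g : ℕ → ℝ) (ρ : ℝ)
    (hg : SubexpClass d g ρ) (ε : ℝ) (hε : 0 < ε) :
    ∃ c : ℝ, 0 < c ∧ ∃ n₀ : ℕ, 0 < n₀ ∧ ∀ n : ℕ, n₀ ≤ n → d ∣ n → ∀ k : ℕ,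
      PowerSeries.coeff (R := ℝ) n ((PowerSeries.mk g) ^ k)
        ≤ c * ((∑' n, g n * ρ ^ n) + ε) ^ k * g n := by
  obtain ⟨hd, hρ, hnn, hvan, ⟨N, hpos⟩, hsum, -, hratio, hconv⟩ := hg
  classical
  have hd0 : 0 < d := hd
  set G : ℝ := ∑' n, g n * ρ ^ n with hGdef
  have hGnn : 0 ≤ G := tsum_nonneg fun n => mul_nonneg (hnn n) (pow_nonneg hρ.le n)
  have hposd : ∀ m, N ≤ m → 0 < g (d * m) := fun m hm =>
    hpos (d*m) (le_trans hm (Nat.le_mul_of_pos_left m hd0)) ⟨m, rfl⟩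
  have hGpos : 0 < G := by
    have h1 : g (d*N) * ρ ^ (d*N) ≤ G :=
      Summable.le_tsum hsum (d*N) fun j _ => mul_nonneg (hnn j) (pow_nonneg hρ.le j)
    have h2 : 0 < g (d*N) * ρ ^ (d*N) := mul_pos (hposd N le_rfl) (pow_pos hρ _)
    linarith
  set ρd : ℝ := ρ ^ d with hρddef
  have hρd : 0 < ρd := pow_pos hρ d
  obtain ⟨I, hI⟩ := ((hsum.hasSum.tendsto_sum_nat).eventually
    (eventually_gt_nhds (show G - ε/4 < G by linarith))).exists
  have hI' : G - ε/4 < ∑ i ∈ Finset.range I, g (d*i) * ρd ^ i := by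
    have h1 := sum_range_le_sum_multiples' g ρ d I hnn hρ.le hvan
    calc G - ε/4 < ∑ j ∈ Finset.range I, g j * ρ ^ j := hI
      _ ≤ ∑ i ∈ Finset.range I, g (d*i) * ρ ^ (d*i) := h1
      _ = ∑ i ∈ Finset.range I, g (d*i) * ρd ^ i :=
          Finset.sum_congr rfl fun i _ => by rw [hρddef, ← pow_mul]
  -- choose lo via continuity
  have hFc : ContinuousAt (fun x : ℝ => ∑ i ∈ Finset.range I, g (d*i) * x ^ i) ρd := by
    apply Continuous.continuousAt
    continuity
  have hFρd : G - ε/2 < ∑ i ∈ Finset.range I, g (d*i) * ρd ^ i := by linarith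
  have hFev := hFc.eventually (eventually_gt_nhds hFρd)
  rw [Metric.eventually_nhds_iff] at hFev
  obtain ⟨δ, hδ, hball⟩ := hFev
  set η : ℝ := min (δ/2) (ρd/2) with hηdef
  have hη0 : 0 < η := lt_min (by linarith) (by linarith)
  have hηρd : η ≤ ρd/2 := min_le_right _ _
  have hηδ : η ≤ δ/2 := min_le_left _ _
  set lo : ℝ := ρd - η with hlodef
  have hlo0 : 0 < lo := by rw [hlodef]; linarith
  have hlolt : lo < ρd := by rw [hlodef]; linarith
  have hFlo : G - ε/2 < ∑ i ∈ Finset.range I, g (d*i) * lo ^ i := by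
    apply hball
    rw [Real.dist_eq, hlodef]
    rw [show ρd - η - ρd = -η by ring, abs_neg, abs_of_pos hη0]
    linarith
  set hi : ℝ := ρd + 1 with hhidef
  have hhi0 : 0 < hi := by rw [hhidef]; linarith
  have hhilt : ρd < hi := by rw [hhidef]; linarith
  -- eventual facts
  have hev1 : ∀ᶠ m in atTop, lo < g (d*m) / g (d*m + d) :=
    hratio.eventually (eventually_gt_nhds hlolt)
  have hev2 : ∀ᶠ m in atTop, g (d*m) / g (d*m + d) < hi :=
    hratio.eventually (eventually_lt_nhds hhilt)
  have hev3 : ∀ᶠ m in atTop,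
      (∑ i ∈ Finset.range (d*m+1), g i * g (d*m - i)) / g (d*m) < 2*G + ε/4 :=
    hconv.eventually (eventually_lt_nhds (by linarith))
  obtain ⟨M₀, hM₀⟩ := eventually_atTop.mp (((hev1.and hev2).and hev3).and (eventually_ge_atTop N))
  set M₁ := M₀ + N + 1 with hM₁def
  have hrat : ∀ m, M₁ ≤ m → lo * g (d*m + d) ≤ g (d*m) ∧ g (d*m) ≤ hi * g (d*m + d) := by
    intro m hm
    obtain ⟨⟨⟨h1, h2⟩, -⟩, -⟩ := hM₀ m (by omega)
    have hp2 : 0 < g (d*m + d) := by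
      have e : d*m + d = d*(m+1) := by ring
      rw [e]; exact hposd (m+1) (by omega)
    refine ⟨(le_div_iff₀ hp2).mp h1.le, ?_⟩
    have := (div_lt_iff₀ hp2).mp h2
    linarith
  have chain := chain_bound' g d M₁ lo hi hlo0.le hhi0.le hrat
  have hconv' : ∀ m, M₁ ≤ m →
      ∑ p ∈ antidiagonal (d*m), g p.1 * g p.2 ≤ (2*G + ε/4) * g (d*m) := by
    intro m hm
    obtain ⟨⟨-, h3⟩, -⟩ := hM₀ m (by omega)
    have hp : 0 < g (d*m) := hposd m (by omega)
    have h4 := (div_lt_iff₀ hp).mp h3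
    calc ∑ p ∈ antidiagonal (d*m), g p.1 * g p.2
        = ∑ i ∈ Finset.range (d*m+1), g i * g (d*m - i) :=
          Finset.Nat.sum_antidiagonal_eq_sum_range_succ_mk (fun p => g p.1 * g p.2) (d*m)
      _ ≤ (2*G + ε/4) * g (d*m) := h4.le
  set m₁ := M₁ + I + 1 with hm₁def
  set n₀ := d * m₁ with hn₀def
  have hn₀pos : 0 < n₀ := Nat.mul_pos hd0 (by omega)
  -- lower bound on small-first-coordinate convolution
  have hlow : ∀ m, m₁ ≤ m → (G - ε/2) * g (d*m)
      ≤ ∑ p ∈ (antidiagonal (d*m)).filter (fun p => p.1 < n₀), g p.1 * g p.2 := by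
    intro m hm
    have hgm : 0 < g (d*m) := hposd m (by omega)
    have key : ∀ i ∈ Finset.range I, g (d*i) * lo ^ i * g (d*m) ≤ g (d*i) * g (d*m - d*i) := by
      intro i hiI
      rw [Finset.mem_range] at hiI
      have him : i ≤ m := by omega
      have he1 : d*(m-i) + d*i = d*m := by rw [← Nat.mul_add]; congr 1; omega
      have he2 : d*m - d*i = d*(m-i) := (Nat.eq_sub_of_add_eq he1).symm
      have hchain := (chain i (m-i) (by omega)).1
      rw [he1] at hchain
      rw [he2]
      calc g (d*i) * lo^i * g (d*m) = g (d*i) * (lo^i * g (d*m)) := by ring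
        _ ≤ g (d*i) * g (d*(m-i)) := mul_le_mul_of_nonneg_left hchain (hnn _)
    have himg : ∑ p ∈ (Finset.range I).image (fun i => (d*i, d*m - d*i)), g p.1 * g p.2
        = ∑ i ∈ Finset.range I, g (d*i) * g (d*m - d*i) := by
      rw [Finset.sum_image]
      intro a _ b _ hab
      have h := congrArg Prod.fst hab
      simp only at h
      exact Nat.eq_of_mul_eq_mul_left hd0 h
    have hsubset : (Finset.range I).image (fun i => (d*i, d*m - d*i))
        ⊆ (antidiagonal (d*m)).filter (fun p => p.1 < n₀) := by
      intro p hp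
      obtain ⟨i, hiI, rfl⟩ := Finset.mem_image.mp hp
      rw [Finset.mem_range] at hiI
      have hle : d*i ≤ d*m := Nat.mul_le_mul_left d (by omega)
      refine Finset.mem_filter.mpr ⟨Finset.HasAntidiagonal.mem_antidiagonal.mpr (by omega), ?_⟩
      have : i < m₁ := by omega
      exact mul_lt_mul_of_pos_left this hd0
    calc (G - ε/2) * g (d*m)
        ≤ (∑ i ∈ Finset.range I, g (d*i) * lo ^ i) * g (d*m) :=
          mul_le_mul_of_nonneg_right (by linarith) hgm.le
      _ = ∑ i ∈ Finset.range I, g (d*i) * lo ^ i * g (d*m) := Finset.sum_mul _ _ _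
      _ ≤ ∑ i ∈ Finset.range I, g (d*i) * g (d*m - d*i) := Finset.sum_le_sum key
      _ = ∑ p ∈ (Finset.range I).image (fun i => (d*i, d*m - d*i)), g p.1 * g p.2 := himg.symm
      _ ≤ ∑ p ∈ (antidiagonal (d*m)).filter (fun p => p.1 < n₀), g p.1 * g p.2 :=
          Finset.sum_le_sum_of_subset_of_nonneg hsubset fun p _ _ => mul_nonneg (hnn _) (hnn _)
  -- upper bound constant K
  set Q : ℝ := ∑ s ∈ Finset.range M₁, g (d*s) with hQdef
  have hQnn : 0 ≤ Q := Finset.sum_nonneg fun s _ => hnn _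
  set W := (Finset.Ico m₁ (m₁ + M₁)).image (fun m => g (d*m)) with hWdef
  have hWne : W.Nonempty := ⟨g (d*m₁), Finset.mem_image.mpr ⟨m₁, Finset.mem_Ico.mpr ⟨le_rfl, by omega⟩, rfl⟩⟩
  set q : ℝ := W.min' hWne with hqdef
  have hqpos : 0 < q := by
    obtain ⟨m, hm, hqe⟩ := Finset.mem_image.mp (W.min'_mem hWne)
    rw [hqdef, ← hqe]
    rw [Finset.mem_Ico] at hm
    exact hposd m (by omega)
  have hqle : ∀ m, m₁ ≤ m → m < m₁ + M₁ → q ≤ g (d*m) := fun m h1 h2 =>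
    W.min'_le _ (Finset.mem_image.mpr ⟨m, Finset.mem_Ico.mpr ⟨h1, h2⟩, rfl⟩)
  set r₀ : ℝ := min 1 (ρd ^ m₁) with hr₀def
  have hr₀pos : 0 < r₀ := lt_min one_pos (pow_pos hρd _)
  have hr₀le : ∀ i, i ≤ m₁ → r₀ ≤ ρd ^ i := by
    intro i hile
    rcases le_total ρd 1 with h | h
    · exact le_trans (min_le_right _ _) (pow_le_pow_of_le_one hρd.le h hile)
    · exact le_trans (min_le_left _ _) (one_le_pow₀ h)
  set K₁ : ℝ := (hi / ρd) ^ m₁ with hK₁def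
  have hhiρ : 1 ≤ hi / ρd := (one_le_div hρd).mpr hhilt.le
  have hK₁nn : 0 ≤ K₁ := pow_nonneg (by linarith) _
  set K : ℝ := K₁ + Q / (r₀ * q) with hKdef
  have hKnn : 0 ≤ K := by
    have : 0 ≤ Q / (r₀ * q) := div_nonneg hQnn (mul_nonneg hr₀pos.le hqpos.le)
    rw [hKdef]; linarith
  have hupper : ∀ m, m₁ ≤ m → ∀ i, i < m₁ → i ≤ m →
      g (d*(m-i)) ≤ K * ρd ^ i * g (d*m) := by
    intro m hm i him1 him
    have hgm : 0 ≤ g (d*m) := hnn _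
    have he1 : d*(m-i) + d*i = d*m := by rw [← Nat.mul_add]; congr 1; omega
    by_cases hc : M₁ ≤ m - i
    · have hchain := (chain i (m-i) hc).2
      rw [he1] at hchain
      have h1 : hi ^ i ≤ K₁ * ρd ^ i := by
        have e : hi ^ i = (hi/ρd)^i * ρd^i := by
          rw [← mul_pow, div_mul_cancel₀ _ hρd.ne']
        rw [e]
        exact mul_le_mul_of_nonneg_right (pow_le_pow_right₀ hhiρ him1.le) (pow_nonneg hρd.le i)
      calc g (d*(m-i)) ≤ hi^i * g (d*m) := hchain
        _ ≤ (K₁ * ρd^i) * g (d*m) := mul_le_mul_of_nonneg_right h1 hgm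
        _ ≤ K * ρd^i * g (d*m) := by
            have hKK : K₁ ≤ K := by
              have : 0 ≤ Q / (r₀ * q) := div_nonneg hQnn (mul_nonneg hr₀pos.le hqpos.le)
              rw [hKdef]; linarith
            exact mul_le_mul_of_nonneg_right
              (mul_le_mul_of_nonneg_right hKK (pow_nonneg hρd.le i)) hgm
    · push_neg at hc
      have h1 : g (d*(m-i)) ≤ Q :=
        Finset.single_le_sum (fun s _ => hnn (d*s)) (Finset.mem_range.mpr hc)
      have h2 : q ≤ g (d*m) := hqle m hm (by omega)
      have h3 : r₀ ≤ ρd ^ i := hr₀le i him1.le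
      have hQK : Q / (r₀ * q) ≤ K := by rw [hKdef]; linarith
      calc g (d*(m-i)) ≤ Q := h1
        _ = Q / (r₀ * q) * (r₀ * q) := by
            rw [div_mul_cancel₀ _ (mul_pos hr₀pos hqpos).ne']
        _ ≤ K * (ρd^i * g (d*m)) := by
            apply mul_le_mul hQK _ (mul_nonneg hr₀pos.le hqpos.le) hKnn
            exact mul_le_mul h3 h2 hqpos.le (pow_nonneg hρd.le i)
        _ = K * ρd^i * g (d*m) := by ring
  -- constants
  set C : ℝ := G + ε with hCdef
  have hCpos : 0 < C := by rw [hCdef]; linarith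
  have hGC : G ≤ C := by rw [hCdef]; linarith
  set D : ℝ := (n₀ : ℝ) * K with hDdef
  have hDnn : 0 ≤ D := mul_nonneg (Nat.cast_nonneg _) hKnn
  set c : ℝ := max 1 (4 * D / ε) with hcdef
  have hc1 : (1:ℝ) ≤ c := le_max_left _ _
  have hcpos : 0 < c := lt_of_lt_of_le one_pos hc1
  have hcD : D ≤ c * ε / 4 := by
    have h1 : 4 * D / ε ≤ c := le_max_right _ _
    rw [div_le_iff₀ hε] at h1
    linarith
  -- main induction
  have main : ∀ k m : ℕ, m₁ ≤ m →
      PowerSeries.coeff (R := ℝ) (d*m) ((PowerSeries.mk g) ^ k) ≤ c * C ^ k * g (d*m) := by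
    intro k
    induction k with
    | zero =>
      intro m hm
      have hne : d*m ≠ 0 := Nat.mul_ne_zero (by omega) (by omega)
      rw [pow_zero, PowerSeries.coeff_one, if_neg hne, pow_zero, mul_one]
      exact mul_nonneg hcpos.le (hnn _)
    | succ k ih =>
      intro m hm
      have hgm : 0 < g (d*m) := hposd m (by omega)
      have hCknn : (0:ℝ) ≤ C ^ k := pow_nonneg hCpos.le k
      rw [pow_succ, PowerSeries.coeff_mul,
        ← Finset.sum_filter_add_sum_filter_not (antidiagonal (d*m)) (fun p => p.1 < n₀)]
      have hsmall : ∑ p ∈ (antidiagonal (d*m)).filter (fun p => p.1 < n₀),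
          PowerSeries.coeff (R := ℝ) p.1 ((PowerSeries.mk g)^k) * PowerSeries.coeff (R := ℝ) p.2 (PowerSeries.mk g)
          ≤ D * C^k * g (d*m) := by
        have hterm : ∀ p ∈ (antidiagonal (d*m)).filter (fun p => p.1 < n₀),
            PowerSeries.coeff (R := ℝ) p.1 ((PowerSeries.mk g)^k) * PowerSeries.coeff (R := ℝ) p.2 (PowerSeries.mk g)
            ≤ K * G^k * g (d*m) := by
          intro p hp
          obtain ⟨hpa, hp1⟩ := Finset.mem_filter.mp hp
          have hpsum := Finset.HasAntidiagonal.mem_antidiagonal.mp hpa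
          rw [PowerSeries.coeff_mk]
          by_cases hdp : d ∣ p.1
          · obtain ⟨i, hieq⟩ := hdp
            have hp1' : d*i < d*m₁ := by rw [← hieq]; exact hp1
            have him1 : i < m₁ := lt_of_mul_lt_mul_left hp1' (Nat.zero_le d)
            have hle : p.1 ≤ d*m := Nat.le.intro hpsum
            have him : i ≤ m := Nat.le_of_mul_le_mul_left (by rw [← hieq]; exact hle) hd0
            have he1 : d*(m-i) + d*i = d*m := by rw [← Nat.mul_add]; congr 1; omega
            have hp2eq : p.2 = d*(m-i) := by omega
            have hb1 : PowerSeries.coeff (R := ℝ) p.1 ((PowerSeries.mk g)^k) ≤ G^k / ρ^(p.1) := by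
              rw [le_div_iff₀ (pow_pos hρ _)]
              have := coeff_pow_le' g ρ hρ hnn hsum k p.1
              rw [← hGdef] at this
              exact this
            have hb2 : g p.2 ≤ K * ρd^i * g (d*m) := by
              rw [hp2eq]
              exact hupper m hm i him1 him
            have hρpi : ρ ^ p.1 = ρd ^ i := by rw [hieq, hρddef, pow_mul]
            have hb1nn : 0 ≤ G^k / ρ^(p.1) := div_nonneg (pow_nonneg hGnn k) (pow_nonneg hρ.le _)
            calc PowerSeries.coeff (R := ℝ) p.1 ((PowerSeries.mk g)^k) * g p.2
                ≤ (G^k / ρ^(p.1)) * (K * ρd^i * g (d*m)) :=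
                  mul_le_mul hb1 hb2 (hnn _) hb1nn
              _ = K * G^k * g (d*m) := by
                  rw [hρpi]
                  have : (ρd:ℝ) ^ i ≠ 0 := (pow_pos hρd i).ne'
                  field_simp
          · rw [coeff_pow_vanish' d g hvan k p.1 hdp, zero_mul]
            exact mul_nonneg (mul_nonneg hKnn (pow_nonneg hGnn k)) (hnn _)
        have hcard : ((((antidiagonal (d*m)).filter (fun p => p.1 < n₀)).card : ℕ) : ℝ) ≤ (n₀ : ℝ) := by
          have h1 : ((antidiagonal (d*m)).filter (fun p => p.1 < n₀)).card ≤ (Finset.range n₀).card := by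
            apply Finset.card_le_card_of_injOn (fun p : ℕ×ℕ => p.1)
            · intro p hp
              exact Finset.mem_range.mpr (Finset.mem_filter.mp hp).2
            · intro p hp q hq hpq
              rw [Finset.mem_coe, Finset.mem_filter, Finset.HasAntidiagonal.mem_antidiagonal] at hp hq
              have e1 := hp.1
              have e2 := hq.1
              simp only at hpq
              have : p.2 = q.2 := by omega
              exact Prod.ext hpq this
          rw [Finset.card_range] at h1
          exact_mod_cast h1
        have hbnn : 0 ≤ K * G^k * g (d*m) :=
          mul_nonneg (mul_nonneg hKnn (pow_nonneg hGnn k)) (hnn _)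
        calc ∑ p ∈ (antidiagonal (d*m)).filter (fun p => p.1 < n₀),
            PowerSeries.coeff (R := ℝ) p.1 ((PowerSeries.mk g)^k) * PowerSeries.coeff (R := ℝ) p.2 (PowerSeries.mk g)
            ≤ ((antidiagonal (d*m)).filter (fun p => p.1 < n₀)).card • (K * G^k * g (d*m)) :=
              Finset.sum_le_card_nsmul _ _ _ hterm
          _ = (((antidiagonal (d*m)).filter (fun p => p.1 < n₀)).card : ℝ) * (K * G^k * g (d*m)) :=
              nsmul_eq_mul _ _
          _ ≤ (n₀:ℝ) * (K * G^k * g (d*m)) := mul_le_mul_of_nonneg_right hcard hbnn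
          _ = D * G^k * g (d*m) := by rw [hDdef]; ring
          _ ≤ D * C^k * g (d*m) := by
              have hGCk : G^k ≤ C^k := pow_le_pow_left₀ hGnn hGC k
              exact mul_le_mul_of_nonneg_right (mul_le_mul_of_nonneg_left hGCk hDnn) (hnn _)
      have hlarge : ∑ p ∈ (antidiagonal (d*m)).filter (fun p => ¬ p.1 < n₀),
          PowerSeries.coeff (R := ℝ) p.1 ((PowerSeries.mk g)^k) * PowerSeries.coeff (R := ℝ) p.2 (PowerSeries.mk g)
          ≤ c * C^k * ((G + 3*ε/4) * g (d*m)) := by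
        have hterm : ∀ p ∈ (antidiagonal (d*m)).filter (fun p => ¬ p.1 < n₀),
            PowerSeries.coeff (R := ℝ) p.1 ((PowerSeries.mk g)^k) * PowerSeries.coeff (R := ℝ) p.2 (PowerSeries.mk g)
            ≤ c * C^k * (g p.1 * g p.2) := by
          intro p hp
          obtain ⟨hpa, hp1⟩ := Finset.mem_filter.mp hp
          rw [PowerSeries.coeff_mk]
          by_cases hdp : d ∣ p.1
          · obtain ⟨i, hieq⟩ := hdp
            have hge : d*m₁ ≤ d*i := by rw [← hieq]; exact not_lt.mp hp1
            have him1 : m₁ ≤ i := Nat.le_of_mul_le_mul_left hge hd0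
            have h1 : PowerSeries.coeff (R := ℝ) p.1 ((PowerSeries.mk g)^k) ≤ c * C^k * g p.1 := by
              rw [hieq]; exact ih i him1
            calc PowerSeries.coeff (R := ℝ) p.1 ((PowerSeries.mk g)^k) * g p.2
                ≤ (c * C^k * g p.1) * g p.2 := mul_le_mul_of_nonneg_right h1 (hnn _)
              _ = c * C^k * (g p.1 * g p.2) := by ring
          · rw [coeff_pow_vanish' d g hvan k p.1 hdp, zero_mul]
            exact mul_nonneg (mul_nonneg hcpos.le hCknn) (mul_nonneg (hnn _) (hnn _))
        calc ∑ p ∈ (antidiagonal (d*m)).filter (fun p => ¬ p.1 < n₀),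
            PowerSeries.coeff (R := ℝ) p.1 ((PowerSeries.mk g)^k) * PowerSeries.coeff (R := ℝ) p.2 (PowerSeries.mk g)
            ≤ ∑ p ∈ (antidiagonal (d*m)).filter (fun p => ¬ p.1 < n₀), c * C^k * (g p.1 * g p.2) :=
              Finset.sum_le_sum hterm
          _ = c * C^k * ∑ p ∈ (antidiagonal (d*m)).filter (fun p => ¬ p.1 < n₀), g p.1 * g p.2 := by
              rw [Finset.mul_sum]
          _ ≤ c * C^k * ((G + 3*ε/4) * g (d*m)) := by
              refine mul_le_mul_of_nonneg_left ?_ (mul_nonneg hcpos.le hCknn)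
              have h1 := hconv' m (by omega)
              have h2 := hlow m hm
              have h3 := Finset.sum_filter_add_sum_filter_not (antidiagonal (d*m))
                (fun p => p.1 < n₀) (fun p => g p.1 * g p.2)
              linarith
      have hfinal : D * C^k * g (d*m) + c * C^k * ((G + 3*ε/4) * g (d*m))
          ≤ c * C^(k+1) * g (d*m) := by
        have e : c * C^(k+1) * g (d*m) - (D * C^k * g (d*m) + c * C^k * ((G + 3*ε/4) * g (d*m)))
            = (c*ε/4 - D) * (C^k * g (d*m)) := by
          rw [pow_succ, hCdef]; ring
        have h5 : 0 ≤ (c*ε/4 - D) * (C^k * g (d*m)) :=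
          mul_nonneg (by linarith) (mul_nonneg hCknn hgm.le)
        linarith
      calc (∑ p ∈ (antidiagonal (d*m)).filter (fun p => p.1 < n₀),
            PowerSeries.coeff (R := ℝ) p.1 ((PowerSeries.mk g)^k) * PowerSeries.coeff (R := ℝ) p.2 (PowerSeries.mk g))
          + ∑ p ∈ (antidiagonal (d*m)).filter (fun p => ¬ p.1 < n₀),
            PowerSeries.coeff (R := ℝ) p.1 ((PowerSeries.mk g)^k) * PowerSeries.coeff (R := ℝ) p.2 (PowerSeries.mk g)
          ≤ D * C^k * g (d*m) + c * C^k * ((G + 3*ε/4) * g (d*m)) := add_le_add hsmall hlarge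
        _ ≤ c * C^(k+1) * g (d*m) := hfinal
  refine ⟨c, hcpos, n₀, hn₀pos, ?_⟩
  intro n hn hdn k
  obtain ⟨m, rfl⟩ := hdn
  rw [hn₀def] at hn
  exact main k m (Nat.le_of_mul_le_mul_left hn hd0)
end

section
/- Let d ≥ 1 be an integer and let g(z) belong to the class S_d with radius of convergence ρ. Let f(z) be a non-constant power series with non-negative real coefficients whose radius of convergence is strictly larger than g(ρ). Then the composition f(g(z)) belongs to the class S_d, and [z^n] f(g(z)) ~ f'(g(ρ))·[z^n] g(z) as n → ∞ along multiples of d. -/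
open Filter Finset

namespace SubexpProof

noncomputable section

/-- convolution of two sequences -/
def cv (a c : ℕ → ℝ) (n : ℕ) : ℝ := ∑ i ∈ Finset.range (n+1), a i * c (n - i)

/-- convolution powers of a sequence -/
def cp (b : ℕ → ℝ) : ℕ → ℕ → ℝ
  | 0, n => if n = 0 then 1 else 0
  | (k+1), n => cv b (cp b k) n

lemma cv_nonneg {a c : ℕ → ℝ} (ha : ∀ n, 0 ≤ a n) (hc : ∀ n, 0 ≤ c n) (n : ℕ) :
    0 ≤ cv a c n := Finset.sum_nonneg fun i _ => mul_nonneg (ha i) (hc _)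

lemma cp_nonneg {b : ℕ → ℝ} (hb : ∀ n, 0 ≤ b n) : ∀ k n, 0 ≤ cp b k n := by
  intro k
  induction k with
  | zero => intro n; simp only [cp]; split <;> norm_num
  | succ k ih => intro n; exact cv_nonneg hb ih n

lemma cp_eq_coeff (b : ℕ → ℝ) (k n : ℕ) :
    PowerSeries.coeff n ((PowerSeries.mk b) ^ k) = cp b k n := by
  induction k generalizing n with
  | zero => simp [cp, PowerSeries.coeff_one]
  | succ k ih =>
      rw [pow_succ', PowerSeries.coeff_mul, Finset.Nat.sum_antidiagonal_eq_sum_range_succ_mk]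
      simp only [cp, cv, PowerSeries.coeff_mk, ih]

lemma cp_add (b : ℕ → ℝ) (k l n : ℕ) :
    cp b (k + l) n = ∑ i ∈ Finset.range (n+1), cp b k i * cp b l (n - i) := by
  rw [← cp_eq_coeff, pow_add, PowerSeries.coeff_mul,
    Finset.Nat.sum_antidiagonal_eq_sum_range_succ_mk]
  simp [cp_eq_coeff]

/-- Cauchy product: summability and tsum of convolution powers. -/
lemma cp_summable {b : ℕ → ℝ} {τ : ℝ} (hb : ∀ n, 0 ≤ b n) (hτ : 0 ≤ τ)
    (hs : Summable (fun n => b n * τ ^ n)) (k : ℕ) :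
    Summable (fun n => cp b k n * τ ^ n) ∧
      (∑' n, cp b k n * τ ^ n) = (∑' n, b n * τ ^ n) ^ k := by
  induction k with
  | zero =>
      have he : (fun n => cp b 0 n * τ ^ n) = fun n => if n = 0 then 1 else 0 := by
        funext n
        simp only [cp]
        split <;> simp_all
      rw [he]
      constructor
      · exact summable_of_ne_finset_zero (s := {0}) (by intro n hn; simp at hn; simp [hn])
      · rw [tsum_eq_single 0 (by intro n hn; simp [hn])]; simp
  | succ k ih =>
      have hE : ∀ n, cp b (k+1) n * τ ^ n
          = ∑ i ∈ Finset.range (n+1), (b i * τ ^ i) * (cp b k (n - i) * τ ^ (n - i)) := by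
        intro n
        show cv b (cp b k) n * τ ^ n = _
        rw [cv, Finset.sum_mul]
        refine Finset.sum_congr rfl (fun i hi => ?_)
        have hin : i ≤ n := Nat.lt_succ_iff.mp (Finset.mem_range.mp hi)
        have : τ ^ i * τ ^ (n - i) = τ ^ n := by
          rw [← pow_add, Nat.add_sub_cancel' hin]
        rw [← this]; ring
      have hb1 : Summable fun n => ‖b n * τ ^ n‖ := by
        refine hs.abs.congr (fun n => ?_)
        rw [Real.norm_eq_abs]
      have hb2 : Summable fun n => ‖cp b k n * τ ^ n‖ := by
        refine ih.1.abs.congr (fun n => ?_)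
        rw [Real.norm_eq_abs]
      have hsum2 := summable_norm_sum_mul_range_of_summable_norm hb1 hb2
      have hsum3 : Summable fun n =>
          ∑ i ∈ Finset.range (n+1), (b i * τ ^ i) * (cp b k (n - i) * τ ^ (n - i)) :=
        summable_norm_iff.mp hsum2
      have ht := tsum_mul_tsum_eq_tsum_sum_range_of_summable_norm hb1 hb2
      constructor
      · exact hsum3.congr (fun n => (hE n).symm)
      · calc (∑' n, cp b (k+1) n * τ ^ n)
            = ∑' n, ∑ i ∈ Finset.range (n+1), (b i * τ ^ i) * (cp b k (n - i) * τ ^ (n - i)) :=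
              tsum_congr hE
          _ = (∑' n, b n * τ ^ n) * (∑' n, cp b k n * τ ^ n) := ht.symm
          _ = (∑' n, b n * τ ^ n) ^ (k+1) := by rw [ih.2, pow_succ]; ring

lemma cp_le_pow {b : ℕ → ℝ} {τ : ℝ} (hb : ∀ n, 0 ≤ b n) (hτ : 0 < τ)
    (hs : Summable (fun n => b n * τ ^ n)) (k n : ℕ) :
    cp b k n * τ ^ n ≤ (∑' n, b n * τ ^ n) ^ k := by
  rw [← (cp_summable hb hτ.le hs k).2]
  exact Summable.le_tsum (cp_summable hb hτ.le hs k).1 n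
    (fun j _ => mul_nonneg (cp_nonneg hb _ _) (pow_nonneg hτ.le _))

/-- sums over `range (d*m+1)` of functions vanishing off multiples of `d`. -/
lemma sum_dil {d : ℕ} (hd : 1 ≤ d) (F : ℕ → ℝ) (hF : ∀ i, ¬ d ∣ i → F i = 0) (m : ℕ) :
    ∑ i ∈ Finset.range (d*m+1), F i = ∑ u ∈ Finset.range (m+1), F (d*u) := by
  have hdpos : 0 < d := hd
  have hsub : (Finset.range (m+1)).image (fun u => d*u) ⊆ Finset.range (d*m+1) := by
    intro i hi
    obtain ⟨u, hu, rfl⟩ := Finset.mem_image.mp hi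
    have : u ≤ m := Nat.lt_succ_iff.mp (Finset.mem_range.mp hu)
    exact Finset.mem_range.mpr (Nat.lt_succ_iff.mpr (Nat.mul_le_mul_left d this))
  rw [← Finset.sum_subset hsub, Finset.sum_image]
  · intro u _ v _ h
    exact Nat.eq_of_mul_eq_mul_left hdpos h
  · intro i hi hni
    refine hF i (fun hdvd => hni ?_)
    obtain ⟨u, rfl⟩ := hdvd
    have : u ≤ m := by
      have := Nat.lt_succ_iff.mp (Finset.mem_range.mp hi)
      exact Nat.le_of_mul_le_mul_left this hdpos
    exact Finset.mem_image.mpr ⟨u, Finset.mem_range.mpr (Nat.lt_succ_iff.mpr this), rfl⟩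

lemma cp_vanish {d : ℕ} {b : ℕ → ℝ} (hb : ∀ i, ¬ d ∣ i → b i = 0) (k : ℕ) :
    ∀ n, ¬ d ∣ n → cp b k n = 0 := by
  induction k with
  | zero =>
      intro n hn
      have : n ≠ 0 := by rintro rfl; exact hn (dvd_zero d)
      simp [cp, this]
  | succ k ih =>
      intro n hn
      show cv b (cp b k) n = 0
      rw [cv]
      refine Finset.sum_eq_zero (fun i hi => ?_)
      have hin : i ≤ n := Nat.lt_succ_iff.mp (Finset.mem_range.mp hi)
      by_cases hdi : d ∣ i
      · have : ¬ d ∣ (n - i) := by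
          intro h
          exact hn (by simpa [Nat.add_sub_cancel' hin] using Dvd.dvd.add hdi h)
        rw [ih _ this, mul_zero]
      · rw [hb i hdi, zero_mul]

lemma cp_dil {d : ℕ} (hd : 1 ≤ d) {g : ℕ → ℝ} (hv : ∀ i, ¬ d ∣ i → g i = 0) (k m : ℕ) :
    cp g k (d*m) = cp (fun u => g (d*u)) k m := by
  induction k generalizing m with
  | zero =>
      have : d*m = 0 ↔ m = 0 := by
        constructor
        · intro h; exact Nat.mul_eq_zero.mp h |>.resolve_left (by omega)
        · rintro rfl; simp
      simp [cp, this]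
  | succ k ih =>
      show cv g (cp g k) (d*m) = cv (fun u => g (d*u)) (cp (fun u => g (d*u)) k) m
      rw [cv, cv, sum_dil hd _ (fun i hi => ?_)]
      · refine Finset.sum_congr rfl (fun u hu => ?_)
        rw [← Nat.mul_sub, ih]
      · by_cases hdi : d ∣ i
        · obtain ⟨u, rfl⟩ := hdi
          exfalso; exact hi ⟨u, rfl⟩
        · rw [hv i hdi, zero_mul]


lemma tendsto_of_approx {F : ℕ → ℝ} {L : ℝ}
    (h : ∀ ε : ℝ, 0 < ε → ∃ T : ℝ, |T - L| ≤ ε ∧ ∀ᶠ n in atTop, |F n - T| ≤ ε) :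
    Tendsto F atTop (nhds L) := by
  rw [Metric.tendsto_atTop]
  intro ε hε
  obtain ⟨T, hT, hev⟩ := h (ε/3) (by linarith)
  obtain ⟨N, hN⟩ := eventually_atTop.mp hev
  refine ⟨N, fun n hn => ?_⟩
  rw [Real.dist_eq]
  calc |F n - L| ≤ |F n - T| + |T - L| := abs_sub_le _ _ _
    _ ≤ ε/3 + ε/3 := add_le_add (hN n hn) hT
    _ < ε := by linarith

lemma sum_reflect (F : ℕ → ℝ) (n m0 : ℕ) (h : m0 ≤ n) :
    ∑ i ∈ Finset.Ico (n - m0) (n+1), F i = ∑ j ∈ Finset.range (m0+1), F (n - j) := by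
  have h1 : ∀ a ∈ Finset.Ico (n - m0) (n+1), (fun i => n - i) a ∈ Finset.range (m0+1) := by
    intro a ha; simp only [Finset.mem_Ico, Finset.mem_range] at ha ⊢; omega
  have h2 : ∀ a ∈ Finset.range (m0+1), (fun j => n - j) a ∈ Finset.Ico (n - m0) (n+1) := by
    intro a ha; simp only [Finset.mem_Ico, Finset.mem_range] at ha ⊢; omega
  refine Finset.sum_nbij' (fun i => n - i) (fun j => n - j) h1 h2 ?_ ?_ ?_
  · intro a ha; simp only [Finset.mem_Ico] at ha; omega
  · intro a ha; simp only [Finset.mem_range] at ha; omega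
  · intro a ha; simp only [Finset.mem_Ico] at ha; congr 1; omega

/-! ### analytic lemmas for the `d = 1` situation -/

section Base

variable {b : ℕ → ℝ} {τ : ℝ}

/-- the hypotheses on the base sequence, `d = 1` normalized -/
structure Base (b : ℕ → ℝ) (τ : ℝ) : Prop where
  tpos : 0 < τ
  nn : ∀ n, 0 ≤ b n
  pos : ∃ N, ∀ n, N ≤ n → 0 < b n
  sble : Summable (fun n => b n * τ ^ n)
  ratio : Tendsto (fun n => b n / b (n+1)) atTop (nhds τ)
  conv : Tendsto (fun n => (∑ i ∈ Finset.range (n+1), b i * b (n - i)) / b n) atTop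
    (nhds (2 * ∑' n, b n * τ ^ n))

lemma Base.S_pos (hb : Base b τ) : 0 < ∑' n, b n * τ ^ n := by
  obtain ⟨N, hN⟩ := hb.pos
  have h1 : b N * τ ^ N ≤ ∑' n, b n * τ ^ n :=
    Summable.le_tsum hb.sble N (fun j _ => mul_nonneg (hb.nn j) (pow_nonneg hb.tpos.le _))
  exact lt_of_lt_of_le (mul_pos (hN N le_rfl) (pow_pos hb.tpos _)) h1

lemma Base.ratio_pow (hb : Base b τ) (j : ℕ) :
    Tendsto (fun n => b n / b (n + j)) atTop (nhds (τ ^ j)) := by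
  obtain ⟨N, hN⟩ := hb.pos
  induction j with
  | zero =>
      refine Tendsto.congr' ?_ tendsto_const_nhds
      filter_upwards [eventually_ge_atTop N] with n hn
      rw [pow_zero] -- goal : 1 = b n / b (n+0)
      simp only [Nat.add_zero]
      rw [div_self (hN n hn).ne']
  | succ j ih =>
      have h2 : Tendsto (fun n => (b n / b (n + j)) * (b (n + j) / b (n + j + 1))) atTop
          (nhds (τ ^ j * τ)) := by
        refine ih.mul (((hb.ratio).comp (tendsto_add_atTop_nat j)).congr (fun n => ?_))
        simp [Function.comp]
      rw [pow_succ]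
      refine Tendsto.congr' ?_ h2
      filter_upwards [eventually_ge_atTop N] with n hn
      rw [div_mul_div_cancel₀ (hN (n + j) (le_trans hn (Nat.le_add_right n j))).ne']
      rfl

lemma Base.shift_ratio (hb : Base b τ) (j : ℕ) :
    Tendsto (fun n => b (n - j) / b n) atTop (nhds (τ ^ j)) := by
  have h := (hb.ratio_pow j).comp (tendsto_sub_atTop_nat j)
  refine Tendsto.congr' ?_ h
  filter_upwards [eventually_ge_atTop j] with n hn
  simp only [Function.comp]
  rw [Nat.sub_add_cancel hn]

/-- main split-limit: for `a` asymptotic to `A·b` with a-series value `Ā`,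
the ratio `a (n - j) * w / b n → A τ^j w`. -/
lemma Base.shifted_over (hb : Base b τ) {a : ℕ → ℝ} {A : ℝ}
    (ha : Tendsto (fun n => a n / b n) atTop (nhds A)) (j : ℕ) :
    Tendsto (fun n => a (n - j) / b n) atTop (nhds (A * τ ^ j)) := by
  obtain ⟨N, hN⟩ := hb.pos
  have h2 : Tendsto (fun n => (a (n - j) / b (n - j)) * (b (n - j) / b n)) atTop
      (nhds (A * τ ^ j)) :=
    (((ha).comp (tendsto_sub_atTop_nat j)).congr (fun n => rfl)).mul (hb.shift_ratio j)
  refine Tendsto.congr' ?_ h2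
  filter_upwards [eventually_ge_atTop (N + j)] with n hn
  rw [div_mul_div_cancel₀ (hN (n - j) (by omega)).ne']

/-- smallness of the middle part of the self-convolution. -/
lemma Base.middle_small (hb : Base b τ) {ε : ℝ} (hε : 0 < ε) :
    ∃ m1, ∀ m0, m1 ≤ m0 → ∃ N0, ∀ n, N0 ≤ n →
      ∑ i ∈ Finset.Ico (m0+1) (n - m0), b i * b (n - i) ≤ ε * b n := by
  obtain ⟨N, hN⟩ := hb.pos
  set S := ∑' n, b n * τ ^ n with hS
  have hP : Tendsto (fun m => ∑ i ∈ Finset.range (m+1), b i * τ ^ i) atTop (nhds S) :=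
    (hb.sble.hasSum.tendsto_sum_nat).comp (tendsto_add_atTop_nat 1)
  obtain ⟨m1, hm1⟩ := eventually_atTop.mp (hP.eventually_const_lt
    (show S - ε/4 < S by linarith))
  refine ⟨m1, fun m0 hm0 => ?_⟩
  set P := ∑ i ∈ Finset.range (m0+1), b i * τ ^ i with hPdef
  have hT1 : Tendsto (fun n => (∑ i ∈ Finset.range (m0+1), b i * b (n - i)) / b n)
      atTop (nhds P) := by
    have h := tendsto_finset_sum (Finset.range (m0+1))
      (fun i (_ : i ∈ Finset.range (m0+1)) => ((hb.shift_ratio i).const_mul (b i)))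
    refine Tendsto.congr (fun n => ?_) h
    rw [Finset.sum_div]
    exact Finset.sum_congr rfl (fun i _ => by rw [mul_div_assoc])
  have hT3 : Tendsto (fun n => (∑ i ∈ Finset.Ico (n - m0) (n+1), b i * b (n - i)) / b n)
      atTop (nhds P) := by
    have h := tendsto_finset_sum (Finset.range (m0+1))
      (fun j (_ : j ∈ Finset.range (m0+1)) => ((hb.shift_ratio j).mul_const (b j)))
    have hlim : ∑ j ∈ Finset.range (m0+1), τ ^ j * b j = P := by
      rw [hPdef]; exact Finset.sum_congr rfl (fun i _ => mul_comm _ _)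
    rw [← hlim]
    refine Tendsto.congr' ?_ h
    filter_upwards [eventually_ge_atTop m0] with n hn
    rw [sum_reflect _ n m0 hn, Finset.sum_div]
    refine Finset.sum_congr rfl (fun j hj => ?_)
    have hj' : j ≤ m0 := Nat.lt_succ_iff.mp (Finset.mem_range.mp hj)
    rw [Nat.sub_sub_self (le_trans hj' hn)]
    ring
  have hM : Tendsto (fun n => (∑ i ∈ Finset.Ico (m0+1) (n - m0), b i * b (n - i)) / b n)
      atTop (nhds (2 * S - P - P)) := by
    refine Tendsto.congr' ?_ ((hb.conv.sub hT1).sub hT3)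
    filter_upwards [eventually_ge_atTop (2*m0+2)] with n hn
    have e1 : (∑ i ∈ Finset.Ico 0 (m0+1), b i * b (n - i))
        + ∑ i ∈ Finset.Ico (m0+1) (n - m0), b i * b (n - i)
        = ∑ i ∈ Finset.Ico 0 (n - m0), b i * b (n - i) :=
      Finset.sum_Ico_consecutive _ (by omega) (by omega)
    have e2 : (∑ i ∈ Finset.Ico 0 (n - m0), b i * b (n - i))
        + ∑ i ∈ Finset.Ico (n - m0) (n+1), b i * b (n - i)
        = ∑ i ∈ Finset.Ico 0 (n+1), b i * b (n - i) :=
      Finset.sum_Ico_consecutive _ (by omega) (by omega)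
    have e3 : ∑ i ∈ Finset.range (n+1), b i * b (n - i)
        = (∑ i ∈ Finset.range (m0+1), b i * b (n - i))
          + (∑ i ∈ Finset.Ico (m0+1) (n - m0), b i * b (n - i))
          + ∑ i ∈ Finset.Ico (n - m0) (n+1), b i * b (n - i) := by
      rw [Finset.range_eq_Ico, ← e2, ← e1, ← Finset.range_eq_Ico]
    rw [e3]
    ring
  have hlt : 2 * S - P - P < ε := by have := hm1 m0 hm0; linarith
  obtain ⟨N0, hN0⟩ := eventually_atTop.mp ((hM.eventually_lt_const hlt).and
    (eventually_ge_atTop N))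
  refine ⟨N0, fun n hn => ?_⟩
  obtain ⟨h1, h2⟩ := hN0 n hn
  have hbn : 0 < b n := hN n h2
  calc ∑ i ∈ Finset.Ico (m0+1) (n - m0), b i * b (n - i)
      = ((∑ i ∈ Finset.Ico (m0+1) (n - m0), b i * b (n - i)) / b n) * b n := by
        rw [div_mul_cancel₀ _ hbn.ne']
    _ ≤ ε * b n := mul_le_mul_of_nonneg_right h1.le hbn.le

/-- convolution limit lemma. -/
lemma Base.cv_tendsto (hb : Base b τ) {a : ℕ → ℝ} {A : ℝ}
    (hann : ∀ n, 0 ≤ a n) (has : Summable (fun n => a n * τ ^ n))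
    (ha : Tendsto (fun n => a n / b n) atTop (nhds A)) :
    Tendsto (fun n => cv b a n / b n) atTop
      (nhds (A * (∑' n, b n * τ ^ n) + ∑' n, a n * τ ^ n)) := by
  obtain ⟨N, hN⟩ := hb.pos
  set S := ∑' n, b n * τ ^ n with hS
  set Abar := ∑' n, a n * τ ^ n with hAbar
  have hA : 0 ≤ A := by
    refine ge_of_tendsto ha ?_
    filter_upwards [eventually_ge_atTop N] with n hn
    exact div_nonneg (hann n) (hN n hn).le
  obtain ⟨N1, hN1⟩ := eventually_atTop.mp ((ha.eventually_lt_const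
    (show A < A+1 by linarith)).and (eventually_ge_atTop N))
  have hcomp : ∀ n, N1 ≤ n → a n ≤ (A+1) * b n := by
    intro n hn
    obtain ⟨h1, h2⟩ := hN1 n hn
    have hbn := hN n h2
    calc a n = (a n / b n) * b n := (div_mul_cancel₀ _ hbn.ne').symm
      _ ≤ (A+1) * b n := mul_le_mul_of_nonneg_right h1.le hbn.le
  refine tendsto_of_approx (fun ε hε => ?_)
  have hA1 : (0:ℝ) < A + 1 := by linarith
  have hε2 : 0 < ε / (2 * (A + 1)) := by positivity
  obtain ⟨m1, hm1⟩ := hb.middle_small hε2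
  have hPb : Tendsto (fun m => ∑ i ∈ Finset.range (m+1), b i * τ ^ i) atTop (nhds S) :=
    (hb.sble.hasSum.tendsto_sum_nat).comp (tendsto_add_atTop_nat 1)
  have hPa : Tendsto (fun m => ∑ i ∈ Finset.range (m+1), a i * τ ^ i) atTop (nhds Abar) :=
    (has.hasSum.tendsto_sum_nat).comp (tendsto_add_atTop_nat 1)
  obtain ⟨m0, ⟨⟨hPb0, hPa0⟩, hm1', hN1'⟩⟩ :=
    (((hPb.eventually_const_lt (sub_lt_self S (show (0:ℝ) < ε/2/(A+1) by positivity))).and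
      (hPa.eventually_const_lt (sub_lt_self Abar (half_pos hε)))).and
      ((eventually_ge_atTop m1).and (eventually_ge_atTop N1))).exists
  set Pb := ∑ i ∈ Finset.range (m0+1), b i * τ ^ i with hPbdef
  set Pa := ∑ i ∈ Finset.range (m0+1), a i * τ ^ i with hPadef
  refine ⟨A * Pb + Pa, ?_, ?_⟩
  · -- |T - L| ≤ ε
    have h1 : Pb ≤ S := Summable.sum_le_tsum _ (fun i _ => mul_nonneg (hb.nn i) (pow_nonneg hb.tpos.le _)) hb.sble
    have h2 : Pa ≤ Abar := Summable.sum_le_tsum _ (fun i _ => mul_nonneg (hann i) (pow_nonneg hb.tpos.le _)) has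
    have h3 : A * (S - Pb) ≤ ε/2 := by
      have : S - Pb ≤ ε/2/(A+1) := by linarith
      calc A * (S - Pb) ≤ (A+1) * (ε/2/(A+1)) := by nlinarith
        _ = ε/2 := by field_simp
    rw [abs_le]
    constructor <;> nlinarith
  · -- eventually |cv/b n - T| ≤ ε
    obtain ⟨N0, hN0⟩ := hm1 m0 hm1'
    -- limits of the two end sums
    have hT1 : Tendsto (fun n => (∑ i ∈ Finset.range (m0+1), b i * a (n - i)) / b n)
        atTop (nhds (A * Pb)) := by
      have h := tendsto_finset_sum (Finset.range (m0+1))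
        (fun i (_ : i ∈ Finset.range (m0+1)) => ((hb.shifted_over ha i).const_mul (b i)))
      have hlim : ∑ i ∈ Finset.range (m0+1), b i * (A * τ ^ i) = A * Pb := by
        rw [hPbdef, Finset.mul_sum]
        exact Finset.sum_congr rfl (fun i _ => by ring)
      rw [← hlim]
      refine Tendsto.congr (fun n => ?_) h
      rw [Finset.sum_div]
      exact Finset.sum_congr rfl (fun i _ => by rw [mul_div_assoc])
    have hT3 : Tendsto (fun n => (∑ i ∈ Finset.Ico (n - m0) (n+1), b i * a (n - i)) / b n)
        atTop (nhds Pa) := by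
      have h := tendsto_finset_sum (Finset.range (m0+1))
        (fun j (_ : j ∈ Finset.range (m0+1)) => ((hb.shift_ratio j).mul_const (a j)))
      have hlim : ∑ j ∈ Finset.range (m0+1), τ ^ j * a j = Pa := by
        rw [hPadef]
        exact Finset.sum_congr rfl (fun i _ => mul_comm _ _)
      rw [← hlim]
      refine Tendsto.congr' ?_ h
      filter_upwards [eventually_ge_atTop m0] with n hn
      rw [sum_reflect _ n m0 hn, Finset.sum_div]
      refine Finset.sum_congr rfl (fun j hj => ?_)
      have hj' : j ≤ m0 := Nat.lt_succ_iff.mp (Finset.mem_range.mp hj)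
      rw [Nat.sub_sub_self (le_trans hj' hn)]
      ring
    have hT13 := hT1.add hT3
    have hev13 := Metric.tendsto_atTop.mp hT13 (ε/2) (half_pos hε)
    obtain ⟨N2, hN2⟩ := hev13
    filter_upwards [eventually_ge_atTop (max (max N0 N2) (max N (2*m0+2)))] with n hn
    have hnN0 : N0 ≤ n := le_trans (le_trans (le_max_left _ _) (le_max_left _ _)) hn
    have hnN2 : N2 ≤ n := le_trans (le_trans (le_max_right _ _) (le_max_left _ _)) hn
    have hnN : N ≤ n := le_trans (le_trans (le_max_left _ _) (le_max_right _ _)) hn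
    have hnm0 : 2*m0+2 ≤ n := le_trans (le_trans (le_max_right _ _) (le_max_right _ _)) hn
    have hbn : 0 < b n := hN n hnN
    -- middle bound
    set T2 := ∑ i ∈ Finset.Ico (m0+1) (n - m0), b i * a (n - i) with hT2def
    have hT2nn : 0 ≤ T2 :=
      Finset.sum_nonneg (fun i _ => mul_nonneg (hb.nn i) (hann _))
    have hT2le : T2 ≤ ε/2 * b n := by
      have step1 : T2 ≤ (A+1) * ∑ i ∈ Finset.Ico (m0+1) (n - m0), b i * b (n - i) := by
        rw [Finset.mul_sum]
        refine Finset.sum_le_sum (fun i hi => ?_)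
        obtain ⟨hi1, hi2⟩ := Finset.mem_Ico.mp hi
        have : N1 ≤ n - i := by omega
        calc b i * a (n - i) ≤ b i * ((A+1) * b (n - i)) :=
              mul_le_mul_of_nonneg_left (hcomp _ this) (hb.nn i)
          _ = (A+1) * (b i * b (n - i)) := by ring
      calc T2 ≤ (A+1) * ∑ i ∈ Finset.Ico (m0+1) (n - m0), b i * b (n - i) := step1
        _ ≤ (A+1) * (ε / (2 * (A + 1)) * b n) :=
            mul_le_mul_of_nonneg_left (hN0 n hnN0) hA1.le
        _ = ε/2 * b n := by field_simp
    -- decomposition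
    have e1 : (∑ i ∈ Finset.Ico 0 (m0+1), b i * a (n - i)) + T2
        = ∑ i ∈ Finset.Ico 0 (n - m0), b i * a (n - i) :=
      Finset.sum_Ico_consecutive _ (by omega) (by omega)
    have e2 : (∑ i ∈ Finset.Ico 0 (n - m0), b i * a (n - i))
        + ∑ i ∈ Finset.Ico (n - m0) (n+1), b i * a (n - i)
        = ∑ i ∈ Finset.Ico 0 (n+1), b i * a (n - i) :=
      Finset.sum_Ico_consecutive _ (by omega) (by omega)
    have e3 : cv b a n
        = (∑ i ∈ Finset.range (m0+1), b i * a (n - i))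
          + (∑ i ∈ Finset.Ico (n - m0) (n+1), b i * a (n - i)) + T2 := by
      rw [cv, Finset.range_eq_Ico, ← e2, ← e1, ← Finset.range_eq_Ico]
      ring
    have key : cv b a n / b n
        = ((∑ i ∈ Finset.range (m0+1), b i * a (n - i)) / b n
          + (∑ i ∈ Finset.Ico (n - m0) (n+1), b i * a (n - i)) / b n) + T2 / b n := by
      rw [e3, _root_.add_div, _root_.add_div]
    have hd2 := hN2 n hnN2
    rw [Real.dist_eq] at hd2
    have hT2div : T2 / b n ≤ ε/2 := by
      rw [div_le_iff₀ hbn]; linarith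
    have hT2divnn : 0 ≤ T2 / b n := div_nonneg hT2nn hbn.le
    rw [key]
    have habs : |((∑ i ∈ Finset.range (m0+1), b i * a (n - i)) / b n
          + (∑ i ∈ Finset.Ico (n - m0) (n+1), b i * a (n - i)) / b n) + T2 / b n
          - (A * Pb + Pa)|
        ≤ |(∑ i ∈ Finset.range (m0+1), b i * a (n - i)) / b n
          + (∑ i ∈ Finset.Ico (n - m0) (n+1), b i * a (n - i)) / b n
          - (A * Pb + Pa)| + |T2 / b n| := by
      rw [add_sub_right_comm]
      exact abs_add_le _ _
    refine le_trans habs ?_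
    rw [abs_of_nonneg hT2divnn]
    linarith

/-- Kesten's bound. -/
lemma Base.kesten (hb : Base b τ) {ε : ℝ} (hε : 0 < ε) :
    ∃ N C, 0 < C ∧ ∀ k n, N ≤ n →
      cp b k n ≤ C * ((1+ε) * ∑' n, b n * τ ^ n) ^ k * b n := by
  obtain ⟨N, hN⟩ := hb.pos
  set S := ∑' n, b n * τ ^ n with hS
  have hSpos : 0 < S := hb.S_pos
  have hεm : 0 < ε * S / 2 := by positivity
  obtain ⟨m1, hm1⟩ := hb.middle_small hεm
  set m0 := max m1 N with hm0def
  obtain ⟨N0, hN0⟩ := hm1 m0 (le_max_left _ _)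
  -- first end sum eventually bounded
  have hT1 : Tendsto (fun n => (∑ i ∈ Finset.range (m0+1), b i * b (n - i)) / b n)
      atTop (nhds (∑ i ∈ Finset.range (m0+1), b i * τ ^ i)) := by
    have h := tendsto_finset_sum (Finset.range (m0+1))
      (fun i (_ : i ∈ Finset.range (m0+1)) => ((hb.shift_ratio i).const_mul (b i)))
    refine Tendsto.congr (fun n => ?_) h
    rw [Finset.sum_div]
    exact Finset.sum_congr rfl (fun i _ => by rw [mul_div_assoc])
  have hPble : (∑ i ∈ Finset.range (m0+1), b i * τ ^ i) ≤ S :=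
    Summable.sum_le_tsum _ (fun i _ => mul_nonneg (hb.nn i) (pow_nonneg hb.tpos.le _)) hb.sble
  obtain ⟨Na, hNa⟩ := eventually_atTop.mp (hT1.eventually_lt_const
    (show (∑ i ∈ Finset.range (m0+1), b i * τ ^ i) < S + ε*S/2 by linarith))
  -- second end sum eventually bounded
  have hT2 : Tendsto (fun n => (∑ j ∈ Finset.range (m0+1), b (n - j) * (1/τ^j)) / b n)
      atTop (nhds ((m0:ℝ)+1)) := by
    have h := tendsto_finset_sum (Finset.range (m0+1))
      (fun j (_ : j ∈ Finset.range (m0+1)) => ((hb.shift_ratio j).mul_const (1/τ^j)))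
    have hlim : ∑ j ∈ Finset.range (m0+1), τ ^ j * (1/τ^j) = (m0:ℝ)+1 := by
      rw [Finset.sum_congr rfl (fun j _ => by
        rw [mul_one_div, div_self (pow_ne_zero j hb.tpos.ne')])]
      simp
    rw [← hlim]
    refine Tendsto.congr (fun n => ?_) h
    rw [Finset.sum_div]
    exact Finset.sum_congr rfl (fun j _ => by rw [div_mul_eq_mul_div, mul_comm (b (n-j)), mul_div_assoc, mul_comm])
  obtain ⟨Nb, hNb⟩ := eventually_atTop.mp (hT2.eventually_lt_const
    (show ((m0:ℝ)+1) < (m0:ℝ)+2 by linarith))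
  set N2 := max (max N0 Na) (max Nb (2*m0+2)) with hN2def
  -- window constant
  set W := ∑ u ∈ Finset.Ico (m0+1) N2, 1/(τ^u * b u) with hWdef
  have hWnn : 0 ≤ W := Finset.sum_nonneg (fun u hu => by
    obtain ⟨hu1, _⟩ := Finset.mem_Ico.mp hu
    have hbu : 0 < b u := hN u (by omega)
    exact one_div_nonneg.mpr (mul_pos (pow_pos hb.tpos u) hbu).le)
  set C0 := ((m0:ℝ)+2)/S with hC0def
  have hC0nn : 0 ≤ C0 := by positivity
  set X := W + 1 + C0/ε with hXdef
  have hXpos : 0 < X := by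
    have h := div_nonneg hC0nn hε.le
    rw [hXdef]; linarith
  set B : ℕ → ℝ := fun k => X * (1+ε)^k - C0/ε with hBdef
  have hB0 : B 0 = W + 1 := by simp [hBdef, hXdef]
  have hBrec : ∀ k, (1+ε) * B k + C0 = B (k+1) := by
    intro k
    simp only [hBdef]
    rw [pow_succ]
    field_simp
    ring
  have hBge : ∀ k, W + 1 ≤ B k := by
    intro k
    have h1 : (1:ℝ) ≤ (1+ε)^k := one_le_pow₀ (by linarith)
    have h2 : X * 1 ≤ X * (1+ε)^k := mul_le_mul_of_nonneg_left h1 hXpos.le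
    simp only [hBdef]
    rw [hXdef] at h2 ⊢
    linarith
  have hC0S : C0 * S = (m0:ℝ)+2 := by rw [hC0def]; field_simp
  have hcpbd : ∀ k j, cp b k j ≤ S^k * (1/τ^j) := by
    intro k j
    have h1 := cp_le_pow hb.nn hb.tpos hb.sble k j
    have hτj : 0 < τ^j := pow_pos hb.tpos j
    rw [← hS] at h1
    calc cp b k j = cp b k j * τ^j / τ^j := by field_simp
      _ ≤ S^k / τ^j := (div_le_div_iff_of_pos_right hτj).mpr h1
      _ = S^k * (1/τ^j) := by ring
  have key : ∀ k, ∀ n, m0+1 ≤ n → cp b k n ≤ B k * S^k * b n := by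
    intro k
    have hNm0 : N ≤ m0 := le_max_right _ _
    induction k with
    | zero =>
        intro n hn
        have hne : n ≠ 0 := by omega
        have h0 : cp b 0 n = 0 := by simp [cp, hne]
        rw [h0]
        have hBnn : 0 ≤ B 0 := by have := hBge 0; linarith
        exact mul_nonneg (mul_nonneg hBnn (pow_nonneg hSpos.le _)) (hb.nn n)
    | succ k ih =>
        intro n hn
        have hbn : 0 < b n := hN n (by omega)
        have hBknn : 0 ≤ B k := by have := hBge k; linarith
        by_cases hcase : n < N2
        · -- window case
          have hterm : 1/(τ^n * b n) ≤ W := by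
            refine Finset.single_le_sum (f := fun u => 1/(τ^u * b u)) (fun u hu => ?_)
              (Finset.mem_Ico.mpr ⟨hn, hcase⟩)
            obtain ⟨hu1, _⟩ := Finset.mem_Ico.mp hu
            have hbu : 0 < b u := hN u (by omega)
            exact one_div_nonneg.mpr (mul_pos (pow_pos hb.tpos u) hbu).le
          have h1 : cp b (k+1) n ≤ S^(k+1) * (1/(τ^n * b n)) * b n := by
            have := hcpbd (k+1) n
            calc cp b (k+1) n ≤ S^(k+1) * (1/τ^n) := this
              _ = S^(k+1) * (1/(τ^n * b n)) * b n := by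
                  have hτn : (τ:ℝ)^n ≠ 0 := (pow_pos hb.tpos n).ne'
                  have hbn' : b n ≠ 0 := hbn.ne'
                  field_simp
          calc cp b (k+1) n ≤ S^(k+1) * (1/(τ^n * b n)) * b n := h1
            _ ≤ S^(k+1) * W * b n :=
                mul_le_mul_of_nonneg_right
                  (mul_le_mul_of_nonneg_left hterm (pow_nonneg hSpos.le _)) hbn.le
            _ ≤ B (k+1) * S^(k+1) * b n := by
                have hWB : W ≤ B (k+1) := by have := hBge (k+1); linarith
                have h2 : S^(k+1) * W ≤ S^(k+1) * B (k+1) :=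
                  mul_le_mul_of_nonneg_left hWB (pow_nonneg hSpos.le _)
                have h3 : S^(k+1) * W * b n ≤ S^(k+1) * B (k+1) * b n :=
                  mul_le_mul_of_nonneg_right h2 hbn.le
                linarith [h3, mul_comm (S^(k+1)) (B (k+1))]
        · push_neg at hcase
          have hnN0 : N0 ≤ n := le_trans (le_trans (le_max_left _ _) (le_max_left _ _)) hcase
          have hnNa : Na ≤ n := le_trans (le_trans (le_max_right _ _) (le_max_left _ _)) hcase
          have hnNb : Nb ≤ n := le_trans (le_trans (le_max_left _ _) (le_max_right _ _)) hcase
          have hn2m : 2*m0+2 ≤ n := le_trans (le_trans (le_max_right _ _) (le_max_right _ _)) hcase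
          have hdec : cp b (k+1) n
              = (∑ i ∈ Finset.Ico 0 (n - m0), b i * cp b k (n - i))
                + ∑ i ∈ Finset.Ico (n - m0) (n+1), b i * cp b k (n - i) := by
            show cv b (cp b k) n = _
            rw [cv, Finset.range_eq_Ico,
              ← Finset.sum_Ico_consecutive _ (Nat.zero_le _) (show n - m0 ≤ n+1 by omega)]
          have hA1 : (∑ i ∈ Finset.Ico 0 (n - m0), b i * cp b k (n - i))
              ≤ B k * S^k * ∑ i ∈ Finset.Ico 0 (n - m0), b i * b (n - i) := by
            rw [Finset.mul_sum]
            refine Finset.sum_le_sum (fun i hi => ?_)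
            obtain ⟨_, hi2⟩ := Finset.mem_Ico.mp hi
            have hni : m0+1 ≤ n - i := by omega
            calc b i * cp b k (n - i) ≤ b i * (B k * S^k * b (n - i)) :=
                  mul_le_mul_of_nonneg_left (ih (n - i) hni) (hb.nn i)
              _ = B k * S^k * (b i * b (n - i)) := by ring
          have hSig : (∑ i ∈ Finset.Ico 0 (n - m0), b i * b (n - i)) ≤ (1+ε) * S * b n := by
            have hsplit : (∑ i ∈ Finset.Ico 0 (n - m0), b i * b (n - i))
                = (∑ i ∈ Finset.range (m0+1), b i * b (n - i))
                  + ∑ i ∈ Finset.Ico (m0+1) (n - m0), b i * b (n - i) := by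
              rw [Finset.range_eq_Ico, Finset.sum_Ico_consecutive _ (by omega) (by omega)]
            have hend : (∑ i ∈ Finset.range (m0+1), b i * b (n - i)) ≤ (S + ε*S/2) * b n := by
              have := hNa n hnNa
              rw [div_lt_iff₀ hbn] at this
              linarith
            have hmid := hN0 n hnN0
            rw [hsplit]
            linarith
          have hrefl : (∑ i ∈ Finset.Ico (n - m0) (n+1), b i * cp b k (n - i))
              = ∑ j ∈ Finset.range (m0+1), b (n - j) * cp b k j := by
            rw [sum_reflect (fun i => b i * cp b k (n - i)) n m0 (by omega)]
            refine Finset.sum_congr rfl (fun j hj => ?_)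
            have hj' : j ≤ m0 := Nat.lt_succ_iff.mp (Finset.mem_range.mp hj)
            rw [Nat.sub_sub_self (by omega : j ≤ n)]
          have hBle : (∑ j ∈ Finset.range (m0+1), b (n - j) * cp b k j)
              ≤ S^k * ((m0:ℝ)+2) * b n := by
            calc ∑ j ∈ Finset.range (m0+1), b (n - j) * cp b k j
                ≤ ∑ j ∈ Finset.range (m0+1), b (n - j) * (S^k * (1/τ^j)) :=
                  Finset.sum_le_sum (fun j _ =>
                    mul_le_mul_of_nonneg_left (hcpbd k j) (hb.nn _))
              _ = S^k * ∑ j ∈ Finset.range (m0+1), b (n - j) * (1/τ^j) := by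
                  rw [Finset.mul_sum]
                  exact Finset.sum_congr rfl (fun j _ => by ring)
              _ ≤ S^k * (((m0:ℝ)+2) * b n) := by
                  refine mul_le_mul_of_nonneg_left ?_ (pow_nonneg hSpos.le k)
                  have := hNb n hnNb
                  rw [div_lt_iff₀ hbn] at this
                  linarith
              _ = S^k * ((m0:ℝ)+2) * b n := by ring
          calc cp b (k+1) n
              = (∑ i ∈ Finset.Ico 0 (n - m0), b i * cp b k (n - i))
                + ∑ i ∈ Finset.Ico (n - m0) (n+1), b i * cp b k (n - i) := hdec
            _ ≤ B k * S^k * ((1+ε) * S * b n) + S^k * ((m0:ℝ)+2) * b n := by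
                refine add_le_add (le_trans hA1 ?_) (by rw [hrefl]; exact hBle)
                exact mul_le_mul_of_nonneg_left hSig
                  (mul_nonneg hBknn (pow_nonneg hSpos.le k))
            _ = ((1+ε) * B k + C0) * S^(k+1) * b n := by
                rw [← hC0S, pow_succ]
                ring
            _ = B (k+1) * S^(k+1) * b n := by rw [hBrec]
  refine ⟨m0+1, X, hXpos, fun k n hn => ?_⟩
  calc cp b k n ≤ B k * S^k * b n := key k n hn
    _ ≤ X * (1+ε)^k * S^k * b n := by
        have h1 : B k ≤ X * (1+ε)^k := by
          simp only [hBdef]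
          have : 0 ≤ C0/ε := div_nonneg hC0nn hε.le
          linarith
        exact mul_le_mul_of_nonneg_right
          (mul_le_mul_of_nonneg_right h1 (pow_nonneg hSpos.le k)) (hb.nn n)
    _ = X * ((1+ε) * S)^k * b n := by rw [mul_pow]; ring

/-- limit of convolution powers. -/
lemma Base.cp_tendsto (hb : Base b τ) (k : ℕ) :
    Tendsto (fun n => cp b k n / b n) atTop
      (nhds ((k : ℝ) * (∑' n, b n * τ ^ n) ^ (k - 1))) := by
  set S := ∑' n, b n * τ ^ n with hS
  induction k with
  | zero =>
      have h0 : Tendsto (fun _ : ℕ => (0:ℝ)) atTop (nhds 0) := tendsto_const_nhds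
      have : ((0:ℕ) : ℝ) * S ^ (0 - 1) = 0 := by norm_num
      rw [this]
      refine Tendsto.congr' ?_ h0
      filter_upwards [eventually_ge_atTop 1] with n hn
      have : n ≠ 0 := by omega
      simp [cp, this]
  | succ k ih =>
      have h := hb.cv_tendsto (cp_nonneg hb.nn k)
        (cp_summable hb.nn hb.tpos.le hb.sble k).1 ih
      rw [(cp_summable hb.nn hb.tpos.le hb.sble k).2] at h
      have heq : (k : ℝ) * S ^ (k - 1) * S + S ^ k = ((k:ℕ)+1 : ℝ) * S ^ ((k+1) - 1) := by
        cases k with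
        | zero => simp
        | succ j =>
            have h1 : (j + 1 : ℕ) - 1 = j := rfl
            have h2 : (j + 1 + 1 : ℕ) - 1 = j + 1 := rfl
            rw [h1, h2]
            push_cast
            rw [pow_succ]
            ring
      rw [← hS] at h
      rw [show (((k+1:ℕ)) : ℝ) * S ^ ((k+1) - 1) = (k : ℝ) * S ^ (k - 1) * S + S ^ k by
        rw [heq]; push_cast; ring]
      exact h


/-! ### composition via dominated convergence -/

section Comp

variable {ι : Type} {w : ι → ℝ} {κ : ι → ℕ} {r : ℝ}

lemma Base.summable_fixed_n (hb : Base b τ) (hw : ∀ i, 0 ≤ w i)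
    (hr : (∑' n, b n * τ ^ n) < r) (hsum : Summable (fun i => w i * r ^ κ i)) (n : ℕ) :
    Summable (fun i => w i * cp b (κ i) n) := by
  set S := ∑' n, b n * τ ^ n with hS
  have hSpos := hb.S_pos
  rw [← hS] at hSpos
  have hτn : 0 < τ ^ n := pow_pos hb.tpos n
  refine Summable.of_nonneg_of_le
    (fun i => mul_nonneg (hw i) (cp_nonneg hb.nn _ _))
    (fun i => ?_) ((hsum.mul_left (1/τ^n)))
  have h1 : cp b (κ i) n ≤ S ^ κ i / τ ^ n := by
    rw [le_div_iff₀ hτn]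
    exact cp_le_pow hb.nn hb.tpos hb.sble (κ i) n
  have h2 : S ^ κ i ≤ r ^ κ i :=
    pow_le_pow_left₀ hSpos.le (le_of_lt hr) (κ i)
  calc w i * cp b (κ i) n ≤ w i * (S ^ κ i / τ ^ n) :=
        mul_le_mul_of_nonneg_left h1 (hw i)
    _ ≤ w i * (r ^ κ i / τ ^ n) := by
        refine mul_le_mul_of_nonneg_left ((div_le_div_iff_of_pos_right hτn).mpr h2) (hw i)
    _ = 1/τ^n * (w i * r ^ κ i) := by ring

lemma Base.comp_tendsto (hb : Base b τ) (hw : ∀ i, 0 ≤ w i)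
    (hr : (∑' n, b n * τ ^ n) < r) (hsum : Summable (fun i => w i * r ^ κ i)) :
    Tendsto (fun n => (∑' i, w i * cp b (κ i) n) / b n) atTop
      (nhds (∑' i, w i * (κ i : ℝ) * (∑' n, b n * τ ^ n) ^ (κ i - 1))) := by
  set S := ∑' n, b n * τ ^ n with hS
  have hSpos := hb.S_pos
  rw [← hS] at hSpos
  have hε : 0 < (r - S) / (2 * S) := by
    have : 0 < r - S := by linarith
    positivity
  set ε := (r - S) / (2 * S) with hεdef
  have hlr : (1 + ε) * S < r := by
    have heq : (1 + (r - S)/(2*S)) * S = (S + r)/2 := by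
      field_simp
      ring
    rw [hεdef, heq]
    linarith
  have hl0 : 0 ≤ (1 + ε) * S := by positivity
  obtain ⟨NK, C, hC, hK⟩ := hb.kesten hε
  rw [← hS] at hK
  obtain ⟨N, hN⟩ := hb.pos
  have hptwise : ∀ i, Tendsto (fun n => w i * cp b (κ i) n / b n) atTop
      (nhds (w i * (κ i : ℝ) * S ^ (κ i - 1))) := by
    intro i
    have h := (hb.cp_tendsto (κ i)).const_mul (w i)
    rw [← hS] at h
    refine Tendsto.congr (fun n => by rw [mul_div_assoc]) ?_
    convert h using 2
    ring
  have hbound : Summable (fun i => C * ((1+ε)*S) ^ κ i * w i) := by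
    refine Summable.of_nonneg_of_le
      (fun i => mul_nonneg (mul_nonneg hC.le (pow_nonneg hl0 _)) (hw i))
      (fun i => ?_) (hsum.mul_left C)
    have h1 : ((1+ε)*S) ^ κ i ≤ r ^ κ i := pow_le_pow_left₀ hl0 hlr.le (κ i)
    calc C * ((1+ε)*S) ^ κ i * w i ≤ C * r ^ κ i * w i :=
          mul_le_mul_of_nonneg_right (mul_le_mul_of_nonneg_left h1 hC.le) (hw i)
      _ = C * (w i * r ^ κ i) := by ring
  have hdom : ∀ᶠ n in atTop, ∀ i, ‖w i * cp b (κ i) n / b n‖ ≤ C * ((1+ε)*S) ^ κ i * w i := by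
    filter_upwards [eventually_ge_atTop (max NK N)] with n hn i
    have hbn : 0 < b n := hN n (le_trans (le_max_right _ _) hn)
    have hcp := hK (κ i) n (le_trans (le_max_left _ _) hn)
    have hnn : 0 ≤ w i * cp b (κ i) n / b n :=
      div_nonneg (mul_nonneg (hw i) (cp_nonneg hb.nn _ _)) hbn.le
    rw [Real.norm_of_nonneg hnn, div_le_iff₀ hbn]
    calc w i * cp b (κ i) n ≤ w i * (C * ((1+ε)*S) ^ κ i * b n) :=
          mul_le_mul_of_nonneg_left hcp (hw i)
      _ = C * ((1+ε)*S) ^ κ i * w i * b n := by ring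
  have hmain := tendsto_tsum_of_dominated_convergence hbound hptwise hdom
  exact hmain.congr (fun n => tsum_div_const)

lemma Base.comp_summable (hb : Base b τ) (hw : ∀ i, 0 ≤ w i)
    (hr : (∑' n, b n * τ ^ n) < r) (hsum : Summable (fun i => w i * r ^ κ i)) :
    Summable (fun n => (∑' i, w i * cp b (κ i) n) * τ ^ n) ∧
      (∑' n, (∑' i, w i * cp b (κ i) n) * τ ^ n)
        = ∑' i, w i * (∑' n, b n * τ ^ n) ^ κ i := by
  set S := ∑' n, b n * τ ^ n with hS
  have hSpos := hb.S_pos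
  rw [← hS] at hSpos
  set F : ι × ℕ → ℝ := fun p => w p.1 * cp b (κ p.1) p.2 * τ ^ p.2 with hF
  have hFnn : ∀ p, 0 ≤ F p := fun p =>
    mul_nonneg (mul_nonneg (hw _) (cp_nonneg hb.nn _ _)) (pow_nonneg hb.tpos.le _)
  have hrow : ∀ i, Summable (fun n => F (i, n)) := by
    intro i
    exact ((cp_summable hb.nn hb.tpos.le hb.sble (κ i)).1.mul_left (w i)).congr
      (fun n => by simp only [hF]; ring)
  have hrowsum : ∀ i, (∑' n, F (i, n)) = w i * S ^ κ i := by
    intro i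
    have : (∑' n, F (i, n)) = ∑' n, w i * (cp b (κ i) n * τ ^ n) :=
      tsum_congr (fun n => by simp only [hF]; ring)
    rw [this, tsum_mul_left, (cp_summable hb.nn hb.tpos.le hb.sble (κ i)).2, ← hS]
  have hmarg : Summable (fun i => w i * S ^ κ i) := by
    refine Summable.of_nonneg_of_le
      (fun i => mul_nonneg (hw i) (pow_nonneg hSpos.le _)) (fun i => ?_) hsum
    exact mul_le_mul_of_nonneg_left (pow_le_pow_left₀ hSpos.le hr.le _) (hw i)
  have hFsum : Summable F := by
    rw [summable_prod_of_nonneg hFnn]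
    exact ⟨hrow, hmarg.congr (fun i => (hrowsum i).symm)⟩
  have hswap : Summable (fun p : ℕ × ι => F p.swap) := hFsum.prod_symm
  have hcols := (summable_prod_of_nonneg (fun p => hFnn p.swap)).mp hswap
  have hptsum : ∀ n, (∑' i, w i * cp b (κ i) n) * τ ^ n = ∑' i, F (i, n) := by
    intro n
    rw [← tsum_mul_right]
  constructor
  · exact hcols.2.congr (fun n =>
      ((tsum_congr (fun i => rfl)).trans (hptsum n).symm))
  · calc (∑' n, (∑' i, w i * cp b (κ i) n) * τ ^ n)
        = ∑' n, ∑' i, F (i, n) := tsum_congr hptsum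
      _ = ∑' i, ∑' n, F (i, n) := Summable.tsum_comm (hFsum.congr (fun p => rfl))
      _ = ∑' i, w i * S ^ κ i := tsum_congr hrowsum

end Comp

end Base

end

end SubexpProof

open Filter SubexpProof

set_option maxHeartbeats 2000000 in
/-- If `g ∈ 𝒮_d` with radius of convergence `ρ`, and `f` is a non-constant power series with
non-negative coefficients whose radius of convergence exceeds `g(ρ)`, then the composition
`f(g(z))` (whose `n`-th coefficient is `∑_k f_k [z^n] g(z)^k`) belongs to `𝒮_d`, and
`[z^n] f(g(z)) ∼ f'(g(ρ)) · [z^n] g(z)` along multiples of `d`. -/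
theorem subexp_composition (d : ℕ) (g f : ℕ → ℝ) (ρ : ℝ)
    (hg : SubexpClass d g ρ)
    (hf0 : ∀ k, 0 ≤ f k)
    (hfnonconst : ∃ k, 1 ≤ k ∧ f k ≠ 0)
    (hfrad : ∃ r : ℝ, (∑' n, g n * ρ ^ n) < r ∧ Summable (fun k => f k * r ^ k)) :
    SubexpClass d (fun n => ∑' k, f k * PowerSeries.coeff n ((PowerSeries.mk g) ^ k)) ρ ∧
    Filter.Tendsto
      (fun m => (∑' k, f k * PowerSeries.coeff (d * m) ((PowerSeries.mk g) ^ k)) / g (d * m))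
      Filter.atTop
      (nhds (∑' k, ((k : ℕ) + 1 : ℝ) * f (k + 1) * (∑' n, g n * ρ ^ n) ^ k)) := by
  obtain ⟨hd, hρ, hgnn, hgvan, ⟨Ng, hgpos⟩, hgsum, hgnot, hgratio, hgconv⟩ := hg
  obtain ⟨r, hrG, hrsum⟩ := hfrad
  simp only [cp_eq_coeff]
  set G := ∑' n, g n * ρ ^ n with hGdef
  have hdpos : 0 < d := hd
  set τ := ρ ^ d with hτdef
  set b : ℕ → ℝ := fun m => g (d*m) with hbdef
  have hinj : Function.Injective (fun m => d * m) := fun a c h => by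
    exact Nat.eq_of_mul_eq_mul_left hdpos h
  have hnotdvd : ∀ x, x ∉ Set.range (fun m => d*m) → ¬ d ∣ x := by
    intro x hx ⟨u, hu⟩
    exact hx ⟨u, hu.symm⟩
  have hsupp : Function.support (fun n => g n * ρ ^ n) ⊆ Set.range (fun m => d*m) := by
    intro x hx
    by_contra hc
    exact hx (show g x * ρ ^ x = 0 by rw [hgvan x (hnotdvd x hc), zero_mul])
  have hcomp_eq : ∀ m, g (d*m) * ρ ^ (d*m) = b m * τ ^ m := by
    intro m
    simp only [hbdef, hτdef, ← pow_mul]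
  have hbsum : Summable (fun m => b m * τ ^ m) := by
    refine ((hinj.summable_iff ?_).mpr hgsum).congr hcomp_eq
    intro x hx
    rw [hgvan x (hnotdvd x hx), zero_mul]
  have hbS : (∑' m, b m * τ ^ m) = G := by
    rw [hGdef, ← hinj.tsum_eq hsupp]
    exact tsum_congr (fun m => (hcomp_eq m).symm)
  have hBase : Base b τ := by
    refine ⟨pow_pos hρ d, fun m => hgnn _, ⟨Ng, fun m hm => hgpos (d*m)
      (le_trans hm (by nlinarith)) ⟨m, rfl⟩⟩, hbsum, ?_, ?_⟩
    · refine hgratio.congr (fun m => ?_)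
      simp only [hbdef, Nat.mul_succ]
    · have hconvb : ∀ m, (∑ i ∈ Finset.range (d*m+1), g i * g (d*m - i))
          = ∑ u ∈ Finset.range (m+1), b u * b (m - u) := by
        intro m
        rw [sum_dil hd _ (fun i hi => by rw [hgvan i hi, zero_mul])]
        exact Finset.sum_congr rfl (fun u _ => by rw [← Nat.mul_sub])
      rw [hbS]
      exact hgconv.congr (fun m => by rw [hconvb m])
  have hSr : (∑' m, b m * τ ^ m) < r := by rw [hbS]; exact hrG
  have hbridge : ∀ k m, cp g k (d*m) = cp b k m := fun k m => cp_dil hd hgvan k m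
  set hh : ℕ → ℝ := fun m => ∑' k, f k * cp b k m with hhdef
  have hκsum : Summable (fun k : ℕ => f k * r ^ k) := hrsum
  -- main asymptotics
  have hmain : Tendsto (fun m => hh m / b m) atTop
      (nhds (∑' k : ℕ, f k * (k : ℝ) * G ^ (k - 1))) := by
    have h := hBase.comp_tendsto (w := f) (κ := fun k => k) hf0 hSr hκsum
    rw [hbS] at h
    exact h
  have hSpos : 0 < G := by
    rw [← hbS]
    exact hBase.S_pos
  have hr0 : 0 < r := lt_of_le_of_lt hSpos.le hrG
  -- summability of the limit sequence
  set M := ∑' k : ℕ, f k * r ^ k with hMdef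
  have hfM : ∀ k, f k * r ^ k ≤ M :=
    fun k => Summable.le_tsum hκsum k (fun j _ => mul_nonneg (hf0 j) (pow_nonneg hr0.le j))
  have hLsmm : Summable (fun k : ℕ => f k * (k : ℝ) * G ^ (k - 1)) := by
    have hx : ‖G / r‖ < 1 := by
      rw [Real.norm_of_nonneg (div_nonneg hSpos.le hr0.le)]
      rw [div_lt_one hr0]
      exact hrG
    have hgeo := (summable_pow_mul_geometric_of_norm_lt_one 1 hx).mul_left (M / G)
    refine Summable.of_nonneg_of_le
      (fun k => mul_nonneg (mul_nonneg (hf0 k) (Nat.cast_nonneg k)) (pow_nonneg hSpos.le _))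
      (fun k => ?_) hgeo
    cases k with
    | zero => simp
    | succ j =>
        have h1 : f (j+1) ≤ M / r ^ (j+1) := by
          rw [le_div_iff₀ (pow_pos hr0 _)]
          exact hfM (j+1)
        have h2 : ((j:ℝ)+1) * G ^ j ≥ 0 :=
          mul_nonneg (by positivity) (pow_nonneg hSpos.le _)
        calc f (j+1) * ((j+1:ℕ) : ℝ) * G ^ ((j+1) - 1)
            = f (j+1) * (((j:ℝ)+1) * G ^ j) := by push_cast; ring
          _ ≤ (M / r ^ (j+1)) * (((j:ℝ)+1) * G ^ j) :=
              mul_le_mul_of_nonneg_right h1 h2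
          _ = M / G * (((j+1:ℕ):ℝ) ^ 1 * (G / r) ^ (j+1)) := by
              rw [div_pow]
              push_cast
              field_simp
              ring
  set L := ∑' k : ℕ, f k * (k : ℝ) * G ^ (k - 1) with hLdef
  have hLpos : 0 < L := by
    obtain ⟨k0, hk01, hk0ne⟩ := hfnonconst
    have hfk0 : 0 < f k0 := lt_of_le_of_ne (hf0 k0) (Ne.symm hk0ne)
    refine Summable.tsum_pos hLsmm (fun k => mul_nonneg (mul_nonneg (hf0 k) (Nat.cast_nonneg k))
      (pow_nonneg hSpos.le _)) k0 ?_
    have : (0:ℝ) < (k0 : ℝ) := by exact_mod_cast hk01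
    positivity
  -- L equals the target constant
  have hLtarget : L = ∑' k : ℕ, ((k : ℕ) + 1 : ℝ) * f (k + 1) * G ^ k := by
    rw [hLdef, Summable.tsum_eq_zero_add hLsmm]
    simp only [Nat.cast_zero, mul_zero, zero_mul, zero_add, Nat.add_sub_cancel]
    exact tsum_congr (fun k => by push_cast; ring)
  -- summability of the composition series
  have hcs := hBase.comp_summable (w := f) (κ := fun k => k) hf0 hSr hκsum
  rw [hbS] at hcs
  set Hval := ∑' k : ℕ, f k * G ^ k with hHvaldef
  -- the composed sequence in original indexing
  set H : ℕ → ℝ := fun n => ∑' k, f k * cp g k n with hHdef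
  have hHdil : ∀ m, H (d*m) = hh m := fun m => tsum_congr (fun k => by rw [hbridge k m])
  have hHvan : ∀ n, ¬ d ∣ n → H n = 0 := by
    intro n hn
    have : ∀ k : ℕ, f k * cp g k n = 0 := fun k => by rw [cp_vanish hgvan k n hn, mul_zero]
    rw [hHdef]
    simp only [this, tsum_zero]
  have hHnn : ∀ n, 0 ≤ H n :=
    fun n => tsum_nonneg (fun k => mul_nonneg (hf0 k) (cp_nonneg hgnn k n))
  have hsuppH : Function.support (fun n => H n * ρ ^ n) ⊆ Set.range (fun m => d*m) := by
    intro x hx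
    by_contra hc
    exact hx (show H x * ρ ^ x = 0 by rw [hHvan x (hnotdvd x hc), zero_mul])
  have hHcomp : ∀ m, H (d*m) * ρ ^ (d*m) = hh m * τ ^ m := by
    intro m
    rw [hHdil m, hτdef, ← pow_mul]
  have hHsum : Summable (fun n => H n * ρ ^ n) := by
    refine (hinj.summable_iff ?_).mp (hcs.1.congr (fun m => (hHcomp m).symm))
    intro x hx
    rw [hHvan x (hnotdvd x hx), zero_mul]
  have hHtsum : (∑' n, H n * ρ ^ n) = Hval := by
    rw [← hinj.tsum_eq hsuppH]
    rw [show (∑' m, H (d*m) * ρ ^ (d*m)) = ∑' m, hh m * τ ^ m from tsum_congr hHcomp]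
    exact hcs.2
  -- eventual positivity
  obtain ⟨M1, hM1⟩ := eventually_atTop.mp
    (((hmain.eventually_const_lt (half_lt_self hLpos)).and
      (eventually_ge_atTop Ng)))
  have hhpos : ∀ m, M1 ≤ m → 0 < hh m ∧ L/2 * b m ≤ hh m ∧ 0 < b m := by
    intro m hm
    obtain ⟨h1, h2⟩ := hM1 m hm
    have hbm : 0 < b m := hgpos (d*m) (le_trans h2 (by nlinarith)) ⟨m, rfl⟩
    have h3 : L/2 * b m < hh m := (lt_div_iff₀ hbm).mp h1
    exact ⟨lt_of_le_of_lt (by positivity) h3, h3.le, hbm⟩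
  have habs : ∀ {u : ℕ → ℝ}, Summable u → Summable (fun k => ‖u k‖) :=
    fun h => h.abs.congr (fun k => (Real.norm_eq_abs _).symm)
  refine ⟨⟨hd, hρ, hHnn, hHvan, ?_, hHsum, ?_, ?_, ?_⟩, ?_⟩
  · -- eventual positivity
    refine ⟨d*M1, fun n hn hdvd => ?_⟩
    obtain ⟨u, rfl⟩ := hdvd
    have hu : M1 ≤ u := Nat.le_of_mul_le_mul_left hn hdpos
    rw [hHdil u]
    exact (hhpos u hu).1
  · -- non-summability beyond ρ
    intro r' hr' hsm
    refine hgnot r' hr' ?_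
    have hr'0 : 0 < r' := lt_trans hρ hr'
    have hbound : ∀ n, g (n + d*M1) * r' ^ (n + d*M1)
        ≤ (2/L) * ((fun n => H n * r' ^ n) (n + d*M1)) := by
      intro n
      by_cases hdvd : d ∣ (n + d*M1)
      · obtain ⟨u, hu⟩ := hdvd
        have hu1 : M1 ≤ u := by
          refine Nat.le_of_mul_le_mul_left ?_ hdpos
          omega
        obtain ⟨_, h2, hbu⟩ := hhpos u hu1
        have hble : b u ≤ (2/L) * hh u := by
          rw [div_mul_eq_mul_div, le_div_iff₀ hLpos]
          nlinarith
        simp only [hu]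
        calc g (d*u) * r' ^ (d*u) ≤ ((2/L) * hh u) * r' ^ (d*u) :=
              mul_le_mul_of_nonneg_right hble (pow_nonneg hr'0.le _)
          _ = (2/L) * (H (d*u) * r' ^ (d*u)) := by rw [hHdil]; ring
      · rw [hgvan _ hdvd, zero_mul]
        have := hHnn (n + d*M1)
        positivity
    have hs1 : Summable (fun n => g (n + d*M1) * r' ^ (n + d*M1)) :=
      Summable.of_nonneg_of_le (fun n => mul_nonneg (hgnn _) (pow_nonneg hr'0.le _))
        hbound (((summable_nat_add_iff (d*M1)).2 hsm).mul_left (2/L))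
    exact (summable_nat_add_iff (d*M1)).1 hs1
  · -- ratio limit
    have h2 : Tendsto (fun m => hh (m+1) / b (m+1)) atTop (nhds L) :=
      hmain.comp (tendsto_add_atTop_nat 1)
    have h3 := h2.inv₀ hLpos.ne'
    have hcomb := hmain.mul (hBase.ratio.mul h3)
    have hval : L * (τ * L⁻¹) = τ := by
      rw [mul_comm τ, ← mul_assoc, mul_inv_cancel₀ hLpos.ne', one_mul]
    rw [hval] at hcomb
    refine Tendsto.congr' ?_ hcomb
    filter_upwards [eventually_ge_atTop M1] with m hm
    obtain ⟨hhm, _, hbm⟩ := hhpos m hm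
    obtain ⟨hhm1, _, hbm1⟩ := hhpos (m+1) (by omega)
    have heq : d*m + d = d*(m+1) := by ring
    rw [heq, show H (d*m) = hh m from hHdil m, show H (d*(m+1)) = hh (m+1) from hHdil (m+1)]
    rw [inv_div, div_mul_div_cancel₀ hbm1.ne', div_mul_div_cancel₀ hbm.ne']
  · -- convolution limit
    have hfix : ∀ u, Summable (fun k => ‖f k * cp b k u‖) :=
      fun u => habs (hBase.summable_fixed_n (w := f) (κ := fun k => k) hf0 hSr hκsum u)
    have hstepB : ∀ m, (∑ u ∈ Finset.range (m+1), hh u * hh (m - u))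
        = ∑' p : ℕ × ℕ, f p.1 * f p.2 * cp b (p.1 + p.2) m := by
      intro m
      have hsummand : ∀ u ∈ Finset.range (m+1), Summable
          (fun p : ℕ × ℕ => (f p.1 * cp b p.1 u) * (f p.2 * cp b p.2 (m - u))) := by
        intro u _
        exact Summable.mul_of_nonneg
          (hBase.summable_fixed_n (w := f) (κ := fun k => k) hf0 hSr hκsum u)
          (hBase.summable_fixed_n (w := f) (κ := fun k => k) hf0 hSr hκsum (m - u))
          (fun k => mul_nonneg (hf0 k) (cp_nonneg hBase.nn _ _))
          (fun k => mul_nonneg (hf0 k) (cp_nonneg hBase.nn _ _))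
      calc (∑ u ∈ Finset.range (m+1), hh u * hh (m - u))
          = ∑ u ∈ Finset.range (m+1),
              ∑' p : ℕ × ℕ, (f p.1 * cp b p.1 u) * (f p.2 * cp b p.2 (m-u)) :=
            Finset.sum_congr rfl (fun u _ =>
              tsum_mul_tsum_of_summable_norm (hfix u) (hfix (m-u)))
        _ = ∑' p : ℕ × ℕ, ∑ u ∈ Finset.range (m+1),
              (f p.1 * cp b p.1 u) * (f p.2 * cp b p.2 (m-u)) :=
            (Summable.tsum_finsetSum hsummand).symm
        _ = ∑' p : ℕ × ℕ, f p.1 * f p.2 * cp b (p.1 + p.2) m := by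
            refine tsum_congr (fun p => ?_)
            rw [cp_add b p.1 p.2 m, Finset.mul_sum]
            exact Finset.sum_congr rfl (fun u _ => by ring)
    have hsum2 : Summable (fun p : ℕ × ℕ => (f p.1 * f p.2) * r ^ (p.1 + p.2)) := by
      refine (Summable.mul_of_nonneg hκsum hκsum
        (fun k => mul_nonneg (hf0 k) (pow_nonneg hr0.le k))
        (fun k => mul_nonneg (hf0 k) (pow_nonneg hr0.le k))).congr (fun p => ?_)
      rw [pow_add]
      ring
    have hconv2 := hBase.comp_tendsto (w := fun p : ℕ × ℕ => f p.1 * f p.2)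
      (κ := fun p : ℕ × ℕ => p.1 + p.2) (fun p => mul_nonneg (hf0 _) (hf0 _)) hSr hsum2
    rw [hbS] at hconv2
    -- compute the limit value
    have hvs : Summable (fun k : ℕ => f k * G ^ k) :=
      Summable.of_nonneg_of_le (fun k => mul_nonneg (hf0 k) (pow_nonneg hSpos.le _))
        (fun k => mul_le_mul_of_nonneg_left (pow_le_pow_left₀ hSpos.le hrG.le k) (hf0 k)) hκsum
    have hvHval : (∑' k : ℕ, f k * G ^ k) = Hval := rfl
    have hunn : ∀ k : ℕ, 0 ≤ f k * (k:ℝ) * G ^ (k-1) :=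
      fun k => mul_nonneg (mul_nonneg (hf0 k) (Nat.cast_nonneg k)) (pow_nonneg hSpos.le _)
    have hvnn : ∀ k : ℕ, 0 ≤ f k * G ^ k :=
      fun k => mul_nonneg (hf0 k) (pow_nonneg hSpos.le _)
    have huv : Summable (fun p : ℕ × ℕ => (f p.1 * (p.1:ℝ) * G ^ (p.1-1)) * (f p.2 * G ^ p.2)) :=
      Summable.mul_of_nonneg hLsmm hvs hunn hvnn
    have hvu : Summable (fun p : ℕ × ℕ => (f p.1 * G ^ p.1) * (f p.2 * (p.2:ℝ) * G ^ (p.2-1))) :=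
      Summable.mul_of_nonneg hvs hLsmm hvnn hunn
    have hpt : ∀ p : ℕ × ℕ, f p.1 * f p.2 * ((p.1+p.2 : ℕ):ℝ) * G ^ (p.1+p.2-1)
        = (f p.1 * (p.1:ℝ) * G ^ (p.1-1)) * (f p.2 * G ^ p.2)
          + (f p.1 * G ^ p.1) * (f p.2 * (p.2:ℝ) * G ^ (p.2-1)) := by
      rintro ⟨k, l⟩
      rcases k with _ | a <;> rcases l with _ | c <;> simp only []
      · norm_num
      · push_cast
        norm_num
        try ring
      · push_cast
        norm_num
        try ring
      · have e1 : a + 1 + (c + 1) - 1 = a + 1 + c := by omega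
        have e2 : (a + 1) - 1 = a := by omega
        have e3 : (c + 1) - 1 = c := by omega
        simp only [e1, e2, e3]
        push_cast
        rw [show a + 1 + c = a + (c+1) by omega, pow_add, pow_add, pow_succ, pow_succ]
        ring
    have hL2 : (∑' p : ℕ × ℕ, f p.1 * f p.2 * ((p.1+p.2 : ℕ):ℝ) * G ^ (p.1+p.2-1))
        = 2 * (Hval * L) := by
      rw [tsum_congr hpt, Summable.tsum_add huv hvu,
        ← tsum_mul_tsum_of_summable_norm (habs hLsmm) (habs hvs),
        ← tsum_mul_tsum_of_summable_norm (habs hvs) (habs hLsmm)]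
      rw [hvHval, ← hLdef]
      ring
    have h2 := hmain.inv₀ hLpos.ne'
    have hcomb := hconv2.mul h2
    have hval2 : (∑' p : ℕ × ℕ, f p.1 * f p.2 * ((p.1+p.2 : ℕ):ℝ) * G ^ (p.1+p.2-1)) * L⁻¹
        = 2 * Hval := by
      rw [hL2, mul_assoc, mul_assoc, mul_inv_cancel₀ hLpos.ne', mul_one]
    rw [hval2] at hcomb
    rw [show (2 * ∑' n, H n * ρ ^ n) = 2 * Hval by rw [hHtsum]]
    refine Tendsto.congr' ?_ hcomb
    filter_upwards [eventually_ge_atTop M1] with m hm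
    obtain ⟨hhm, _, hbm⟩ := hhpos m hm
    have hstepA : (∑ i ∈ Finset.range (d*m+1), H i * H (d*m - i))
        = ∑ u ∈ Finset.range (m+1), hh u * hh (m - u) := by
      rw [sum_dil hd _ (fun i hi => by rw [hHvan i hi, zero_mul])]
      refine Finset.sum_congr rfl (fun u hu => ?_)
      rw [← Nat.mul_sub, hHdil, hHdil]
    calc (∑' p : ℕ × ℕ, f p.1 * f p.2 * cp b (p.1+p.2) m) / b m * (hh m / b m)⁻¹
        = (∑' p : ℕ × ℕ, f p.1 * f p.2 * cp b (p.1+p.2) m) / hh m := by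
          rw [inv_div, div_mul_div_cancel₀ hbm.ne']
      _ = (∑ i ∈ Finset.range (d*m+1), H i * H (d*m - i)) / H (d*m) := by
          rw [← hstepB m, ← hstepA, hHdil m]
  · -- the asymptotic equivalence
    rw [← hLtarget]
    refine hmain.congr (fun m => ?_)
    rw [show hh m = ∑' k, f k * cp g k (d*m) from (hHdil m).symm]
end

section
/- Let f(z) belong to the class S_1 with radius of convergence ρ, and let g₁(z), g₂(z) be power series with non-negative real coefficients. Suppose [z^n] g₁(z) / [z^n] f(z) → c₁ and [z^n] g₂(z) / [z^n] f(z) → c₂ as n → ∞, where c₁, c₂ ≥ 0. Then [z^n] (g₁(z)·g₂(z)) / [z^n] f(z) → c₁·g₂(ρ) + c₂·g₁(ρ). If additionally c₁·g₂(ρ) + c₂·g₁(ρ) > 0, then the product g₁(z)·g₂(z) belongs to the class S_1. -/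
open Filter Finset Topology


private lemma mydiv_cancel (a b c : ℝ) (hb : b ≠ 0) : a / b * (b / c) = a / c := by
  rw [div_mul_div_comm, mul_comm b c, mul_div_mul_right _ _ hb]

private lemma ratio_pow {f : ℕ → ℝ} {ρ : ℝ} {N : ℕ} (hN : ∀ n, N ≤ n → 0 < f n)
    (hratio : Tendsto (fun n => f n / f (n + 1)) atTop (nhds ρ)) (i : ℕ) :
    Tendsto (fun n => f (n - i) / f n) atTop (nhds (ρ ^ i)) := by
  induction i with
  | zero =>
    simp only [Nat.sub_zero, pow_zero]
    refine Tendsto.congr' ?_ tendsto_const_nhds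
    filter_upwards [eventually_ge_atTop N] with n hn
    rw [div_self (hN n hn).ne']
  | succ i ih =>
    have h1 : Tendsto (fun n => f (n - (i + 1)) / f (n - i)) atTop (nhds ρ) := by
      refine (hratio.comp (tendsto_sub_atTop_nat (i + 1))).congr' ?_
      filter_upwards [eventually_ge_atTop (i + 1)] with n hn
      have h2 : n - (i + 1) + 1 = n - i := by omega
      simp only [Function.comp_apply, h2]
    have h3 := h1.mul ih
    rw [show ρ * ρ ^ i = ρ ^ (i + 1) by ring] at h3
    refine h3.congr' ?_
    filter_upwards [eventually_ge_atTop (N + i + 1)] with n hn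
    exact mydiv_cancel _ _ _ (hN (n - i) (by omega)).ne'

private lemma shifted_lim {f g : ℕ → ℝ} {ρ c : ℝ} {N : ℕ} (hN : ∀ n, N ≤ n → 0 < f n)
    (hratio : Tendsto (fun n => f n / f (n + 1)) atTop (nhds ρ))
    (hr : Tendsto (fun n => g n / f n) atTop (nhds c)) (i : ℕ) :
    Tendsto (fun n => g (n - i) / f n) atTop (nhds (c * ρ ^ i)) := by
  have h1 : Tendsto (fun n => g (n - i) / f (n - i)) atTop (nhds c) :=
    hr.comp (tendsto_sub_atTop_nat i)
  refine (h1.mul (ratio_pow hN hratio i)).congr' ?_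
  filter_upwards [eventually_ge_atTop (N + i)] with n hn
  exact mydiv_cancel _ _ _ (hN (n - i) (by omega)).ne'

private lemma edge_lim {f g₁ g₂ : ℕ → ℝ} {ρ c₂ : ℝ} {N : ℕ} (hN : ∀ n, N ≤ n → 0 < f n)
    (hratio : Tendsto (fun n => f n / f (n + 1)) atTop (nhds ρ))
    (hr₂ : Tendsto (fun n => g₂ n / f n) atTop (nhds c₂)) (M : ℕ) :
    Tendsto (fun n => (∑ i ∈ range (M + 1), g₁ i * g₂ (n - i)) / f n) atTop
      (nhds (∑ i ∈ range (M + 1), g₁ i * (c₂ * ρ ^ i))) := by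
  have key : ∀ n, (∑ i ∈ range (M + 1), g₁ i * g₂ (n - i)) / f n
      = ∑ i ∈ range (M + 1), g₁ i * (g₂ (n - i) / f n) := by
    intro n; rw [sum_div]; exact Finset.sum_congr rfl fun i _ => mul_div_assoc _ _ _
  simp only [key]
  exact tendsto_finset_sum _ fun i _ => (shifted_lim hN hratio hr₂ i).const_mul _

private lemma reverse_sum (g₁ g₂ : ℕ → ℝ) {M n : ℕ} (h : M ≤ n) :
    ∑ i ∈ Finset.Ico (n - M) (n + 1), g₁ i * g₂ (n - i)
      = ∑ j ∈ range (M + 1), g₂ j * g₁ (n - j) := by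
  refine Finset.sum_nbij' (fun i => n - i) (fun j => n - j) ?_ ?_ ?_ ?_ ?_
  · intro a ha; simp only [Finset.mem_Ico] at ha; simp only [Finset.mem_range]; omega
  · intro a ha; simp only [Finset.mem_range] at ha; simp only [Finset.mem_Ico]; omega
  · intro a ha; simp only [Finset.mem_Ico] at ha; show n - (n - a) = a; omega
  · intro a ha; simp only [Finset.mem_range] at ha; show n - (n - a) = a; omega
  · intro a ha; simp only [Finset.mem_Ico] at ha
    rw [Nat.sub_sub_self (by omega : a ≤ n)]; ring

private lemma partition_sum (F : ℕ → ℝ) {M n : ℕ} (h : 2 * M + 1 ≤ n) :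
    ∑ i ∈ range (n + 1), F i
      = (∑ i ∈ range (M + 1), F i) + (∑ i ∈ Finset.Ico (M + 1) (n - M), F i)
        + ∑ i ∈ Finset.Ico (n - M) (n + 1), F i := by
  have h1 := Finset.sum_Ico_consecutive F (Nat.zero_le (M + 1)) (by omega : M + 1 ≤ n + 1)
  have h2 := Finset.sum_Ico_consecutive F (by omega : M + 1 ≤ n - M) (by omega : n - M ≤ n + 1)
  simp only [range_eq_Ico]
  linarith

private lemma summable_of_eventually_le {a b : ℕ → ℝ} (N : ℕ) (ha : ∀ n, 0 ≤ a n)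
    (h : ∀ n, N ≤ n → a n ≤ b n) (hb : Summable b) : Summable a := by
  rw [← summable_nat_add_iff N]
  exact Summable.of_nonneg_of_le (fun n => ha _) (fun n => h _ (by omega))
    ((summable_nat_add_iff N).2 hb)

private lemma main_lim (f g₁ g₂ : ℕ → ℝ) (ρ : ℝ) (hρ : 0 < ρ)
    (N : ℕ) (hN : ∀ n, N ≤ n → 0 < f n)
    (hfs : Summable (fun n => f n * ρ ^ n))
    (hratio : Tendsto (fun n => f n / f (n + 1)) atTop (nhds ρ))
    (hconv : Tendsto (fun n => (∑ i ∈ range (n + 1), f i * f (n - i)) / f n) atTop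
      (nhds (2 * ∑' n, f n * ρ ^ n)))
    (hg₁ : ∀ n, 0 ≤ g₁ n) (hg₂ : ∀ n, 0 ≤ g₂ n)
    (c₁ c₂ : ℝ) (hc₁ : 0 ≤ c₁) (hc₂ : 0 ≤ c₂)
    (hr₁ : Tendsto (fun n => g₁ n / f n) atTop (nhds c₁))
    (hr₂ : Tendsto (fun n => g₂ n / f n) atTop (nhds c₂)) :
    Summable (fun n => g₁ n * ρ ^ n) ∧ Summable (fun n => g₂ n * ρ ^ n) ∧
    Tendsto (fun n => (∑ i ∈ range (n + 1), g₁ i * g₂ (n - i)) / f n) atTop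
      (nhds (c₁ * (∑' n, g₂ n * ρ ^ n) + c₂ * (∑' n, g₁ n * ρ ^ n))) := by
  set K : ℝ := max (c₁ + 1) (c₂ + 1) with hKdef
  have hK : (0:ℝ) < K := lt_of_lt_of_le (by linarith) (le_max_left _ _)
  -- eventual bounds g ≤ K f
  have hb₁ : ∀ᶠ n in atTop, g₁ n ≤ K * f n := by
    filter_upwards [hr₁.eventually_lt_const (by linarith : c₁ < c₁ + 1),
      eventually_ge_atTop N] with n h1 h2
    have hfp := hN n h2
    have := (div_lt_iff₀ hfp).1 h1
    calc g₁ n ≤ (c₁ + 1) * f n := this.le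
      _ ≤ K * f n := mul_le_mul_of_nonneg_right (le_max_left _ _) hfp.le
  have hb₂ : ∀ᶠ n in atTop, g₂ n ≤ K * f n := by
    filter_upwards [hr₂.eventually_lt_const (by linarith : c₂ < c₂ + 1),
      eventually_ge_atTop N] with n h1 h2
    have hfp := hN n h2
    have := (div_lt_iff₀ hfp).1 h1
    calc g₂ n ≤ (c₂ + 1) * f n := this.le
      _ ≤ K * f n := mul_le_mul_of_nonneg_right (le_max_right _ _) hfp.le
  obtain ⟨N₁, hN₁⟩ := eventually_atTop.mp ((hb₁.and hb₂).and (eventually_ge_atTop N))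
  -- summability
  have Sg₁ : Summable (fun n => g₁ n * ρ ^ n) := by
    refine summable_of_eventually_le N₁
      (fun n => mul_nonneg (hg₁ n) (pow_nonneg hρ.le n)) (fun n hn => ?_) (hfs.mul_left K)
    have := (hN₁ n hn).1.1
    have hp : (0:ℝ) ≤ ρ ^ n := pow_nonneg hρ.le n
    calc g₁ n * ρ ^ n ≤ K * f n * ρ ^ n := mul_le_mul_of_nonneg_right this hp
      _ = K * (f n * ρ ^ n) := by ring
  have Sg₂ : Summable (fun n => g₂ n * ρ ^ n) := by
    refine summable_of_eventually_le N₁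
      (fun n => mul_nonneg (hg₂ n) (pow_nonneg hρ.le n)) (fun n hn => ?_) (hfs.mul_left K)
    have := (hN₁ n hn).1.2
    have hp : (0:ℝ) ≤ ρ ^ n := pow_nonneg hρ.le n
    calc g₂ n * ρ ^ n ≤ K * f n * ρ ^ n := mul_le_mul_of_nonneg_right this hp
      _ = K * (f n * ρ ^ n) := by ring
  refine ⟨Sg₁, Sg₂, ?_⟩
  set F : ℝ := ∑' n, f n * ρ ^ n with hF
  set G₁ : ℝ := ∑' n, g₁ n * ρ ^ n with hG₁
  set G₂ : ℝ := ∑' n, g₂ n * ρ ^ n with hG₂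
  set L : ℝ := c₁ * G₂ + c₂ * G₁ with hL
  -- partial sums tend to the tsum
  have hSF : Tendsto (fun M => ∑ i ∈ range (M + 1), f i * ρ ^ i) atTop (nhds F) := by
    simpa [Function.comp_def] using hfs.hasSum.tendsto_sum_nat.comp (tendsto_add_atTop_nat 1)
  have hSG₁ : Tendsto (fun M => ∑ i ∈ range (M + 1), g₁ i * ρ ^ i) atTop (nhds G₁) := by
    simpa [Function.comp_def] using Sg₁.hasSum.tendsto_sum_nat.comp (tendsto_add_atTop_nat 1)
  have hSG₂ : Tendsto (fun M => ∑ i ∈ range (M + 1), g₂ i * ρ ^ i) atTop (nhds G₂) := by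
    simpa [Function.comp_def] using Sg₂.hasSum.tendsto_sum_nat.comp (tendsto_add_atTop_nat 1)
  rw [Metric.tendsto_atTop]
  intro ε hε
  -- choose M
  have hT : Tendsto (fun M => c₁ * (∑ i ∈ range (M + 1), g₂ i * ρ ^ i)
      + c₂ * (∑ i ∈ range (M + 1), g₁ i * ρ ^ i)) atTop (nhds L) :=
    (hSG₂.const_mul c₁).add (hSG₁.const_mul c₂)
  have hEf : Tendsto (fun M => K ^ 2 * (2 * F - (∑ i ∈ range (M + 1), f i * ρ ^ i)
      - (∑ i ∈ range (M + 1), f i * ρ ^ i))) atTop (nhds 0) := by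
    have h0 : Tendsto (fun M => 2 * F - (∑ i ∈ range (M + 1), f i * ρ ^ i)
        - (∑ i ∈ range (M + 1), f i * ρ ^ i)) atTop (nhds (2 * F - F - F)) :=
      (tendsto_const_nhds.sub hSF).sub hSF
    have h1 := h0.const_mul (K ^ 2)
    have h2 : K ^ 2 * (2 * F - F - F) = 0 := by ring
    rwa [h2] at h1
  have e2 : ∀ᶠ M in atTop, |c₁ * (∑ i ∈ range (M + 1), g₂ i * ρ ^ i)
      + c₂ * (∑ i ∈ range (M + 1), g₁ i * ρ ^ i) - L| < ε / 4 := by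
    obtain ⟨N₂, h⟩ := Metric.tendsto_atTop.mp hT (ε / 4) (by positivity)
    exact eventually_atTop.2 ⟨N₂, fun n hn => by simpa [Real.dist_eq] using h n hn⟩
  have e3 : ∀ᶠ M in atTop, K ^ 2 * (2 * F - (∑ i ∈ range (M + 1), f i * ρ ^ i)
      - (∑ i ∈ range (M + 1), f i * ρ ^ i)) < ε / 8 :=
    hEf.eventually_lt_const (by positivity)
  obtain ⟨M, hM⟩ := eventually_atTop.mp ((eventually_ge_atTop N₁).and (e2.and e3))
  obtain ⟨hMN₁, hM₂, hM₃⟩ := hM M le_rfl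
  set SFM : ℝ := ∑ i ∈ range (M + 1), f i * ρ ^ i with hSFM
  -- limits in n for fixed M
  have hrf : Tendsto (fun n => f n / f n) atTop (nhds 1) := by
    refine Tendsto.congr' ?_ tendsto_const_nhds
    filter_upwards [eventually_ge_atTop N] with n hn
    rw [div_self (hN n hn).ne']
  have t₁ : Tendsto (fun n => (∑ i ∈ range (M + 1), g₁ i * g₂ (n - i)) / f n) atTop
      (nhds (c₂ * ∑ i ∈ range (M + 1), g₁ i * ρ ^ i)) := by
    have := edge_lim (g₁ := g₁) hN hratio hr₂ M
    convert this using 2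
    rw [Finset.mul_sum]
    exact Finset.sum_congr rfl fun i _ => by ring
  have t₃ : Tendsto (fun n => (∑ i ∈ Finset.Ico (n - M) (n + 1), g₁ i * g₂ (n - i)) / f n)
      atTop (nhds (c₁ * ∑ i ∈ range (M + 1), g₂ i * ρ ^ i)) := by
    have base := edge_lim (g₁ := g₂) (g₂ := g₁) hN hratio hr₁ M
    have heq : (∑ i ∈ range (M + 1), g₂ i * (c₁ * ρ ^ i))
        = c₁ * ∑ i ∈ range (M + 1), g₂ i * ρ ^ i := by
      rw [Finset.mul_sum]; exact Finset.sum_congr rfl fun i _ => by ring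
    rw [heq] at base
    refine base.congr' ?_
    filter_upwards [eventually_ge_atTop M] with n hn
    rw [reverse_sum g₁ g₂ hn]
  have t₁f : Tendsto (fun n => (∑ i ∈ range (M + 1), f i * f (n - i)) / f n) atTop
      (nhds SFM) := by
    have := edge_lim (g₁ := f) hN hratio hrf M
    simpa using this
  have t₃f : Tendsto (fun n => (∑ i ∈ Finset.Ico (n - M) (n + 1), f i * f (n - i)) / f n)
      atTop (nhds SFM) := by
    have base := edge_lim (g₁ := f) (g₂ := f) hN hratio hrf M
    have heq : (∑ i ∈ range (M + 1), f i * (1 * ρ ^ i)) = SFM := by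
      rw [hSFM]; exact Finset.sum_congr rfl fun i _ => by ring
    rw [heq] at base
    refine base.congr' ?_
    filter_upwards [eventually_ge_atTop M] with n hn
    rw [reverse_sum f f hn]
  -- middle f-sum limit
  have t₂f : Tendsto (fun n => (∑ i ∈ Finset.Ico (M + 1) (n - M), f i * f (n - i)) / f n)
      atTop (nhds (2 * F - SFM - SFM)) := by
    have hbig := (hconv.sub t₁f).sub t₃f
    refine hbig.congr' ?_
    filter_upwards [eventually_ge_atTop (2 * M + 1)] with n hn
    have hpart := partition_sum (fun i => f i * f (n - i)) hn
    simp only [hpart, add_div]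
    ring
  -- eventual estimates in n
  have ev₁ : ∀ᶠ n in atTop, |(∑ i ∈ range (M + 1), g₁ i * g₂ (n - i)) / f n
      - c₂ * ∑ i ∈ range (M + 1), g₁ i * ρ ^ i| < ε / 4 := by
    obtain ⟨N₂, h⟩ := Metric.tendsto_atTop.mp t₁ (ε / 4) (by positivity)
    exact eventually_atTop.2 ⟨N₂, fun n hn => by simpa [Real.dist_eq] using h n hn⟩
  have ev₃ : ∀ᶠ n in atTop, |(∑ i ∈ Finset.Ico (n - M) (n + 1), g₁ i * g₂ (n - i)) / f n
      - c₁ * ∑ i ∈ range (M + 1), g₂ i * ρ ^ i| < ε / 4 := by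
    obtain ⟨N₂, h⟩ := Metric.tendsto_atTop.mp t₃ (ε / 4) (by positivity)
    exact eventually_atTop.2 ⟨N₂, fun n hn => by simpa [Real.dist_eq] using h n hn⟩
  have ev₂ : ∀ᶠ n in atTop, (∑ i ∈ Finset.Ico (M + 1) (n - M), f i * f (n - i)) / f n
      < (2 * F - SFM - SFM) + ε / (8 * K ^ 2) :=
    t₂f.eventually_lt_const (lt_add_of_pos_right _ (by positivity))
  rw [eventually_atTop] at ev₁ ev₂ ev₃
  obtain ⟨n₁, h₁⟩ := ev₁
  obtain ⟨n₂, h₂⟩ := ev₂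
  obtain ⟨n₃, h₃⟩ := ev₃
  refine ⟨max (max n₁ n₂) (max n₃ (max (2 * M + 2) N₁)), fun n hn => ?_⟩
  have hn₁ : n₁ ≤ n := le_trans (le_trans (le_max_left _ _) (le_max_left _ _)) hn
  have hn₂ : n₂ ≤ n := le_trans (le_trans (le_max_right _ _) (le_max_left _ _)) hn
  have hn₃ : n₃ ≤ n := le_trans (le_trans (le_max_left _ _) (le_max_right _ _)) hn
  have hn₄ : 2 * M + 2 ≤ n :=
    le_trans (le_trans (le_trans (le_max_left _ _) (le_max_right _ _)) (le_max_right _ _)) hn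
  have hn₅ : N₁ ≤ n :=
    le_trans (le_trans (le_trans (le_max_right _ _) (le_max_right _ _)) (le_max_right _ _)) hn
  have hfp : 0 < f n := hN n (hN₁ n hn₅).2
  -- middle bound
  set S₁ : ℝ := ∑ i ∈ range (M + 1), g₁ i * g₂ (n - i) with hS₁
  set S₂ : ℝ := ∑ i ∈ Finset.Ico (M + 1) (n - M), g₁ i * g₂ (n - i) with hS₂
  set S₃ : ℝ := ∑ i ∈ Finset.Ico (n - M) (n + 1), g₁ i * g₂ (n - i) with hS₃
  set Sf₂ : ℝ := ∑ i ∈ Finset.Ico (M + 1) (n - M), f i * f (n - i) with hSf₂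
  have hsplit : (∑ i ∈ range (n + 1), g₁ i * g₂ (n - i)) = S₁ + S₂ + S₃ :=
    partition_sum (fun i => g₁ i * g₂ (n - i)) (by omega)
  have hS₂nn : 0 ≤ S₂ / f n :=
    div_nonneg (Finset.sum_nonneg fun i _ => mul_nonneg (hg₁ i) (hg₂ _)) hfp.le
  have hS₂le : S₂ ≤ K ^ 2 * Sf₂ := by
    rw [hS₂, hSf₂, Finset.mul_sum]
    refine Finset.sum_le_sum fun i hi => ?_
    simp only [Finset.mem_Ico] at hi
    have hi₁ : N₁ ≤ i := by omega
    have hi₂ : N₁ ≤ n - i := by omega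
    have b₁ := (hN₁ i hi₁).1.1
    have b₂ := (hN₁ (n - i) hi₂).1.2
    have hfi : 0 ≤ f i := (hN i (hN₁ i hi₁).2).le
    have hfni : 0 ≤ f (n - i) := (hN (n - i) (hN₁ (n - i) hi₂).2).le
    calc g₁ i * g₂ (n - i) ≤ (K * f i) * (K * f (n - i)) :=
          mul_le_mul b₁ b₂ (hg₂ _) (by positivity)
      _ = K ^ 2 * (f i * f (n - i)) := by ring
  have hmid : S₂ / f n < ε / 4 := by
    have h5 : S₂ / f n ≤ K ^ 2 * (Sf₂ / f n) := by
      rw [← mul_div_assoc]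
      gcongr
    have h6 : Sf₂ / f n < (2 * F - SFM - SFM) + ε / (8 * K ^ 2) := h₂ n hn₂
    have h7 : K ^ 2 * (Sf₂ / f n) < K ^ 2 * ((2 * F - SFM - SFM) + ε / (8 * K ^ 2)) :=
      mul_lt_mul_of_pos_left h6 (by positivity)
    have h8 : K ^ 2 * ((2 * F - SFM - SFM) + ε / (8 * K ^ 2))
        = K ^ 2 * (2 * F - SFM - SFM) + ε / 8 := by
      field_simp
    linarith
  have e₁ := h₁ n hn₁
  have e₃ := h₃ n hn₃
  rw [Real.dist_eq, hsplit, add_div, add_div]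
  set P₁ : ℝ := ∑ i ∈ range (M + 1), g₁ i * ρ ^ i with hP₁
  set P₂ : ℝ := ∑ i ∈ range (M + 1), g₂ i * ρ ^ i with hP₂
  have hchain : |S₁ / f n + S₂ / f n + S₃ / f n - L|
      ≤ |S₁ / f n - c₂ * P₁| + (|S₂ / f n| + (|S₃ / f n - c₁ * P₂|
        + |c₁ * P₂ + c₂ * P₁ - L|)) := by
    have h9 : S₁ / f n + S₂ / f n + S₃ / f n - L
        = (S₁ / f n - c₂ * P₁) + (S₂ / f n + ((S₃ / f n - c₁ * P₂)
          + (c₁ * P₂ + c₂ * P₁ - L))) := by ring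
    rw [h9]
    refine (abs_add_le _ _).trans (add_le_add_right ?_ _)
    refine (abs_add_le _ _).trans (add_le_add_right ?_ _)
    exact abs_add_le _ _
  rw [abs_of_nonneg hS₂nn] at hchain
  linarith


/-- If `f ∈ 𝒮_1` with radius of convergence `ρ`, and `g₁, g₂` have non-negative coefficients
with `[z^n]gᵢ / [z^n]f → cᵢ ≥ 0`, then `[z^n](g₁ g₂) / [z^n]f → c₁ g₂(ρ) + c₂ g₁(ρ)`; if
moreover `c₁ g₂(ρ) + c₂ g₁(ρ) > 0`, then `g₁ g₂ ∈ 𝒮_1`. -/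
theorem subexp_product (f g₁ g₂ : ℕ → ℝ) (ρ : ℝ)
    (hf : SubexpClass 1 f ρ)
    (hg₁ : ∀ n, 0 ≤ g₁ n) (hg₂ : ∀ n, 0 ≤ g₂ n)
    (c₁ c₂ : ℝ) (hc₁ : 0 ≤ c₁) (hc₂ : 0 ≤ c₂)
    (hr₁ : Filter.Tendsto (fun n => g₁ n / f n) Filter.atTop (nhds c₁))
    (hr₂ : Filter.Tendsto (fun n => g₂ n / f n) Filter.atTop (nhds c₂)) :
    Filter.Tendsto
      (fun n => (∑ i ∈ Finset.range (n + 1), g₁ i * g₂ (n - i)) / f n)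
      Filter.atTop
      (nhds (c₁ * (∑' n, g₂ n * ρ ^ n) + c₂ * (∑' n, g₁ n * ρ ^ n))) ∧
    (0 < c₁ * (∑' n, g₂ n * ρ ^ n) + c₂ * (∑' n, g₁ n * ρ ^ n) →
      SubexpClass 1 (fun n => ∑ i ∈ Finset.range (n + 1), g₁ i * g₂ (n - i)) ρ) := by
  obtain ⟨-, hρ, hfnn, -, ⟨N, hNpos⟩, hfs, hns, hratio, hconv⟩ := hf
  simp only [one_mul, pow_one] at hratio hconv
  have hNpos' : ∀ n, N ≤ n → 0 < f n := fun n hn => hNpos n hn (one_dvd n)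
  obtain ⟨Sg₁, Sg₂, hmain⟩ :=
    main_lim f g₁ g₂ ρ hρ N hNpos' hfs hratio hconv hg₁ hg₂ c₁ c₂ hc₁ hc₂ hr₁ hr₂
  refine ⟨hmain, fun hL => ?_⟩
  set G₁ : ℝ := ∑' n, g₁ n * ρ ^ n with hG₁def
  set G₂ : ℝ := ∑' n, g₂ n * ρ ^ n with hG₂def
  set L : ℝ := c₁ * G₂ + c₂ * G₁ with hLdef
  set h : ℕ → ℝ := fun n => ∑ i ∈ Finset.range (n + 1), g₁ i * g₂ (n - i) with hhdef
  have hhnn : ∀ n, 0 ≤ h n := fun n =>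
    Finset.sum_nonneg fun i _ => mul_nonneg (hg₁ i) (hg₂ _)
  have hhf : Tendsto (fun n => h n / f n) atTop (nhds L) := hmain
  have hLne : L ≠ 0 := hL.ne'
  -- eventual positivity
  have hevpos : ∀ᶠ n in atTop, 0 < h n := by
    filter_upwards [hhf.eventually_const_lt hL, eventually_ge_atTop N] with n h1 h2
    have hfp := hNpos' n h2
    have h3 := mul_pos h1 hfp
    rwa [div_mul_cancel₀ _ hfp.ne'] at h3
  obtain ⟨N', hN'⟩ := eventually_atTop.mp hevpos
  -- summability of the product series at ρ
  have Sn₁ : Summable (fun n => ‖g₁ n * ρ ^ n‖) := by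
    have he : (fun n => ‖g₁ n * ρ ^ n‖) = fun n => g₁ n * ρ ^ n := funext fun n => by
      rw [Real.norm_eq_abs, abs_of_nonneg (mul_nonneg (hg₁ n) (pow_nonneg hρ.le n))]
    rw [he]; exact Sg₁
  have Sn₂ : Summable (fun n => ‖g₂ n * ρ ^ n‖) := by
    have he : (fun n => ‖g₂ n * ρ ^ n‖) = fun n => g₂ n * ρ ^ n := funext fun n => by
      rw [Real.norm_eq_abs, abs_of_nonneg (mul_nonneg (hg₂ n) (pow_nonneg hρ.le n))]
    rw [he]; exact Sg₂
  have hcp : Summable (fun n => ∑ k ∈ Finset.range (n + 1),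
      (g₁ k * ρ ^ k) * (g₂ (n - k) * ρ ^ (n - k))) :=
    (summable_norm_sum_mul_range_of_summable_norm Sn₁ Sn₂).of_norm
  have hSh : Summable (fun n => h n * ρ ^ n) := by
    refine hcp.congr fun n => ?_
    simp only [hhdef, Finset.sum_mul]
    refine Finset.sum_congr rfl fun k hk => ?_
    rw [Finset.mem_range] at hk
    have hpow : ρ ^ k * ρ ^ (n - k) = ρ ^ n := by rw [← pow_add]; congr 1; omega
    rw [show (g₁ k * ρ ^ k) * (g₂ (n - k) * ρ ^ (n - k))
        = g₁ k * g₂ (n - k) * (ρ ^ k * ρ ^ (n - k)) from by ring, hpow]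
  -- non-summability beyond ρ
  have hnsh : ∀ r : ℝ, ρ < r → ¬ Summable (fun n => h n * r ^ n) := by
    intro r hr hsum
    have hermb : ∀ᶠ n in atTop, L / 2 < h n / f n :=
      hhf.eventually_const_lt (by linarith)
    obtain ⟨N₂, hN₂⟩ := eventually_atTop.mp (hermb.and (eventually_ge_atTop N))
    refine hns r hr ?_
    refine summable_of_eventually_le N₂
      (fun n => mul_nonneg (hfnn n) (pow_nonneg (by linarith) n))
      (fun n hn => ?_) (hsum.mul_left (2 / L))
    obtain ⟨hlt, hge⟩ := hN₂ n hn
    have hfp := hNpos' n hge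
    have h1 : L / 2 * f n < h n := (lt_div_iff₀ hfp).mp hlt
    have h2 : f n ≤ 2 / L * h n := by
      rw [show 2 / L * h n = 2 * h n / L from by ring, le_div_iff₀ hL]
      nlinarith
    calc f n * r ^ n ≤ (2 / L * h n) * r ^ n :=
          mul_le_mul_of_nonneg_right h2 (pow_nonneg (by linarith) n)
      _ = 2 / L * (h n * r ^ n) := by ring
  -- ratio condition
  have linv : Tendsto (fun n => f (n + 1) / h (n + 1)) atTop (nhds L⁻¹) := by
    have h1 : Tendsto (fun n => h (n + 1) / f (n + 1)) atTop (nhds L) :=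
      hhf.comp (tendsto_add_atTop_nat 1)
    exact (h1.inv₀ hLne).congr fun n => inv_div _ _
  have hratio_h : Tendsto (fun n => h n / h (n + 1)) atTop (nhds ρ) := by
    have hp := (hhf.mul hratio).mul linv
    rw [show L * ρ * L⁻¹ = ρ from by field_simp] at hp
    refine hp.congr' ?_
    filter_upwards [eventually_ge_atTop (N + 1), eventually_ge_atTop (N' + 1)] with n h1 h2
    have hf1 : f n ≠ 0 := (hNpos' n (by omega)).ne'
    have hf2 : f (n + 1) ≠ 0 := (hNpos' (n + 1) (by omega)).ne'
    have hh2 : h (n + 1) ≠ 0 := (hN' (n + 1) (by omega)).ne'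
    field_simp
  -- convolution condition
  obtain ⟨-, -, hmain2⟩ :=
    main_lim f h h ρ hρ N hNpos' hfs hratio hconv hhnn hhnn L L hL.le hL.le hhf hhf
  have finv : Tendsto (fun n => f n / h n) atTop (nhds L⁻¹) :=
    (hhf.inv₀ hLne).congr fun n => inv_div _ _
  have hconv_h : Tendsto (fun n => (∑ i ∈ Finset.range (n + 1), h i * h (n - i)) / h n)
      atTop (nhds (2 * ∑' n, h n * ρ ^ n)) := by
    have hp := hmain2.mul finv
    rw [show (L * (∑' n, h n * ρ ^ n) + L * (∑' n, h n * ρ ^ n)) * L⁻¹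
        = 2 * ∑' n, h n * ρ ^ n from by field_simp; ring] at hp
    refine hp.congr' ?_
    filter_upwards [eventually_ge_atTop N] with n hn
    exact mydiv_cancel _ _ _ (hNpos' n hn).ne'
  refine ⟨le_refl 1, hρ, hhnn, fun n hn => absurd (one_dvd n) hn,
    ⟨N', fun n hn _ => hN' n hn⟩, hSh, hnsh, ?_, ?_⟩
  · simpa [one_mul, pow_one] using hratio_h
  · simpa [one_mul] using hconv_h
end

section
/- Let d ≥ 1 be an integer and let g be an ℕ₀-valued random variable with subexponential density on the lattice dℕ. Let (f, h) be a random vector of non-negative integers with finite exponential moments, such that h is almost surely divisible by d, and let (g_i)_{i≥1} be independent copies of g, independent of (f, h). Then there exist a summable sequence (C_k)_{k≥0} of non-negative reals and an integer n₀ such that for every k ≥ 0 and every n ≥ n₀ with d | n, ℙ(Σ_{i=1}^k g_i + h = n and f = k) ≤ C_k·ℙ(g = n). -/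
open MeasureTheory ProbabilityTheory Filter

section Aux
variable {Ω : Type*} [MeasurableSpace Ω] (μ : Measure Ω) [IsProbabilityMeasure μ]

lemma aux_fiber_tsum {α : Type*} [MeasurableSpace α] [MeasurableSingletonClass α] [Countable α]
    {X : Ω → α} (hX : Measurable X) :
    ∑' n, μ {ω | X ω = n} = 1 := by
  have h1 : ⋃ n, {ω | X ω = n} = Set.univ := by
    ext ω; simp
  have h2 : Pairwise (Function.onFun Disjoint fun n : α => {ω | X ω = n}) := by
    intro i j hij
    simp only [Function.onFun, Set.disjoint_left]
    rintro ω (hi : X ω = i) (hj : X ω = j)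
    exact hij (hi ▸ hj ▸ rfl)
  rw [← measure_univ (μ := μ), ← h1, measure_iUnion h2
    (fun n => hX (measurableSet_singleton n))]

lemma aux_fiber_summable {α : Type*} [MeasurableSpace α] [MeasurableSingletonClass α] [Countable α]
    {X : Ω → α} (hX : Measurable X) :
    Summable (fun n => (μ {ω | X ω = n}).toReal) := by
  refine ENNReal.summable_toReal ?_
  rw [aux_fiber_tsum μ hX]; exact ENNReal.one_ne_top

lemma aux_fiber_tsum_real {α : Type*} [MeasurableSpace α] [MeasurableSingletonClass α] [Countable α]
    {X : Ω → α} (hX : Measurable X) :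
    ∑' n, (μ {ω | X ω = n}).toReal = 1 := by
  rw [← ENNReal.tsum_toReal_eq (fun n => measure_ne_top μ _), aux_fiber_tsum μ hX,
    ENNReal.toReal_one]

lemma aux_fiber_sum_le {α : Type*} [MeasurableSpace α] [MeasurableSingletonClass α] [Countable α]
    {X : Ω → α} (hX : Measurable X) (F : Finset α) :
    ∑ n ∈ F, (μ {ω | X ω = n}).toReal ≤ 1 := by
  rw [← aux_fiber_tsum_real μ hX]
  exact Summable.sum_le_tsum F (fun n _ => ENNReal.toReal_nonneg) (aux_fiber_summable μ hX)

end Aux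

section Conv
variable {Ω : Type*} [MeasurableSpace Ω] (μ : Measure Ω) [IsProbabilityMeasure μ]

/-- decomposition of a sum event for two independent ℕ-valued rvs -/
lemma aux_indep_sum_event {X Y : Ω → ℕ} (hX : Measurable X) (hY : Measurable Y)
    (hind : IndepFun X Y μ) (n : ℕ) :
    (μ {ω | X ω + Y ω = n}).toReal
      = ∑ j ∈ Finset.range (n+1), (μ {ω | X ω = j}).toReal * (μ {ω | Y ω = n - j}).toReal := by
  have hset : {ω | X ω + Y ω = n}
      = ⋃ j ∈ Finset.range (n+1), ({ω | X ω = j} ∩ {ω | Y ω = n - j}) := by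
    ext ω
    simp only [Set.mem_setOf_eq, Set.mem_iUnion, Finset.mem_range, Set.mem_inter_iff]
    constructor
    · intro hn
      exact ⟨X ω, by omega, rfl, by omega⟩
    · rintro ⟨j, hj, h1, h2⟩
      omega
  have hdisj : Set.PairwiseDisjoint ↑(Finset.range (n+1))
      (fun j => ({ω | X ω = j} ∩ {ω | Y ω = n - j})) := by
    intro i _ j _ hij
    simp only [Function.onFun, Set.disjoint_left]
    rintro ω ⟨(h1 : X ω = i), -⟩ ⟨(h2 : X ω = j), -⟩
    exact hij (h1 ▸ h2 ▸ rfl)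
  have hmeas : ∀ j ∈ Finset.range (n+1),
      MeasurableSet ({ω | X ω = j} ∩ {ω | Y ω = n - j}) :=
    fun j _ => (hX (measurableSet_singleton j)).inter (hY (measurableSet_singleton (n - j)))
  rw [hset, measure_biUnion_finset hdisj hmeas,
    ENNReal.toReal_sum (fun j _ => measure_ne_top μ _)]
  refine Finset.sum_congr rfl (fun j _ => ?_)
  have := hind.measure_inter_preimage_eq_mul (s := {j}) (t := {n - j})
    (measurableSet_singleton j) (measurableSet_singleton (n - j))
  have e1 : X ⁻¹' {j} = {ω | X ω = j} := rfl
  have e2 : Y ⁻¹' {n - j} = {ω | Y ω = n - j} := rfl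
  rw [e1, e2] at this
  rw [this, ENNReal.toReal_mul]

end Conv

section FH
variable {Ω : Type*} [MeasurableSpace Ω] (μ : Measure Ω) [IsProbabilityMeasure μ]

lemma aux_fh_sum_event {f h G : Ω → ℕ} (hf : Measurable f) (hh : Measurable h)
    (hG : Measurable G)
    (hind : IndepFun (fun ω => (f ω, h ω)) G μ) (k n : ℕ) :
    (μ {ω | G ω + h ω = n ∧ f ω = k}).toReal
      = ∑ m ∈ Finset.range (n+1),
          (μ {ω | f ω = k ∧ h ω = m}).toReal * (μ {ω | G ω = n - m}).toReal := by
  have hset : {ω | G ω + h ω = n ∧ f ω = k}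
      = ⋃ m ∈ Finset.range (n+1), ({ω | f ω = k ∧ h ω = m} ∩ {ω | G ω = n - m}) := by
    ext ω
    simp only [Set.mem_setOf_eq, Set.mem_iUnion, Finset.mem_range, Set.mem_inter_iff]
    constructor
    · rintro ⟨hn, hk⟩
      exact ⟨h ω, by omega, ⟨hk, rfl⟩, by omega⟩
    · rintro ⟨m, hm, ⟨h1, h2⟩, h3⟩
      exact ⟨by omega, h1⟩
  have hdisj : Set.PairwiseDisjoint ↑(Finset.range (n+1))
      (fun m => ({ω | f ω = k ∧ h ω = m} ∩ {ω | G ω = n - m})) := by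
    intro i _ j _ hij
    simp only [Function.onFun, Set.disjoint_left]
    rintro ω ⟨⟨-, (h1 : h ω = i)⟩, -⟩ ⟨⟨-, (h2 : h ω = j)⟩, -⟩
    exact hij (h1 ▸ h2 ▸ rfl)
  have hpre : ∀ m : ℕ, {ω | f ω = k ∧ h ω = m} = (fun ω => (f ω, h ω)) ⁻¹' {(k, m)} := by
    intro m
    ext ω
    simp [Prod.ext_iff]
  have hmeas : ∀ m ∈ Finset.range (n+1),
      MeasurableSet ({ω | f ω = k ∧ h ω = m} ∩ {ω | G ω = n - m}) := by
    intro m _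
    refine MeasurableSet.inter ?_ (hG (measurableSet_singleton (n - m)))
    rw [hpre m]
    exact (hf.prodMk hh) (measurableSet_singleton _)
  rw [hset, measure_biUnion_finset hdisj hmeas,
    ENNReal.toReal_sum (fun m _ => measure_ne_top μ _)]
  refine Finset.sum_congr rfl (fun m _ => ?_)
  have := hind.measure_inter_preimage_eq_mul (s := {(k, m)}) (t := {n - m})
    (measurableSet_singleton _) (measurableSet_singleton (n - m))
  have e2 : G ⁻¹' {n - m} = {ω | G ω = n - m} := rfl
  rw [e2, ← hpre m] at this
  rw [this, ENNReal.toReal_mul]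

end FH

section Exp
variable {Ω : Type*} [MeasurableSpace Ω] (μ : Measure Ω) [IsProbabilityMeasure μ]

lemma aux_exp_moment {f h : Ω → ℕ} (hf : Measurable f) (hh : Measurable h)
    {δ : ℝ} (hδ : 0 < δ) (hint : Integrable (fun ω => (1+δ)^(f ω + h ω)) μ) :
    Summable (fun km : ℕ × ℕ =>
      (1+δ)^(km.1+km.2) * (μ {ω | f ω = km.1 ∧ h ω = km.2}).toReal) := by
  have h1δ : (0:ℝ) < 1 + δ := by linarith
  have hnn : ∀ km : ℕ × ℕ,
      0 ≤ (1+δ)^(km.1+km.2) * (μ {ω | f ω = km.1 ∧ h ω = km.2}).toReal :=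
    fun km => mul_nonneg (pow_nonneg h1δ.le _) ENNReal.toReal_nonneg
  refine summable_of_sum_le (c := ∫ ω, (1+δ)^(f ω + h ω) ∂μ) hnn (fun F => ?_)
  set A : ℕ × ℕ → Set Ω := fun km => {ω | f ω = km.1 ∧ h ω = km.2} with hA
  have hpre : ∀ km : ℕ × ℕ, A km = (fun ω => (f ω, h ω)) ⁻¹' {km} := by
    intro km; ext ω; simp [hA, Prod.ext_iff]
  have hAmeas : ∀ km : ℕ × ℕ, MeasurableSet (A km) := by
    intro km; rw [hpre km]; exact (hf.prodMk hh) (measurableSet_singleton _)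
  have hterm : ∀ km : ℕ × ℕ,
      (1+δ)^(km.1+km.2) * (μ (A km)).toReal
        = ∫ ω in A km, (1+δ)^(f ω + h ω) ∂μ := by
    intro km
    have : ∀ ω ∈ A km, (1+δ)^(f ω + h ω) = (1+δ)^(km.1+km.2) := by
      rintro ω ⟨h1, h2⟩; rw [h1, h2]
    rw [setIntegral_congr_fun (hAmeas km) this, setIntegral_const, smul_eq_mul, mul_comm, measureReal_def]
  calc ∑ km ∈ F, (1+δ)^(km.1+km.2) * (μ (A km)).toReal
      = ∑ km ∈ F, ∫ ω in A km, (1+δ)^(f ω + h ω) ∂μ :=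
        Finset.sum_congr rfl (fun km _ => hterm km)
    _ = ∫ ω in ⋃ km ∈ F, A km, (1+δ)^(f ω + h ω) ∂μ := by
        refine (integral_biUnion_finset F (fun km _ => hAmeas km) ?_
          (fun km _ => hint.integrableOn)).symm
        intro i _ j _ hij
        simp only [Function.onFun, Set.disjoint_left, hA]
        rintro ω ⟨h1, h2⟩ ⟨h3, h4⟩
        exact hij (Prod.ext (h1 ▸ h3 ▸ rfl) (h2 ▸ h4 ▸ rfl))
    _ ≤ ∫ ω, (1+δ)^(f ω + h ω) ∂μ := by
        refine setIntegral_le_integral hint ?_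
        filter_upwards with ω
        exact pow_nonneg h1δ.le _

end Exp

section PB
variable {d : ℕ} {p : ℕ → ℝ}

lemma aux_ratio_step (hd : 1 ≤ d) {N : ℕ} (hpos : ∀ n, N ≤ n → d ∣ n → 0 < p n)
    (hratio : Tendsto (fun m => p (d*m) / p (d*m+d)) atTop (nhds 1))
    {η : ℝ} (hη : 0 < η) :
    ∃ M : ℕ, ∀ m, M ≤ m →
      0 < p (d*m) ∧ p (d*m) ≤ (1+η) * p (d*(m+1)) ∧ p (d*(m+1)) ≤ (1+η) * p (d*m) := by
  have hη1 : (0:ℝ) < 1 + η := by linarith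
  have hη' : 0 < η / (1+η) := div_pos hη hη1
  obtain ⟨M₀, hM₀⟩ := (Metric.tendsto_atTop.mp hratio) (η/(1+η)) hη'
  refine ⟨max M₀ N, fun m hm => ?_⟩
  have hm₀ : M₀ ≤ m := le_trans (le_max_left _ _) hm
  have hmN : N ≤ m := le_trans (le_max_right _ _) hm
  have hmdN : N ≤ d * m := le_trans hmN (Nat.le_mul_of_pos_left m (by omega))
  have hpos1 : 0 < p (d*m) := hpos _ hmdN ⟨m, rfl⟩
  have hpos2 : 0 < p (d*m+d) := hpos _ (by omega) ⟨m+1, by ring⟩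
  have hdist := hM₀ m hm₀
  rw [Real.dist_eq, abs_lt] at hdist
  have e : d*(m+1) = d*m+d := by ring
  rw [e]
  refine ⟨hpos1, ?_, ?_⟩
  · have h1 : p (d*m) / p (d*m+d) < 1 + η/(1+η) := by linarith [hdist.2]
    rw [div_lt_iff₀ hpos2] at h1
    have hle : η/(1+η) ≤ η := by rw [div_le_iff₀ hη1]; nlinarith
    nlinarith [mul_le_mul_of_nonneg_right hle hpos2.le]
  · have h2 : 1 - η/(1+η) < p (d*m) / p (d*m+d) := by linarith [hdist.1]
    rw [lt_div_iff₀ hpos2] at h2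
    have key : (1 - η/(1+η)) * (1+η) = 1 := by field_simp; ring
    nlinarith

lemma aux_chain {M : ℕ} {c : ℝ} (hc : 1 ≤ c)
    (hstep : ∀ m, M ≤ m →
      0 < p (d*m) ∧ p (d*m) ≤ c * p (d*(m+1)) ∧ p (d*(m+1)) ≤ c * p (d*m)) :
    ∀ t m, M ≤ m → p (d*m) ≤ c^t * p (d*(m+t)) ∧ p (d*(m+t)) ≤ c^t * p (d*m) := by
  have hc0 : (0:ℝ) ≤ c := by linarith
  intro t
  induction t with
  | zero => intro m hm; simp
  | succ t ih =>
    intro m hm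
    obtain ⟨ih1, ih2⟩ := ih m hm
    obtain ⟨-, hs1, hs2⟩ := hstep (m+t) (by omega)
    have e : m + (t+1) = (m+t) + 1 := by ring
    constructor
    · calc p (d*m) ≤ c^t * p (d*(m+t)) := ih1
        _ ≤ c^t * (c * p (d*((m+t)+1))) :=
          mul_le_mul_of_nonneg_left hs1 (pow_nonneg hc0 t)
        _ = c^(t+1) * p (d*(m+(t+1))) := by rw [e]; ring
    · calc p (d*(m+(t+1))) = p (d*((m+t)+1)) := by rw [e]
        _ ≤ c * p (d*(m+t)) := hs2
        _ ≤ c * (c^t * p (d*m)) := mul_le_mul_of_nonneg_left ih2 hc0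
        _ = c^(t+1) * p (d*m) := by ring

lemma aux_conv_bound (hd : 1 ≤ d) {N : ℕ} (hpos : ∀ n, N ≤ n → d ∣ n → 0 < p n)
    (hconv : Tendsto (fun m => (∑ i ∈ Finset.range (d*m+1), p i * p (d*m - i)) / p (d*m))
      atTop (nhds 2)) {η : ℝ} (hη : 0 < η) :
    ∃ M₂ : ℕ, ∀ m, M₂ ≤ m →
      ∑ i ∈ Finset.range (d*m+1), p i * p (d*m - i) ≤ (2+η) * p (d*m) := by
  obtain ⟨M₀, hM₀⟩ := (Metric.tendsto_atTop.mp hconv) η hη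
  refine ⟨max M₀ N, fun m hm => ?_⟩
  have hpos1 : 0 < p (d*m) := by
    refine hpos _ (le_trans (le_trans (le_max_right _ _) hm)
      (Nat.le_mul_of_pos_left m (by omega))) ⟨m, rfl⟩
  have hdist := hM₀ m (le_trans (le_max_left _ _) hm)
  rw [Real.dist_eq, abs_lt] at hdist
  have h1 : (∑ i ∈ Finset.range (d*m+1), p i * p (d*m - i)) / p (d*m) < 2 + η := by
    linarith [hdist.2]
  rw [div_lt_iff₀ hpos1] at h1
  linarith

lemma aux_tail (hpnn : ∀ n, 0 ≤ p n) (hsum : HasSum p 1) (hd : 1 ≤ d) {η : ℝ} (hη : 0 < η) :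
    ∃ m₁ : ℕ, 1 ≤ m₁ ∧ 1 - η ≤ ∑ i ∈ Finset.range (d*m₁), p i := by
  have := hsum.tendsto_sum_nat
  obtain ⟨n', hn'⟩ := (Metric.tendsto_atTop.mp this) η hη
  have h1 := hn' n' le_rfl
  rw [Real.dist_eq, abs_lt] at h1
  refine ⟨max n' 1, le_max_right _ _, ?_⟩
  have hsub : Finset.range n' ⊆ Finset.range (d * max n' 1) := by
    apply Finset.range_subset_range.mpr
    calc n' ≤ max n' 1 := le_max_left _ _
      _ ≤ d * max n' 1 := Nat.le_mul_of_pos_left _ (by omega)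
  calc (1:ℝ) - η ≤ ∑ i ∈ Finset.range n', p i := by linarith [h1.1]
    _ ≤ ∑ i ∈ Finset.range (d * max n' 1), p i :=
      Finset.sum_le_sum_of_subset_of_nonneg hsub (fun i _ _ => hpnn i)

end PB

lemma aux_pow_two (m : ℕ) {x : ℝ} (hx : 0 ≤ x) (hx1 : x ≤ 1) :
    (1+x)^m ≤ 1 + ((2:ℝ)^m - 1)*x := by
  induction m with
  | zero => simp
  | succ m ih =>
    have h2 : (1:ℝ) ≤ 2^m := one_le_pow₀ (by norm_num)
    calc (1+x)^(m+1) = (1+x)^m * (1+x) := by ring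
      _ ≤ (1 + ((2:ℝ)^m - 1)*x) * (1+x) := by
          refine mul_le_mul_of_nonneg_right ih (by linarith)
      _ ≤ 1 + ((2:ℝ)^(m+1) - 1)*x := by
          have e : (2:ℝ)^(m+1) = 2 * 2^m := by ring
          nlinarith [mul_nonneg (mul_nonneg (sub_nonneg.mpr h2) hx) (sub_nonneg.mpr hx1)]

set_option maxHeartbeats 1600000 in
lemma aux_kesten {d : ℕ} {p : ℕ → ℝ} (hd : 1 ≤ d)
    (hpnn : ∀ n, 0 ≤ p n) (hpz : ∀ n, ¬ d ∣ n → p n = 0)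
    {N : ℕ} (hpos : ∀ n, N ≤ n → d ∣ n → 0 < p n)
    (hsum : HasSum p 1)
    (hratio : Tendsto (fun m => p (d*m) / p (d*m+d)) atTop (nhds 1))
    (hconv : Tendsto (fun m => (∑ i ∈ Finset.range (d*m+1), p i * p (d*m - i)) / p (d*m))
      atTop (nhds 2))
    (P : ℕ → ℕ → ℝ)
    (hPnn : ∀ k n, 0 ≤ P k n)
    (hP1 : ∀ k (F : Finset ℕ), ∑ i ∈ F, P k i ≤ 1)
    (hP0 : ∀ n, n ≠ 0 → P 0 n = 0)
    (hPrec : ∀ k n, P (k+1) n = ∑ j ∈ Finset.range (n+1), p j * P k (n - j))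
    {ε : ℝ} (hε : 0 < ε) :
    ∃ K : ℝ, 0 ≤ K ∧ ∃ n₂ : ℕ, 1 ≤ n₂ ∧
      ∀ k n, n₂ ≤ n → d ∣ n → P k n ≤ K * (1+ε)^k * p n := by
  have hPle1 : ∀ k n, P k n ≤ 1 := by
    intro k n
    have := hP1 k {n}
    simpa using this
  -- constants
  obtain ⟨η, hηdef⟩ : ∃ x : ℝ, x = min (ε/4) 1 := ⟨_, rfl⟩
  have hη : 0 < η := by rw [hηdef]; exact lt_min (by linarith) one_pos
  have hη1 : η ≤ 1 := by rw [hηdef]; exact min_le_right _ _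
  have hηε : 3*η < ε := by
    have h4 : η ≤ ε/4 := by rw [hηdef]; exact min_le_left _ _
    linarith
  obtain ⟨m₁, hm₁1, hm₁⟩ := aux_tail hpnn hsum hd hη
  obtain ⟨η'', hη''def⟩ : ∃ x : ℝ, x = min η (η / 2^m₁) := ⟨_, rfl⟩
  have hη''pos : 0 < η'' := by
    rw [hη''def]; exact lt_min hη (div_pos hη (by positivity))
  have hη''η : η'' ≤ η := by rw [hη''def]; exact min_le_left _ _
  have hwin : ∀ s : ℕ, s ≤ m₁ → (1+η'')^s ≤ 1+η := by
    intro s hs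
    have h2m : (1:ℝ) ≤ 2^m₁ := one_le_pow₀ (by norm_num)
    calc (1+η'')^s ≤ (1+η'')^m₁ := pow_le_pow_right₀ (by linarith) hs
      _ ≤ 1 + ((2:ℝ)^m₁ - 1)*η'' := aux_pow_two m₁ hη''pos.le (by linarith)
      _ ≤ 1 + η := by
          have h1 : η'' ≤ η / 2^m₁ := by rw [hη''def]; exact min_le_right _ _
          have h2 : ((2:ℝ)^m₁ - 1)*η'' ≤ 2^m₁ * (η / 2^m₁) :=
            mul_le_mul (by linarith) h1 hη''pos.le (by positivity)
          have h3 : (2:ℝ)^m₁ * (η / 2^m₁) = η := by field_simp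
          linarith
  obtain ⟨M, hM⟩ := aux_ratio_step hd hpos hratio hη''pos
  obtain ⟨M₂, hM₂⟩ := aux_conv_bound hd hpos hconv hη
  have hchain := aux_chain (by linarith : (1:ℝ) ≤ 1+η'') hM
  obtain ⟨m₂, hm₂def⟩ : ∃ x : ℕ, x = max (max M M₂) (max m₁ (N+1)) := ⟨_, rfl⟩
  have hm₂M : M ≤ m₂ := by rw [hm₂def]; exact le_trans (le_max_left _ _) (le_max_left _ _)
  have hm₂M₂ : M₂ ≤ m₂ := by rw [hm₂def]; exact le_trans (le_max_right _ _) (le_max_left _ _)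
  have hm₂m₁ : m₁ ≤ m₂ := by rw [hm₂def]; exact le_trans (le_max_left _ _) (le_max_right _ _)
  have hm₂N : N + 1 ≤ m₂ := by rw [hm₂def]; exact le_trans (le_max_right _ _) (le_max_right _ _)
  have hm₂1 : 1 ≤ m₂ := le_trans hm₁1 hm₂m₁
  obtain ⟨n₂, hn₂eq⟩ : ∃ x, x = d * m₂ := ⟨_, rfl⟩
  have hdn₂ : d ∣ n₂ := ⟨m₂, hn₂eq⟩
  have hm₂n₂ : m₂ ≤ n₂ := by rw [hn₂eq]; exact Nat.le_mul_of_pos_left _ (by omega)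
  have hn₂1 : 1 ≤ n₂ := le_trans hm₂1 hm₂n₂
  have hn₂N : N < n₂ := by omega
  have hm₁n₂ : d * m₁ ≤ n₂ := by rw [hn₂eq]; exact Nat.mul_le_mul_left d hm₂m₁
  obtain ⟨C₂, hC₂def⟩ : ∃ x : ℝ, x = (1+η'')^m₂ := ⟨_, rfl⟩
  have hC₂1 : 1 ≤ C₂ := by rw [hC₂def]; exact one_le_pow₀ (by linarith)
  -- minimum of p on the initial window
  obtain ⟨S, hSdef⟩ : ∃ x : Finset ℕ, x = (Finset.Ico n₂ (2*n₂)).filter (fun n => d ∣ n) :=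
    ⟨_, rfl⟩
  have hmemS : ∀ c : ℕ, c ∈ S ↔ (n₂ ≤ c ∧ c < 2*n₂) ∧ d ∣ c := by
    intro c; rw [hSdef]; simp [Finset.mem_filter, Finset.mem_Ico]
  have hn₂S : n₂ ∈ S := (hmemS n₂).mpr ⟨⟨le_refl _, by omega⟩, hdn₂⟩
  have hSne : S.Nonempty := ⟨n₂, hn₂S⟩
  obtain ⟨pmin, hpmindef⟩ : ∃ x : ℝ, x = S.inf' hSne p := ⟨_, rfl⟩
  have hpmin : 0 < pmin := by
    rw [hpmindef, Finset.lt_inf'_iff]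
    intro c hc
    rw [hmemS c] at hc
    exact hpos c (by omega) hc.2
  obtain ⟨b, hbdef⟩ : ∃ x : ℝ, x = C₂ + 1/pmin := ⟨_, rfl⟩
  have hinvp : 0 < 1/pmin := by positivity
  have hb0 : 0 < b := by rw [hbdef]; linarith
  have hbC₂ : C₂ ≤ b := by rw [hbdef]; linarith
  have hbpm : 1/pmin ≤ b := by rw [hbdef]; linarith
  obtain ⟨r, hrdef⟩ : ∃ x : ℝ, x = (2+η) - (1-η)*(1-η) := ⟨_, rfl⟩
  have hr1 : 1 ≤ r := by rw [hrdef]; nlinarith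
  have hr0 : 0 ≤ r := by linarith
  have hrε : r < 1 + ε := by rw [hrdef]; nlinarith
  -- the main induction
  have main : ∀ k n, n₂ ≤ n → d ∣ n → P k n ≤ (b * k * r^k) * p n := by
    intro k
    induction k with
    | zero =>
      intro n hn hdn
      rw [hP0 n (by omega)]
      simp
    | succ k ih =>
      intro n hn hdn
      obtain ⟨m, rfl⟩ := hdn
      have hmm₂ : m₂ ≤ m := by
        refine Nat.le_of_mul_le_mul_left ?_ (show 0 < d by omega)
        omega
      have hrk : (0:ℝ) ≤ b * k * r^k := by positivity
      have hk1 : (1:ℝ) ≤ (k:ℝ) + 1 := by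
        have : (0:ℝ) ≤ (k:ℝ) := Nat.cast_nonneg k
        linarith
      have hrk1 : (1:ℝ) ≤ r^(k+1) := one_le_pow₀ hr1
      have hcast : ((k+1 : ℕ) : ℝ) = (k:ℝ) + 1 := by push_cast; ring
      by_cases hT : d * m < 2 * n₂
      · -- initial window
        have hpm : pmin ≤ p (d*m) := by
          rw [hpmindef]
          exact Finset.inf'_le p ((hmemS (d*m)).mpr ⟨⟨hn, hT⟩, ⟨m, rfl⟩⟩)
        have hbb : b ≤ b * ((k:ℝ)+1) * r^(k+1) := by
          have h1 : (1:ℝ)*1 ≤ ((k:ℝ)+1) * r^(k+1) :=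
            mul_le_mul hk1 hrk1 zero_le_one (by linarith)
          calc b = b*(1*1) := by ring
            _ ≤ b*(((k:ℝ)+1)*r^(k+1)) := mul_le_mul_of_nonneg_left h1 hb0.le
            _ = b*((k:ℝ)+1)*r^(k+1) := by ring
        calc P (k+1) (d*m) ≤ 1 := hPle1 _ _
          _ = (1/pmin) * pmin := by field_simp
          _ ≤ (1/pmin) * p (d*m) := mul_le_mul_of_nonneg_left hpm (by positivity)
          _ ≤ b * p (d*m) := mul_le_mul_of_nonneg_right hbpm (hpnn _)
          _ ≤ (b * ((k:ℝ)+1) * r^(k+1)) * p (d*m) :=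
              mul_le_mul_of_nonneg_right hbb (hpnn _)
          _ = (b * ((k+1:ℕ):ℝ) * r^(k+1)) * p (d*m) := by rw [hcast]
      · push_neg at hT
        have h2m₂ : 2 * m₂ ≤ m := by
          refine Nat.le_of_mul_le_mul_left ?_ (show 0 < d by omega)
          calc d * (2 * m₂) = 2 * (d * m₂) := by ring
            _ ≤ d * m := by omega
        have hn₂dm : n₂ ≤ d * m := by omega
        rw [hPrec]
        have hsplit := Finset.sum_Ico_consecutive (fun j => p j * P k (d*m - j))
            (show 0 ≤ d*m - n₂ + 1 by omega) (show d*m - n₂ + 1 ≤ d*m + 1 by omega)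
        have hsplit2 := Finset.sum_Ico_consecutive (fun j => p j * p (d*m - j))
            (show 0 ≤ d*m - n₂ + 1 by omega) (show d*m - n₂ + 1 ≤ d*m + 1 by omega)
        rw [Finset.range_eq_Ico, ← hsplit]
        -- full convolution bound
        have hfull : ∑ j ∈ Finset.Ico 0 (d*m+1), p j * p (d*m - j) ≤ (2+η) * p (d*m) := by
          rw [← Finset.range_eq_Ico]
          exact hM₂ m (le_trans hm₂M₂ hmm₂)
        -- head lower bound
        have hterm : ∀ i ∈ Finset.range (d*m₁), (1-η) * p (d*m) * p i ≤ p i * p (d*m - i) := by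
          intro i hi
          rw [Finset.mem_range] at hi
          by_cases hdi : d ∣ i
          · obtain ⟨s, rfl⟩ := hdi
            have hsm₁ : s < m₁ := Nat.lt_of_mul_lt_mul_left hi
            have hsm : s ≤ m := by
              have : m₁ ≤ m := le_trans hm₂m₁ hmm₂
              omega
            have ha : M ≤ m - s := by
              have h1 : m₁ ≤ m₂ := hm₂m₁
              omega
            have hms : (m - s) + s = m := by omega
            have hch := (hchain s (m - s) ha).2
            rw [hms] at hch
            have hw : (1+η'')^s ≤ 1+η := hwin s hsm₁.le
            have hsub : d*m - d*s = d*(m-s) := by rw [Nat.mul_sub]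
            have hp2 : p (d*m) ≤ (1+η) * p (d*(m-s)) :=
              le_trans hch (mul_le_mul_of_nonneg_right hw (hpnn _))
            have hkey : (1-η) * p (d*m) ≤ p (d*(m-s)) := by
              nlinarith [mul_le_mul_of_nonneg_left hp2 (by linarith : (0:ℝ) ≤ 1-η),
                mul_nonneg (mul_nonneg hη.le hη.le) (hpnn (d*(m-s)))]
            rw [hsub]
            calc (1-η) * p (d*m) * p (d*s) ≤ p (d*(m-s)) * p (d*s) :=
                mul_le_mul_of_nonneg_right hkey (hpnn _)
              _ = p (d*s) * p (d*(m-s)) := by ring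
          · rw [hpz i hdi]
            simp
        have hhead : (1-η) * ((1-η) * p (d*m))
            ≤ ∑ i ∈ Finset.range (d*m₁), p i * p (d*m - i) := by
          have h1 : (1-η) * ((1-η) * p (d*m))
              ≤ (∑ i ∈ Finset.range (d*m₁), p i) * ((1-η) * p (d*m)) := by
            refine mul_le_mul_of_nonneg_right hm₁ ?_
            have := hpnn (d*m)
            nlinarith
          have h2 : (∑ i ∈ Finset.range (d*m₁), p i) * ((1-η) * p (d*m))
              = ∑ i ∈ Finset.range (d*m₁), (1-η) * p (d*m) * p i := by
            rw [Finset.sum_mul]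
            exact Finset.sum_congr rfl (fun i _ => by ring)
          rw [h2] at h1
          exact le_trans h1 (Finset.sum_le_sum hterm)
        -- head is dominated by the tail part of the convolution
        have himg : ∑ i ∈ Finset.range (d*m₁), p i * p (d*m - i)
            ≤ ∑ j ∈ Finset.Ico (d*m - n₂ + 1) (d*m+1), p j * p (d*m - j) := by
          have hinj : ∀ x ∈ Finset.range (d*m₁), ∀ y ∈ Finset.range (d*m₁),
              d*m - x = d*m - y → x = y := by
            intro x hx y hy hxy
            rw [Finset.mem_range] at hx hy
            omega
          have e1 : ∑ j ∈ (Finset.range (d*m₁)).image (fun i => d*m - i),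
                p j * p (d*m - j)
              = ∑ i ∈ Finset.range (d*m₁), p (d*m - i) * p (d*m - (d*m - i)) :=
            Finset.sum_image hinj
          have e2 : ∑ i ∈ Finset.range (d*m₁), p (d*m - i) * p (d*m - (d*m - i))
              = ∑ i ∈ Finset.range (d*m₁), p i * p (d*m - i) := by
            refine Finset.sum_congr rfl (fun i hi => ?_)
            rw [Finset.mem_range] at hi
            have hi' : i ≤ d*m := by omega
            rw [Nat.sub_sub_self hi']
            ring
          rw [← e2, ← e1]
          refine Finset.sum_le_sum_of_subset_of_nonneg ?_
            (fun j _ _ => mul_nonneg (hpnn _) (hpnn _))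
          intro j hj
          simp only [Finset.mem_image, Finset.mem_range] at hj
          obtain ⟨i, hi, rfl⟩ := hj
          rw [Finset.mem_Ico]
          omega
        -- Sum1 bound
        have hSum1 : ∑ j ∈ Finset.Ico 0 (d*m - n₂ + 1), p j * P k (d*m - j)
            ≤ (b * k * r^k) * (r * p (d*m)) := by
          have hs1 : ∑ j ∈ Finset.Ico 0 (d*m - n₂ + 1), p j * P k (d*m - j)
              ≤ ∑ j ∈ Finset.Ico 0 (d*m - n₂ + 1), (b * k * r^k) * (p j * p (d*m - j)) := by
            refine Finset.sum_le_sum ?_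
            intro j hj
            rw [Finset.mem_Ico] at hj
            by_cases hdj : d ∣ j
            · have hdnj : d ∣ (d*m - j) := Nat.dvd_sub ⟨m, rfl⟩ hdj
              have h1 : n₂ ≤ d*m - j := by omega
              have h2 := ih (d*m - j) h1 hdnj
              calc p j * P k (d*m - j) ≤ p j * ((b*k*r^k) * p (d*m - j)) :=
                  mul_le_mul_of_nonneg_left h2 (hpnn j)
                _ = b*k*r^k * (p j * p (d*m - j)) := by ring
            · rw [hpz j hdj]
              have h3 : (0:ℝ) ≤ b*k*r^k * (p j * p (d*m - j)) :=
                mul_nonneg hrk (mul_nonneg (hpnn _) (hpnn _))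
              simpa using h3
          rw [← Finset.mul_sum] at hs1
          refine le_trans hs1 (mul_le_mul_of_nonneg_left ?_ hrk)
          have hmid : ∑ j ∈ Finset.Ico 0 (d*m - n₂ + 1), p j * p (d*m - j)
              = ∑ j ∈ Finset.Ico 0 (d*m+1), p j * p (d*m - j)
                - ∑ j ∈ Finset.Ico (d*m - n₂ + 1) (d*m+1), p j * p (d*m - j) := by
            rw [← hsplit2]; ring
          rw [hmid, hrdef]
          have hhi := le_trans hhead himg
          nlinarith [hfull]
        -- Sum2 bound
        have hSum2 : ∑ j ∈ Finset.Ico (d*m - n₂ + 1) (d*m+1), p j * P k (d*m - j)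
            ≤ C₂ * p (d*m) := by
          have hs2 : ∑ j ∈ Finset.Ico (d*m - n₂ + 1) (d*m+1), p j * P k (d*m - j)
              ≤ ∑ j ∈ Finset.Ico (d*m - n₂ + 1) (d*m+1), (C₂ * p (d*m)) * P k (d*m - j) := by
            refine Finset.sum_le_sum ?_
            intro j hj
            rw [Finset.mem_Ico] at hj
            by_cases hdj : d ∣ j
            · obtain ⟨a, rfl⟩ := hdj
              have ham : a ≤ m := by
                refine Nat.le_of_mul_le_mul_left ?_ (show 0 < d by omega)
                omega
              have htlt : m - a ≤ m₂ := by
                have h1 : d * (m - a) ≤ n₂ := by rw [Nat.mul_sub]; omega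
                refine Nat.le_of_mul_le_mul_left ?_ (show 0 < d by omega)
                omega
              have haM : M ≤ a := by omega
              have hat : a + (m - a) = m := by omega
              have hch := (hchain (m - a) a haM).1
              rw [hat] at hch
              have hpw : (1+η'')^(m-a) ≤ C₂ := by
                rw [hC₂def]
                exact pow_le_pow_right₀ (by linarith) htlt
              have hja : p (d*a) ≤ C₂ * p (d*m) :=
                le_trans hch (mul_le_mul_of_nonneg_right hpw (hpnn _))
              exact mul_le_mul_of_nonneg_right hja (hPnn _ _)
            · rw [hpz j hdj]
              have h3 : (0:ℝ) ≤ C₂ * p (d*m) * P k (d*m - j) :=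
                mul_nonneg (mul_nonneg (by linarith) (hpnn _)) (hPnn _ _)
              simpa using h3
          refine le_trans hs2 ?_
          have hsum2' : ∑ j ∈ Finset.Ico (d*m - n₂ + 1) (d*m+1), P k (d*m - j) ≤ 1 := by
            have hinj : ∀ x ∈ Finset.Ico (d*m - n₂ + 1) (d*m+1),
                ∀ y ∈ Finset.Ico (d*m - n₂ + 1) (d*m+1), d*m - x = d*m - y → x = y := by
              intro x hx y hy hxy
              rw [Finset.mem_Ico] at hx hy
              omega
            rw [show ∑ j ∈ Finset.Ico (d*m - n₂ + 1) (d*m+1), P k (d*m - j)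
              = ∑ i ∈ (Finset.Ico (d*m - n₂ + 1) (d*m+1)).image (fun j => d*m - j), P k i
              from (Finset.sum_image hinj).symm]
            exact hP1 k _
          calc ∑ j ∈ Finset.Ico (d*m - n₂ + 1) (d*m+1), (C₂ * p (d*m)) * P k (d*m - j)
              = (C₂ * p (d*m)) * ∑ j ∈ Finset.Ico (d*m - n₂ + 1) (d*m+1), P k (d*m - j) := by
                rw [Finset.mul_sum]
            _ ≤ (C₂ * p (d*m)) * 1 := by
                refine mul_le_mul_of_nonneg_left hsum2' ?_
                exact mul_nonneg (by linarith) (hpnn _)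
            _ = C₂ * p (d*m) := by ring
        -- combine
        calc ∑ j ∈ Finset.Ico 0 (d*m - n₂ + 1), p j * P k (d*m - j)
              + ∑ j ∈ Finset.Ico (d*m - n₂ + 1) (d*m+1), p j * P k (d*m - j)
            ≤ (b * k * r^k) * (r * p (d*m)) + C₂ * p (d*m) := add_le_add hSum1 hSum2
          _ ≤ (b * ((k+1:ℕ):ℝ) * r^(k+1)) * p (d*m) := by
              rw [hcast]
              have h1 : (b * k * r^k) * (r * p (d*m)) = b * k * r^(k+1) * p (d*m) := by
                rw [pow_succ]; ring
              have hbr : b ≤ b * r^(k+1) := by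
                calc b = b * 1 := by ring
                  _ ≤ b * r^(k+1) := mul_le_mul_of_nonneg_left hrk1 hb0.le
              have h2 : C₂ * p (d*m) ≤ b * r^(k+1) * p (d*m) :=
                mul_le_mul_of_nonneg_right (le_trans hbC₂ hbr) (hpnn _)
              have h3 : b * ((k:ℝ)+1) * r^(k+1) * p (d*m)
                  = b * k * r^(k+1) * p (d*m) + b * r^(k+1) * p (d*m) := by ring
              rw [h3, h1]
              linarith
  -- convert the induction bound to the advertised form
  have hrpos : 0 < r := lt_of_lt_of_le one_pos hr1
  obtain ⟨q, hqdef⟩ : ∃ x : ℝ, x = (1+ε)/r := ⟨_, rfl⟩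
  have hq : 1 < q := by
    rw [hqdef, lt_div_iff₀ hrpos]
    linarith
  have hqr : q * r = 1+ε := by
    rw [hqdef]
    field_simp
  have hq1 : 0 < q - 1 := by linarith
  have hKlin : ∀ k : ℕ, b * k ≤ (b/(q-1)) * q^k := by
    intro k
    have h1 : 1 + (k:ℝ) * (q-1) ≤ q^k := by
      have h0 : 1 + (k:ℝ) * (q-1) ≤ (1+(q-1))^k := one_add_mul_le_pow (by linarith) k
      rwa [show (1:ℝ)+(q-1) = q by ring] at h0
    have h2 : (k:ℝ) * (q-1) ≤ q^k := by linarith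
    calc b * k = (b/(q-1)) * ((k:ℝ)*(q-1)) := by
          field_simp
      _ ≤ (b/(q-1)) * q^k := by
          refine mul_le_mul_of_nonneg_left h2 (by positivity)
  refine ⟨b/(q-1), by positivity, n₂, hn₂1, ?_⟩
  intro k n hn hdn
  have h1 := main k n hn hdn
  refine le_trans h1 ?_
  refine mul_le_mul_of_nonneg_right ?_ (hpnn n)
  calc b * (k:ℝ) * r^k ≤ (b/(q-1)) * q^k * r^k :=
      mul_le_mul_of_nonneg_right (hKlin k) (pow_nonneg hr0 k)
    _ = (b/(q-1)) * (q*r)^k := by rw [mul_pow]; ring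
    _ = b/(q-1) * (1+ε)^k := by rw [hqr]

open MeasureTheory ProbabilityTheory

set_option maxHeartbeats 1600000 in
/-- Let `g` be an `ℕ`-valued random variable whose density `p` is subexponential on the lattice
`dℕ` (i.e. `p ∈ 𝒮_d` with radius of convergence `1`), let `(f, h)` be a random vector of
non-negative integers with finite exponential moments such that `h` is a.s. divisible by `d`,
and let `(gᵢ)` be i.i.d. copies of `g`, independent of `(f, h)`. Then there are a summable
sequence `(C_k)` of non-negative reals and an `n₀` such that for all `k ≥ 0` and `n ≥ n₀`
divisible by `d`, `ℙ(∑_{i<k} gᵢ + h = n, f = k) ≤ C_k ℙ(g = n)`. -/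
theorem randomly_stopped_sum_uniform_bound
    {Ω : Type*} [MeasurableSpace Ω] (μ : Measure Ω) [IsProbabilityMeasure μ]
    (d : ℕ) (p : ℕ → ℝ) (hp : SubexpClass d p 1)
    (gs : ℕ → Ω → ℕ) (f h : Ω → ℕ)
    (hgsmeas : ∀ i, Measurable (gs i)) (hfmeas : Measurable f) (hhmeas : Measurable h)
    (hdist : ∀ i n, (μ {ω | gs i ω = n}).toReal = p n)
    (hiid : iIndepFun gs μ)
    (hindep : IndepFun (fun ω => (f ω, h ω)) (fun ω i => gs i ω) μ)
    (hdvd : ∀ᵐ ω ∂μ, d ∣ h ω)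
    (hexp : ∃ δ : ℝ, 0 < δ ∧ Integrable (fun ω => (1 + δ) ^ (f ω + h ω)) μ) :
    ∃ C : ℕ → ℝ, (∀ k, 0 ≤ C k) ∧ Summable C ∧ ∃ n₀ : ℕ,
      ∀ k n : ℕ, n₀ ≤ n → d ∣ n →
        (μ {ω | (∑ i ∈ Finset.range k, gs i ω) + h ω = n ∧ f ω = k}).toReal
          ≤ C k * p n := by
  obtain ⟨hd1, hρ, hpnn, hpz, ⟨N, hpos⟩, hsum1, hnsum, hratio0, hconv0⟩ := hp
  -- p is a probability mass function
  have hpeq : ∀ n, p n = (μ {ω | gs 0 ω = n}).toReal := fun n => (hdist 0 n).symm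
  have hps : Summable p := by
    have h1 := aux_fiber_summable μ (hgsmeas 0)
    have : p = fun n => (μ {ω | gs 0 ω = n}).toReal := funext hpeq
    rw [this]; exact h1
  have hpt : ∑' n, p n = 1 := by
    have h1 := aux_fiber_tsum_real μ (hgsmeas 0)
    rw [tsum_congr hpeq]; exact h1
  have hsum : HasSum p 1 := hpt ▸ hps.hasSum
  have hratio : Tendsto (fun m => p (d*m) / p (d*m+d)) atTop (nhds 1) := by
    have e : (1:ℝ)^d = 1 := one_pow d
    rwa [e] at hratio0
  have hconv : Tendsto
      (fun m => (∑ i ∈ Finset.range (d*m+1), p i * p (d*m - i)) / p (d*m))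
      atTop (nhds 2) := by
    have e : (2:ℝ) * ∑' n, p n * (1:ℝ)^n = 2 := by
      simp only [one_pow, mul_one]
      rw [hpt]; norm_num
    rwa [e] at hconv0
  -- the convolution powers
  have hSmeas : ∀ k, Measurable (fun ω => ∑ i ∈ Finset.range k, gs i ω) :=
    fun k => Finset.measurable_sum _ (fun i _ => hgsmeas i)
  set P : ℕ → ℕ → ℝ :=
    fun k n => (μ {ω | ∑ i ∈ Finset.range k, gs i ω = n}).toReal with hPdef
  have hPnn : ∀ k n, 0 ≤ P k n := fun k n => ENNReal.toReal_nonneg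
  have hP1 : ∀ k (F : Finset ℕ), ∑ i ∈ F, P k i ≤ 1 :=
    fun k F => aux_fiber_sum_le μ (hSmeas k) F
  have hP0 : ∀ n, n ≠ 0 → P 0 n = 0 := by
    intro n hn
    have e : {ω : Ω | ∑ i ∈ Finset.range 0, gs i ω = n} = ∅ := by
      ext ω
      simp only [Finset.range_zero, Finset.sum_empty, Set.mem_setOf_eq, Set.mem_empty_iff_false]
      exact iff_false_intro (fun h0 => hn h0.symm)
    simp only [hPdef, e, measure_empty, ENNReal.toReal_zero]
  have hPrec : ∀ k n, P (k+1) n = ∑ j ∈ Finset.range (n+1), p j * P k (n - j) := by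
    intro k n
    have hind : IndepFun (gs k) (fun ω => ∑ i ∈ Finset.range k, gs i ω) μ := by
      have h0 := hiid.indepFun_sum_range_succ hgsmeas k
      have e : (∑ j ∈ Finset.range k, gs j) = fun ω => ∑ i ∈ Finset.range k, gs i ω := by
        funext ω; simp
      rw [e] at h0
      exact h0.symm
    have key := aux_indep_sum_event μ (hgsmeas k) (hSmeas k) hind n
    have he : {ω : Ω | ∑ i ∈ Finset.range (k+1), gs i ω = n}
        = {ω : Ω | gs k ω + (∑ i ∈ Finset.range k, gs i ω) = n} := by
      ext ω
      simp only [Set.mem_setOf_eq, Finset.sum_range_succ]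
      omega
    simp only [hPdef]
    rw [he, key]
    exact Finset.sum_congr rfl (fun j _ => by rw [hdist k j])
  obtain ⟨δ, hδ, hint⟩ := hexp
  have h1δ : (0:ℝ) < 1 + δ := by linarith
  have h1δ1 : (1:ℝ) ≤ 1 + δ := by linarith
  obtain ⟨K, hK0, n₂, hn₂1, hKest⟩ :=
    aux_kesten hd1 hpnn hpz hpos hsum hratio hconv P hPnn hP1 hP0 hPrec hδ
  obtain ⟨Mδ, hMδ⟩ := aux_ratio_step hd1 hpos hratio hδ
  have hchainδ := aux_chain (by linarith : (1:ℝ) ≤ 1+δ) hMδ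
  have hc₅ : 0 < p (d*Mδ) := (hMδ Mδ le_rfl).1
  -- exponential moments
  have hsummable := aux_exp_moment μ hfmeas hhmeas hδ hint
  set q : ℕ → ℕ → ℝ := fun k m => (μ {ω | f ω = k ∧ h ω = m}).toReal with hqdef
  have hqnn : ∀ k m, 0 ≤ q k m := fun k m => ENNReal.toReal_nonneg
  have hfib : ∀ k, Summable (fun m => (1+δ)^(k+m) * q k m) := by
    intro k
    have := hsummable.prod_factor k
    exact this
  set E : ℕ → ℝ := fun k => ∑' m, (1+δ)^(k+m) * q k m with hEdef
  have hEsummable : Summable E := by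
    have := hsummable.prod
    exact this
  have hE0 : ∀ k, 0 ≤ E k :=
    fun k => tsum_nonneg (fun m => mul_nonneg (pow_nonneg h1δ.le _) (hqnn k m))
  have hEk_partial : ∀ k (F : Finset ℕ), ∑ m ∈ F, (1+δ)^(k+m) * q k m ≤ E k :=
    fun k F => Summable.sum_le_tsum F (fun m _ => mul_nonneg (pow_nonneg h1δ.le _) (hqnn k m)) (hfib k)
  have hqle : ∀ k m, (1+δ)^(k+m) * q k m ≤ E k :=
    fun k m => Summable.le_tsum (hfib k) m (fun m' _ => mul_nonneg (pow_nonneg h1δ.le _) (hqnn k m'))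
  -- h is a.s. divisible by d
  have hq0 : ∀ k m, ¬ d ∣ m → q k m = 0 := by
    intro k m hdm
    have hnull : μ {ω | ¬ d ∣ h ω} = 0 := ae_iff.1 hdvd
    have hsub : {ω | f ω = k ∧ h ω = m} ⊆ {ω | ¬ d ∣ h ω} := by
      rintro ω ⟨-, h2⟩
      simp only [Set.mem_setOf_eq]
      rw [h2]; exact hdm
    have : μ {ω | f ω = k ∧ h ω = m} = 0 := measure_mono_null hsub hnull
    simp only [hqdef, this, ENNReal.toReal_zero]
  -- thresholds
  obtain ⟨ns, hnsdef⟩ : ∃ x : ℕ, x = max n₂ (d*Mδ) := ⟨_, rfl⟩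
  have hnsn₂ : n₂ ≤ ns := by rw [hnsdef]; exact le_max_left _ _
  have hnsM : d*Mδ ≤ ns := by rw [hnsdef]; exact le_max_right _ _
  obtain ⟨c₆, hc₆def⟩ : ∃ x : ℝ, x = (ns:ℝ) * (1+δ)^ns / p (d*Mδ) := ⟨_, rfl⟩
  have hc₆0 : 0 ≤ c₆ := by rw [hc₆def]; positivity
  refine ⟨fun k => (K + c₆) * E k, fun k => mul_nonneg (by linarith) (hE0 k), ?_, ?_⟩
  · exact hEsummable.mul_left _
  refine ⟨ns + d*Mδ + d, ?_⟩
  intro k n hn hdn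
  -- the basic decomposition
  have hindS : IndepFun (fun ω => (f ω, h ω)) (fun ω => ∑ i ∈ Finset.range k, gs i ω) μ := by
    have hψ : Measurable (fun v : ℕ → ℕ => ∑ i ∈ Finset.range k, v i) :=
      Finset.measurable_sum _ (fun i _ => measurable_pi_apply i)
    have h0 := hindep.comp measurable_id hψ
    exact h0
  have hdecomp := aux_fh_sum_event μ hfmeas hhmeas (hSmeas k) hindS k n
  rw [hdecomp]
  -- split the sum
  obtain ⟨mn, rfl⟩ := hdn
  have hmnM : Mδ ≤ mn := by
    refine Nat.le_of_mul_le_mul_left ?_ (show 0 < d by omega)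
    omega
  have hnns : ns ≤ d * mn := by omega
  show (∑ m ∈ Finset.range (d*mn + 1), q k m * P k (d*mn - m)) ≤ (K + c₆) * E k * p (d*mn)
  have hsplit := Finset.sum_Ico_consecutive
      (fun m => q k m * P k (d*mn - m))
      (show 0 ≤ d*mn - ns + 1 by omega) (show d*mn - ns + 1 ≤ d*mn + 1 by omega)
  rw [Finset.range_eq_Ico, ← hsplit]
  -- region 1
  have hreg1 : ∑ m ∈ Finset.Ico 0 (d*mn - ns + 1), q k m * P k (d*mn - m)
      ≤ K * E k * p (d*mn) := by
    have hterm : ∀ m ∈ Finset.Ico 0 (d*mn - ns + 1),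
        q k m * P k (d*mn - m) ≤ (K * p (d*mn)) * ((1+δ)^(k+m) * q k m) := by
      intro m hm
      rw [Finset.mem_Ico] at hm
      by_cases hdm : d ∣ m
      · obtain ⟨t, rfl⟩ := hdm
        have htmn : t ≤ mn := by
          refine Nat.le_of_mul_le_mul_left ?_ (show 0 < d by omega)
          omega
        have hsub : d*mn - d*t = d*(mn - t) := by rw [Nat.mul_sub]
        have haM : Mδ ≤ mn - t := by
          refine Nat.le_of_mul_le_mul_left ?_ (show 0 < d by omega)
          rw [← hsub]
          omega
        have hn₂nm : n₂ ≤ d*(mn - t) := by rw [← hsub]; omega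
        have hdnm : d ∣ d*(mn - t) := ⟨mn - t, rfl⟩
        have hPb := hKest k (d*(mn-t)) hn₂nm hdnm
        have hat : (mn - t) + t = mn := by omega
        have hch := (hchainδ t (mn - t) haM).1
        rw [hat] at hch
        have hpow : (1+δ)^t ≤ (1+δ)^(d*t) :=
          pow_le_pow_right₀ h1δ1 (Nat.le_mul_of_pos_left t (by omega))
        have hpnm : p (d*(mn-t)) ≤ (1+δ)^(d*t) * p (d*mn) := by
          refine le_trans hch ?_
          exact mul_le_mul_of_nonneg_right hpow (hpnn _)
        have hPb2 : P k (d*mn - d*t) ≤ K * (1+δ)^k * ((1+δ)^(d*t) * p (d*mn)) := by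
          rw [hsub]
          refine le_trans hPb ?_
          refine mul_le_mul_of_nonneg_left hpnm ?_
          positivity
        calc q k (d*t) * P k (d*mn - d*t)
            ≤ q k (d*t) * (K * (1+δ)^k * ((1+δ)^(d*t) * p (d*mn))) :=
              mul_le_mul_of_nonneg_left hPb2 (hqnn _ _)
          _ = (K * p (d*mn)) * ((1+δ)^(k+d*t) * q k (d*t)) := by
              rw [pow_add]; ring
      · rw [hq0 k m hdm]
        have : (0:ℝ) ≤ (K * p (d*mn)) * ((1+δ)^(k+m) * q k m) := by
          refine mul_nonneg (mul_nonneg hK0 (hpnn _)) (mul_nonneg (by positivity) (hqnn _ _))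
        simpa using this
    refine le_trans (Finset.sum_le_sum hterm) ?_
    rw [← Finset.mul_sum]
    calc (K * p (d*mn)) * ∑ m ∈ Finset.Ico 0 (d*mn - ns + 1), (1+δ)^(k+m) * q k m
        ≤ (K * p (d*mn)) * E k := by
          refine mul_le_mul_of_nonneg_left (hEk_partial k _) ?_
          exact mul_nonneg hK0 (hpnn _)
      _ = K * E k * p (d*mn) := by ring
  -- region 2
  have hreg2 : ∑ m ∈ Finset.Ico (d*mn - ns + 1) (d*mn + 1), q k m * P k (d*mn - m)
      ≤ c₆ * E k * p (d*mn) := by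
    have hplow : (1+δ)^mn * p (d*mn) ≥ p (d*Mδ) := by
      have hch := (hchainδ (mn - Mδ) Mδ le_rfl).1
      rw [show Mδ + (mn - Mδ) = mn by omega] at hch
      have hpow : (1+δ)^(mn - Mδ) ≤ (1+δ)^mn := pow_le_pow_right₀ h1δ1 (by omega)
      calc p (d*Mδ) ≤ (1+δ)^(mn-Mδ) * p (d*mn) := hch
        _ ≤ (1+δ)^mn * p (d*mn) := mul_le_mul_of_nonneg_right hpow (hpnn _)
    have hpdm : 0 < p (d*mn) := (hMδ mn hmnM).1
    have hPle1 : ∀ x, P k x ≤ 1 := fun x => by simpa using hP1 k {x}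
    obtain ⟨B, hBdef⟩ : ∃ x : ℝ, x = (1+δ)^ns * p (d*mn) * E k / p (d*Mδ) := ⟨_, rfl⟩
    have hterm : ∀ m ∈ Finset.Ico (d*mn - ns + 1) (d*mn + 1),
        q k m * P k (d*mn - m) ≤ B := by
      intro m hm
      rw [Finset.mem_Ico] at hm
      have key : p (d*Mδ) * q k m ≤ (1+δ)^ns * p (d*mn) * E k := by
        have h1 : p (d*Mδ) * q k m ≤ ((1+δ)^(d*mn) * p (d*mn)) * q k m := by
          refine mul_le_mul_of_nonneg_right ?_ (hqnn k m)
          refine le_trans hplow ?_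
          exact mul_le_mul_of_nonneg_right
            (pow_le_pow_right₀ h1δ1 (Nat.le_mul_of_pos_left mn (by omega))) (hpnn _)
        have h2 : ((1:ℝ)+δ)^(d*mn) = (1+δ)^ns * (1+δ)^(d*mn - ns) := by
          rw [← pow_add]
          congr 1
          omega
        have h3 : (1+δ)^(d*mn - ns) * q k m ≤ E k := by
          refine le_trans ?_ (hqle k m)
          refine mul_le_mul_of_nonneg_right ?_ (hqnn k m)
          exact pow_le_pow_right₀ h1δ1 (by omega)
        calc p (d*Mδ) * q k m ≤ ((1+δ)^(d*mn) * p (d*mn)) * q k m := h1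
          _ = ((1+δ)^ns * p (d*mn)) * ((1+δ)^(d*mn - ns) * q k m) := by rw [h2]; ring
          _ ≤ ((1+δ)^ns * p (d*mn)) * E k := mul_le_mul_of_nonneg_left h3 (by positivity)
          _ = (1+δ)^ns * p (d*mn) * E k := by ring
      have hqB : q k m ≤ B := by
        rw [hBdef, le_div_iff₀ hc₅]
        calc q k m * p (d*Mδ) = p (d*Mδ) * q k m := by ring
          _ ≤ _ := key
      calc q k m * P k (d*mn - m) ≤ q k m * 1 :=
          mul_le_mul_of_nonneg_left (hPle1 _) (hqnn k m)
        _ = q k m := by ring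
        _ ≤ B := hqB
    have hcard : (Finset.Ico (d*mn - ns + 1) (d*mn + 1)).card = ns := by
      rw [Nat.card_Ico]
      omega
    have hsum2 := Finset.sum_le_card_nsmul _ _ _ hterm
    rw [hcard] at hsum2
    refine le_trans hsum2 ?_
    rw [nsmul_eq_mul, hBdef, hc₆def]
    apply le_of_eq
    field_simp
  calc ∑ m ∈ Finset.Ico 0 (d*mn - ns + 1), q k m * P k (d*mn - m)
        + ∑ m ∈ Finset.Ico (d*mn - ns + 1) (d*mn + 1), q k m * P k (d*mn - m)
      ≤ K * E k * p (d*mn) + c₆ * E k * p (d*mn) := add_le_add hreg1 hreg2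
    _ = (K + c₆) * E k * p (d*mn) := by ring
end

section
/- Let d ≥ 1 be an integer and let (a_n)_{n ∈ dℕ} be a sequence of positive reals such that a_{n+d}/a_n → 1 as n → ∞ along multiples of d. Then there exists a sequence (t_n) of non-negative integers with t_n → ∞ and t_n < n/2 for all n, such that sup{ |a_{n+y}/a_n − 1| : 0 ≤ y ≤ t_n, d | y } → 0 as n → ∞ along multiples of d. -/
open Filter

/-- If `(a_n)_{n ∈ dℕ}` is a sequence of positive reals with `a_{n+d}/a_n → 1` along multiples
of `d`, then there is a sequence `(t_n)` of non-negative integers with `t_n → ∞` and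
`t_n < n/2`, such that `sup { |a_{n+y}/a_n − 1| : 0 ≤ y ≤ t_n, d ∣ y } → 0` along multiples
of `d`. -/
theorem exists_uniform_ratio_window (d : ℕ) (hd : 1 ≤ d) (a : ℕ → ℝ)
    (hpos : ∀ n, 0 < a n)
    (hratio : Filter.Tendsto (fun m => a (d * m + d) / a (d * m)) Filter.atTop (nhds 1)) :
    ∃ t : ℕ → ℕ, Filter.Tendsto t Filter.atTop Filter.atTop ∧
      (∀ n, 1 ≤ n → ((t n : ℝ) < n / 2)) ∧
      Filter.Tendsto
        (fun m => ⨆ y : {y : ℕ // y ≤ t (d * m) ∧ d ∣ y},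
          |a (d * m + (y : ℕ)) / a (d * m) - 1|)
        Filter.atTop (nhds 0) := by
  have hdpos : 0 < d := hd
  -- Step 1: for each fixed `j`, `a (d*(m+j)) / a (d*m) → 1`.
  have hf : ∀ j : ℕ, Tendsto (fun m => a (d * (m + j)) / a (d * m)) atTop (nhds 1) := by
    intro j
    induction j with
    | zero =>
        have heq : (fun m => a (d * (m + 0)) / a (d * m)) = fun _ => (1:ℝ) := by
          funext m; simp [div_self (hpos (d * m)).ne']
        rw [heq]; exact tendsto_const_nhds
    | succ j ih =>
        have h2 : Tendsto (fun m => a (d * (m + j) + d) / a (d * (m + j))) atTop (nhds 1) := by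
          have := hratio.comp (tendsto_add_atTop_nat j)
          exact this
        have hmul := ih.mul h2
        rw [mul_one] at hmul
        refine hmul.congr fun m => ?_
        have h1 : a (d * (m + j)) ≠ 0 := (hpos _).ne'
        have h0 : a (d * m) ≠ 0 := (hpos _).ne'
        have heq : d * (m + (j + 1)) = d * (m + j) + d := by ring
        rw [heq]
        field_simp
  -- Step 2: uniform smallness over windows of fixed length.
  have H : ∀ k : ℕ, ∃ Nk : ℕ, ∀ m, Nk ≤ m → ∀ j ≤ k,
      |a (d * (m + j)) / a (d * m) - 1| < 1 / (k + 1) := by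
    intro k
    have hε : (0:ℝ) < 1 / (k + 1) := by positivity
    have hev : ∀ᶠ m in atTop, ∀ j ∈ Finset.range (k + 1),
        |a (d * (m + j)) / a (d * m) - 1| < 1 / (k + 1) := by
      rw [eventually_all_finset]
      intro j _
      have := (hf j).eventually (Metric.ball_mem_nhds (1:ℝ) hε)
      exact this.mono fun m hm => by simpa [Real.dist_eq] using hm
    obtain ⟨Nk, hNk⟩ := eventually_atTop.1 hev
    exact ⟨Nk, fun m hm j hj => hNk m hm j (Finset.mem_range.2 (Nat.lt_succ_of_le hj))⟩
  choose N hN using H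
  -- The slowly growing window (in `m`-scale).
  set u : ℕ → ℕ := fun m => Nat.findGreatest (fun k => N k ≤ m) m with hu_def
  have hu_ge : ∀ K m, K ≤ m → N K ≤ m → K ≤ u m := by
    intro K m h1 h2
    exact Nat.le_findGreatest h1 h2
  have hu_spec : ∀ K m, K ≤ m → N K ≤ m → N (u m) ≤ m := by
    intro K m h1 h2
    exact Nat.findGreatest_spec (P := fun k => N k ≤ m) h1 h2
  refine ⟨fun n => min (d * u (n / d)) ((n - 1) / 2), ?_, ?_, ?_⟩
  · -- t → ∞
    rw [tendsto_atTop]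
    intro b
    rw [eventually_atTop]
    refine ⟨max (2 * b + 1) (d * max (N b) b), fun n hn => ?_⟩
    have h1 : 2 * b + 1 ≤ n := le_trans (le_max_left _ _) hn
    have h2 : d * max (N b) b ≤ n := le_trans (le_max_right _ _) hn
    have h3 : max (N b) b ≤ n / d := by
      rw [Nat.le_div_iff_mul_le hdpos, mul_comm]
      exact h2
    have h4 : b ≤ u (n / d) :=
      hu_ge b _ (le_trans (le_max_right _ _) h3) (le_trans (le_max_left _ _) h3)
    have h5 : b ≤ d * u (n / d) := le_trans h4 (Nat.le_mul_of_pos_left _ hdpos)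
    exact le_min h5 (by omega)
  · -- t n < n / 2
    intro n hn
    have h1 : min (d * u (n / d)) ((n - 1) / 2) ≤ (n - 1) / 2 := min_le_right _ _
    have h2 : 2 * min (d * u (n / d)) ((n - 1) / 2) < n := by omega
    have h3 : (2 * (min (d * u (n / d)) ((n - 1) / 2)) : ℝ) < n := by exact_mod_cast h2
    push_cast at h3 ⊢
    linarith
  · -- the sup tends to 0
    rw [Metric.tendsto_atTop]
    intro ε hε
    obtain ⟨K, hK⟩ := exists_nat_one_div_lt hε
    refine ⟨max (N K) K, fun m hm => ?_⟩
    have hKm : K ≤ m := le_trans (le_max_right _ _) hm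
    have hNKm : N K ≤ m := le_trans (le_max_left _ _) hm
    have huK : K ≤ u m := hu_ge K m hKm hNKm
    have hspec : N (u m) ≤ m := hu_spec K m hKm hNKm
    have hb := hN (u m) m hspec
    have hmono : (1:ℝ) / (u m + 1) ≤ 1 / (K + 1) := by
      apply one_div_le_one_div_of_le
      · positivity
      · have : (K:ℝ) ≤ u m := by exact_mod_cast huK
        linarith
    haveI hne : Nonempty {y : ℕ // y ≤ min (d * u (d * m / d)) ((d * m - 1) / 2) ∧ d ∣ y} :=
      ⟨⟨0, Nat.zero_le _, dvd_zero d⟩⟩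
    haveI hfin : Finite {y : ℕ // y ≤ min (d * u (d * m / d)) ((d * m - 1) / 2) ∧ d ∣ y} :=
      Set.Finite.to_subtype
        ((Set.finite_Iic (min (d * u (d * m / d)) ((d * m - 1) / 2))).subset fun y hy => hy.1)
    have hbdd : BddAbove (Set.range fun y :
        {y : ℕ // y ≤ min (d * u (d * m / d)) ((d * m - 1) / 2) ∧ d ∣ y} =>
        |a (d * m + (y : ℕ)) / a (d * m) - 1|) := (Set.finite_range _).bddAbove
    have hS0 : 0 ≤ ⨆ y : {y : ℕ // y ≤ min (d * u (d * m / d)) ((d * m - 1) / 2) ∧ d ∣ y},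
        |a (d * m + (y : ℕ)) / a (d * m) - 1| := by
      have h0 := le_ciSup hbdd (⟨0, Nat.zero_le _, dvd_zero d⟩ :
        {y : ℕ // y ≤ min (d * u (d * m / d)) ((d * m - 1) / 2) ∧ d ∣ y})
      simpa [div_self (hpos (d * m)).ne'] using h0
    have hle : (⨆ y : {y : ℕ // y ≤ min (d * u (d * m / d)) ((d * m - 1) / 2) ∧ d ∣ y},
        |a (d * m + (y : ℕ)) / a (d * m) - 1|) ≤ 1 / (K + 1) := by
      apply ciSup_le
      rintro ⟨y, hy1, j, rfl⟩
      have h2 : min (d * u (d * m / d)) ((d * m - 1) / 2) ≤ d * u m := by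
        rw [Nat.mul_div_cancel_left m hdpos] at *
        exact min_le_left _ _
      have hjm : j ≤ u m := Nat.le_of_mul_le_mul_left (le_trans hy1 h2) hdpos
      have heq : d * m + d * j = d * (m + j) := by ring
      rw [heq]
      exact le_trans (le_of_lt (hb j hjm)) hmono
    rw [Real.dist_eq, sub_zero, abs_of_nonneg hS0]
    exact lt_of_le_of_lt hle hK
end

section
/- Let d ≥ 1 be an integer and let g(z) = Σ_{n≥0} g_n z^n belong to the class S_d with radius of convergence ρ. Then the coefficient sequence is heavy-tailed in the sense that for every c > 0, e^{cn}·ρ^n·g_n → ∞ as n → ∞ along multiples of d. -/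
/-- If `g ∈ 𝒮_d` with radius of convergence `ρ`, then the coefficients are heavy-tailed:
for every `c > 0`, `e^{cn} ρ^n g_n → ∞` along multiples of `d`. -/
theorem subexp_heavy_tailed (d : ℕ) (g : ℕ → ℝ) (ρ : ℝ)
    (hg : SubexpClass d g ρ) (c : ℝ) (hc : 0 < c) :
    Filter.Tendsto
      (fun m => Real.exp (c * (d * m : ℕ)) * ρ ^ (d * m) * g (d * m))
      Filter.atTop Filter.atTop := by
  obtain ⟨hd, hρ, hgnn, -, ⟨N, hN⟩, -, -, hratio, -⟩ := hg
  -- x m = ρ^{dm} g(dm), positive for m ≥ N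
  set x : ℕ → ℝ := fun m => ρ ^ (d * m) * g (d * m) with hx
  have hxpos : ∀ m, N ≤ m → 0 < x m := by
    intro m hm
    have h1 : N ≤ d * m := le_trans hm (Nat.le_mul_of_pos_left m (by omega))
    exact mul_pos (pow_pos hρ _) (hN _ h1 ⟨m, rfl⟩)
  have hρd : (0:ℝ) < ρ ^ d := pow_pos hρ d
  -- ratio x(m+1)/x m → 1
  have hr1 : Filter.Tendsto (fun m => x (m+1) / x m) Filter.atTop (nhds 1) := by
    have hinv : Filter.Tendsto (fun m => (g (d * m) / g (d * m + d))⁻¹)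
        Filter.atTop (nhds ((ρ ^ d)⁻¹)) := hratio.inv₀ hρd.ne'
    have := hinv.const_mul (ρ ^ d)
    rw [mul_inv_cancel₀ hρd.ne'] at this
    apply this.congr'
    filter_upwards [Filter.eventually_ge_atTop N] with m hm
    have hgm : 0 < g (d * m) := hN _ (le_trans hm (Nat.le_mul_of_pos_left m (by omega))) ⟨m, rfl⟩
    have hgm' : 0 < g (d * m + d) := hN _ (le_trans hm (by nlinarith [Nat.le_mul_of_pos_left m (show 0 < d by omega)])) ⟨m+1, by ring⟩
    have hmul : d * (m+1) = d * m + d := by ring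
    simp only [hx, hmul]
    rw [pow_add]
    field_simp
  -- log differences → 0
  have hlog : Filter.Tendsto (fun m => Real.log (x (m+1)) - Real.log (x m))
      Filter.atTop (nhds 0) := by
    have h := hr1.log one_ne_zero
    rw [Real.log_one] at h
    apply h.congr'
    filter_upwards [Filter.eventually_ge_atTop N] with m hm
    rw [Real.log_div (hxpos _ (by omega)).ne' (hxpos _ hm).ne']
  -- Cesàro: log (x n) / n → 0
  have hcesaro : Filter.Tendsto (fun n : ℕ => (n:ℝ)⁻¹ * Real.log (x n))
      Filter.atTop (nhds 0) := by
    have h := hlog.cesaro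
    simp only [Finset.sum_range_sub (fun i => Real.log (x i))] at h
    have h2 : Filter.Tendsto (fun n : ℕ => (n:ℝ)⁻¹ * Real.log (x 0))
        Filter.atTop (nhds 0) := by
      simpa using (tendsto_inv_atTop_nhds_zero_nat.mul_const (Real.log (x 0)))
    have := h.add h2
    rw [add_zero] at this
    apply this.congr
    intro n; ring
  -- c * d * n + log (x n) → ∞
  have hkey : Filter.Tendsto (fun n : ℕ => c * (d * n : ℕ) + Real.log (x n))
      Filter.atTop Filter.atTop := by
    have hcd : (0:ℝ) < c * d := by
      have : (1:ℝ) ≤ d := by exact_mod_cast hd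
      nlinarith
    apply Filter.tendsto_atTop_mono' Filter.atTop ?_
      ((tendsto_natCast_atTop_atTop).const_mul_atTop (show (0:ℝ) < c*d/2 by linarith))
    filter_upwards [hcesaro.eventually (lt_mem_nhds (neg_lt_zero.mpr (half_pos hcd))),
      Filter.eventually_gt_atTop 0] with n h1 h2
    have hn : (0:ℝ) < n := Nat.cast_pos.mpr h2
    have hL : -(c*d/2) * n ≤ Real.log (x n) := by
      have h3 := mul_lt_mul_of_pos_left h1 hn
      rw [← mul_assoc, mul_inv_cancel₀ hn.ne', one_mul] at h3
      nlinarith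
    push_cast
    nlinarith
  -- conclude
  have := (Real.tendsto_exp_atTop.comp hkey)
  apply this.congr'
  filter_upwards [Filter.eventually_ge_atTop N] with m hm
  simp only [Function.comp_apply, Real.exp_add, Real.exp_log (hxpos m hm), hx]
  rw [Real.exp_log (hxpos m hm : 0 < ρ ^ (d * m) * g (d * m))]
  ring
end
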